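/- arXiv:1602.07751 — 2 statements merged into one kernel-verified Lean document; each statement's English description precedes it below -/
import Mathlib

section
/- 𝒬^fd is a nonempty compact subset of [0,1]^{𝒜×𝒜⁰} endowed with the product topology of pointwise convergence. -/
open Set

open scoped Classical

variable {Ω : Type*}

/-- A field of sets on `Ω`: contains `univ`, closed under complements and finite unions. -/
def IsSetField (𝒜 : Set (Set Ω)) : Prop :=
  Set.univ ∈ 𝒜 ∧ (∀ A ∈ 𝒜, Aᶜ ∈ 𝒜) ∧ ∀ A ∈ 𝒜, ∀ B ∈ 𝒜, A ∪ B ∈ 𝒜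

/-- A finitely additive probability on the field `𝒜`. -/
def IsFAP (𝒜 : Set (Set Ω)) (P : Set Ω → ℝ) : Prop :=
  (∀ A ∈ 𝒜, 0 ≤ P A ∧ P A ≤ 1) ∧ P Set.univ = 1 ∧
    ∀ A ∈ 𝒜, ∀ B ∈ 𝒜, Disjoint A B → P (A ∪ B) = P A + P B

/-- A partition of `Ω` into nonempty pairwise disjoint pieces. -/
def IsPartition {ι : Type*} (H : ι → Set Ω) : Prop :=
  (∀ i, (H i).Nonempty) ∧ (Pairwise fun i j => Disjoint (H i) (H j)) ∧
    (⋃ i, H i) = Set.univ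

/-- A field containing every member of the partition `H` and whose members are
unions of members of the partition. -/
def IsFieldOver {ι : Type*} (H : ι → Set Ω) (𝒜L : Set (Set Ω)) : Prop :=
  IsSetField 𝒜L ∧ (∀ i, H i ∈ 𝒜L) ∧ ∀ A ∈ 𝒜L, ∃ S : Set ι, A = ⋃ i ∈ S, H i

/-- A field containing `𝒜L ∪ 𝒜E` whose members are unions of the atoms `H i ∩ E j`. -/
def IsJointField {ι κ : Type*} (H : ι → Set Ω) (E : κ → Set Ω)
    (𝒜L 𝒜E 𝒜 : Set (Set Ω)) : Prop :=
  IsSetField 𝒜 ∧ 𝒜L ⊆ 𝒜 ∧ 𝒜E ⊆ 𝒜 ∧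
    ∀ A ∈ 𝒜, ∃ S : Set (ι × κ), A = ⋃ p ∈ S, H p.1 ∩ E p.2

/-- A strategy on `𝒜 × ℒ`: each `σ (·|H i)` is a finitely additive probability on `𝒜`
equal to `1` on events implied by `H i`. -/
def IsStrategy {ι : Type*} (𝒜 : Set (Set Ω)) (H : ι → Set Ω) (σ : Set Ω → ι → ℝ) : Prop :=
  ∀ i, IsFAP 𝒜 (fun F => σ F i) ∧ ∀ F ∈ 𝒜, H i ⊆ F → σ F i = 1

/-- A full conditional probability on the field `𝒜` (conditions (C1), (C2), (C3)). -/
def IsFCP (𝒜 : Set (Set Ω)) (P : Set Ω → Set Ω → ℝ) : Prop :=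
  (∀ E ∈ 𝒜, ∀ K ∈ 𝒜, K.Nonempty → P E K = P (E ∩ K) K) ∧
  (∀ K ∈ 𝒜, K.Nonempty → IsFAP 𝒜 fun E => P E K) ∧
  ∀ E ∈ 𝒜, ∀ F ∈ 𝒜, ∀ K ∈ 𝒜, K.Nonempty → (E ∩ K).Nonempty →
    P (E ∩ F) K = P E K * P F (E ∩ K)

/-- `P` extends the prior `π` on `𝒜L` and the strategy `σ` on `𝒜 × ℒ`. -/
def ExtendsPriorStrategy {ι : Type*} (𝒜 𝒜L : Set (Set Ω)) (H : ι → Set Ω)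
    (π : Set Ω → ℝ) (σ : Set Ω → ι → ℝ) (P : Set Ω → Set Ω → ℝ) : Prop :=
  (∀ B ∈ 𝒜L, P B Set.univ = π B) ∧ ∀ F ∈ 𝒜, ∀ i, P F (H i) = σ F i

/-- The set `𝒫` of full conditional probabilities on `𝒜` extending `{π, σ}`. -/
def FCPSet {ι : Type*} (𝒜 𝒜L : Set (Set Ω)) (H : ι → Set Ω)
    (π : Set Ω → ℝ) (σ : Set Ω → ι → ℝ) : Set (Set Ω → Set Ω → ℝ) :=
  {P | IsFCP 𝒜 P ∧ ExtendsPriorStrategy 𝒜 𝒜L H π σ P}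

/-- Lower envelope of a set of conditional probabilities at `F|K`. -/
noncomputable def lowEnv (Ps : Set (Set Ω → Set Ω → ℝ)) (F K : Set Ω) : ℝ :=
  sInf ((fun P => P F K) '' Ps)

/-- Upper envelope of a set of conditional probabilities at `F|K`. -/
noncomputable def upEnv (Ps : Set (Set Ω → Set Ω → ℝ)) (F K : Set Ω) : ℝ :=
  sSup ((fun P => P F K) '' Ps)

/-- A finite partition of `Ω` contained in `𝒜L`. -/
def IsFinPart (𝒜L : Set (Set Ω)) (T : Finset (Set Ω)) : Prop :=
  (↑T : Set (Set Ω)) ⊆ 𝒜L ∧ (∀ A ∈ T, (A : Set Ω).Nonempty) ∧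
    (∀ A ∈ T, ∀ B ∈ T, A ≠ B → Disjoint A B) ∧ ⋃₀ (↑T : Set (Set Ω)) = Set.univ

/-- Lower Stieltjes integral of `X : ℒ → ℝ` with respect to `μ` on `𝒜L`. -/
noncomputable def lowerSInt {ι : Type*} (H : ι → Set Ω) (𝒜L : Set (Set Ω))
    (X : ι → ℝ) (μ : Set Ω → ℝ) : ℝ :=
  sSup {x | ∃ T : Finset (Set Ω), IsFinPart 𝒜L T ∧
    x = ∑ A ∈ T, sInf {y | ∃ i, H i ⊆ A ∧ y = X i} * μ A}

/-- Upper Stieltjes integral of `X : ℒ → ℝ` with respect to `μ` on `𝒜L`. -/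
noncomputable def upperSInt {ι : Type*} (H : ι → Set Ω) (𝒜L : Set (Set Ω))
    (X : ι → ℝ) (μ : Set Ω → ℝ) : ℝ :=
  sInf {x | ∃ T : Finset (Set Ω), IsFinPart 𝒜L T ∧
    x = ∑ A ∈ T, sSup {y | ∃ i, H i ⊆ A ∧ y = X i} * μ A}

/-- `𝒜L`-continuity of a bounded function `X : ℒ → ℝ`. -/
def ALContinuous {ι : Type*} (H : ι → Set Ω) (𝒜L : Set (Set Ω)) (X : ι → ℝ) : Prop :=
  (∃ M : ℝ, ∀ i, |X i| ≤ M) ∧ ∀ t : ℝ, ∀ ε > (0 : ℝ), ∃ A ∈ 𝒜L,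
    (⋃ i ∈ {i | t + ε ≤ X i}, H i) ⊆ A ∧ A ⊆ ⋃ i ∈ {i | t ≤ X i}, H i

/-- Countable additivity of `P` on the field `𝒜`. -/
def CountablyAdditiveOn (𝒜 : Set (Set Ω)) (P : Set Ω → ℝ) : Prop :=
  ∀ A : ℕ → Set Ω, (∀ n, A n ∈ 𝒜) → (Pairwise fun m n => Disjoint (A m) (A n)) →
    (⋃ n, A n) ∈ 𝒜 → HasSum (fun n => P (A n)) (P (⋃ n, A n))

/-- A (normalized) capacity on the field `𝒜`. -/
def IsCapacity (𝒜 : Set (Set Ω)) (φ : Set Ω → ℝ) : Prop :=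
  φ ∅ = 0 ∧ φ Set.univ = 1 ∧ (∀ A ∈ 𝒜, 0 ≤ φ A ∧ φ A ≤ 1) ∧
    ∀ A ∈ 𝒜, ∀ B ∈ 𝒜, A ⊆ B → φ A ≤ φ B

/-- Total monotonicity of a capacity `φ` on the field `𝒜`. -/
def TotallyMonotone (𝒜 : Set (Set Ω)) (φ : Set Ω → ℝ) : Prop :=
  ∀ n : ℕ, 2 ≤ n → ∀ A : Fin n → Set Ω, (∀ i, A i ∈ 𝒜) →
    ∑ s ∈ Finset.univ.powerset.filter (fun s : Finset (Fin n) => s.Nonempty),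
      (-1 : ℝ) ^ (s.card - 1) * φ (⋂ i ∈ s, A i) ≤ φ (⋃ i, A i)

/-- Restriction of a conditional probability to the domain `𝒜 × ℬ⁰`, viewed as a point
of the product space `ℝ^(𝒜 × ℬ⁰)`. -/
def restrictPairs (𝒜 ℬ : Set (Set Ω)) (Q : Set Ω → Set Ω → ℝ)
    (p : {p : Set Ω × Set Ω // p.1 ∈ 𝒜 ∧ p.2 ∈ ℬ ∧ p.2.Nonempty}) : ℝ :=
  Q p.val.1 p.val.2

/-- Restriction of a set function to the domain `𝒜`, viewed as a point of `ℝ^𝒜`. -/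
def restrictDom (𝒜 : Set (Set Ω)) (μ : Set Ω → ℝ) (A : {A : Set Ω // A ∈ 𝒜}) : ℝ :=
  μ A.val

/-- The field of all unions of members of the partition `H`, i.e. `⟨ℒ⟩*`. -/
def unionsOf {ι : Type*} (H : ι → Set Ω) : Set (Set Ω) :=
  {A | ∃ S : Set ι, A = ⋃ i ∈ S, H i}

/-- The set `𝒬^fd` of fully ℒ-disintegrable full conditional probabilities on `𝒜`
extending `{π, σ}`. -/
def QfdSet {ι : Type*} (𝒜 𝒜L : Set (Set Ω)) (H : ι → Set Ω)
    (π : Set Ω → ℝ) (σ : Set Ω → ι → ℝ) : Set (Set Ω → Set Ω → ℝ) :=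
  {Q | IsFCP 𝒜 Q ∧ ExtendsPriorStrategy 𝒜 𝒜L H π σ Q ∧
    ∀ F ∈ 𝒜, ∀ K ∈ 𝒜L, K.Nonempty →
      Q F K = lowerSInt H 𝒜L (fun i => σ F i) fun B => Q B K}

/-- The set `𝒬^fsc` of fully strongly ℒ-conglomerable full conditional probabilities
on `𝒜` extending `{π, σ}`. -/
def QfscSet {ι : Type*} (𝒜 𝒜L : Set (Set Ω)) (H : ι → Set Ω)
    (π : Set Ω → ℝ) (σ : Set Ω → ι → ℝ) : Set (Set Ω → Set Ω → ℝ) :=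
  {Q | IsFCP 𝒜 Q ∧ ExtendsPriorStrategy 𝒜 𝒜L H π σ Q ∧
    ∀ F ∈ 𝒜, ∀ K ∈ 𝒜L, K.Nonempty → ∀ B ∈ 𝒜L, B.Nonempty → B ⊆ K →
      Q B K * sInf {x | ∃ i, H i ⊆ B ∧ x = σ F i} ≤ Q (F ∩ B) K ∧
      Q (F ∩ B) K ≤ Q B K * sSup {x | ∃ i, H i ⊆ B ∧ x = σ F i}}

/-- The set `𝒫^sc` of strongly ℒ-conglomerable joint probabilities consistent with `{π, σ}`. -/
def PscSet {ι : Type*} (𝒜 𝒜L : Set (Set Ω)) (H : ι → Set Ω)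
    (π : Set Ω → ℝ) (σ : Set Ω → ι → ℝ) : Set (Set Ω → ℝ) :=
  {μ | (∃ P ∈ FCPSet 𝒜 𝒜L H π σ, μ = fun F => P F Set.univ) ∧
    ∀ F ∈ 𝒜, ∀ B ∈ 𝒜L, B.Nonempty →
      π B * sInf {x | ∃ i, H i ⊆ B ∧ x = σ F i} ≤ μ (F ∩ B) ∧
      μ (F ∩ B) ≤ π B * sSup {x | ∃ i, H i ⊆ B ∧ x = σ F i}}

/-- The set `𝒫^fd` of fully ℒ-disintegrable conditional probabilities on `𝒜 × 𝒜L⁰`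
extending `{π, σ}`. -/
def PfdSet {ι : Type*} (𝒜 𝒜L : Set (Set Ω)) (H : ι → Set Ω)
    (π : Set Ω → ℝ) (σ : Set Ω → ι → ℝ) : Set (Set Ω → Set Ω → ℝ) :=
  {P | (∀ E ∈ 𝒜, ∀ K ∈ 𝒜L, K.Nonempty → P E K = P (E ∩ K) K) ∧
    (∀ K ∈ 𝒜L, K.Nonempty → IsFAP 𝒜 fun E => P E K) ∧
    (∀ E ∈ 𝒜, ∀ F ∈ 𝒜, ∀ K ∈ 𝒜L, K.Nonempty → E ∩ K ∈ 𝒜L → (E ∩ K).Nonempty →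
      P (E ∩ F) K = P E K * P F (E ∩ K)) ∧
    (∀ B ∈ 𝒜L, P B Set.univ = π B) ∧ (∀ F ∈ 𝒜, ∀ i, P F (H i) = σ F i) ∧
    ∀ F ∈ 𝒜, ∀ K ∈ 𝒜L, K.Nonempty →
      P F K = lowerSInt H 𝒜L (fun i => σ F i) fun B => P B K}

/-- The Choquet integral `C∫ X dφ = ∫₀¹ φ₊((X ≥ t)) dt` of a `[0,1]`-valued `X : ℒ → ℝ`
with respect to a capacity `φ` on `𝒜L`, where `φ₊` is the inner extension of `φ`. -/
noncomputable def choquetInt {ι : Type*} (H : ι → Set Ω) (𝒜L : Set (Set Ω))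
    (X : ι → ℝ) (φ : Set Ω → ℝ) : ℝ :=
  ∫ t in (0 : ℝ)..(1 : ℝ),
    sSup {y | ∃ B ∈ 𝒜L, B ⊆ (⋃ i ∈ {i | t ≤ X i}, H i) ∧ y = φ B}


namespace S6
set_option linter.unusedSectionVars false

variable {Ω ι : Type*}

/-! ### Basic partition and field lemmas -/

theorem atom_unique {H : ι → Set Ω} (hH : IsPartition H) {i j : ι} {ω : Ω}
    (hi : ω ∈ H i) (hj : ω ∈ H j) : i = j := by
  by_contra hne
  exact (hH.2.1 hne).le_bot ⟨hi, hj⟩ |>.elim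

theorem atom_subset_or {H : ι → Set Ω} (hH : IsPartition H) {𝒜L : Set (Set Ω)}
    (h𝒜L : IsFieldOver H 𝒜L) {A : Set Ω} (hA : A ∈ 𝒜L) (i : ι) :
    H i ⊆ A ∨ H i ∩ A = ∅ := by
  obtain ⟨S, rfl⟩ := h𝒜L.2.2 A hA
  by_cases hi : i ∈ S
  · exact Or.inl (Set.subset_biUnion_of_mem hi)
  · right
    ext ω; simp only [Set.mem_inter_iff, Set.mem_iUnion, Set.mem_empty_iff_false, iff_false]
    rintro ⟨hωi, j, hj, hωj⟩
    exact hi (atom_unique hH hωi hωj ▸ hj)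

theorem exists_atom_subset {H : ι → Set Ω} (hH : IsPartition H) {𝒜L : Set (Set Ω)}
    (h𝒜L : IsFieldOver H 𝒜L) {A : Set Ω} (hA : A ∈ 𝒜L) (hne : A.Nonempty) :
    ∃ i, H i ⊆ A := by
  obtain ⟨ω, hω⟩ := hne
  have : ω ∈ ⋃ i, H i := hH.2.2 ▸ Set.mem_univ ω
  obtain ⟨i, hi⟩ := Set.mem_iUnion.1 this
  rcases atom_subset_or hH h𝒜L hA i with h | h
  · exact ⟨i, h⟩
  · exact absurd (Set.eq_empty_iff_forall_notMem.1 h ω) (by simp [hi, hω])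

theorem exists_atom_mem {H : ι → Set Ω} (hH : IsPartition H) (ω : Ω) : ∃ i, ω ∈ H i :=
  Set.mem_iUnion.1 (hH.2.2 ▸ Set.mem_univ ω)

namespace Field

variable {𝒜 : Set (Set Ω)} (h : IsSetField 𝒜)
include h

theorem univ_mem : Set.univ ∈ 𝒜 := h.1
theorem compl_mem {A : Set Ω} (hA : A ∈ 𝒜) : Aᶜ ∈ 𝒜 := h.2.1 A hA
theorem empty_mem : (∅ : Set Ω) ∈ 𝒜 := by
  simpa using h.2.1 _ h.1
theorem union_mem {A B : Set Ω} (hA : A ∈ 𝒜) (hB : B ∈ 𝒜) : A ∪ B ∈ 𝒜 :=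
  h.2.2 A hA B hB
theorem inter_mem {A B : Set Ω} (hA : A ∈ 𝒜) (hB : B ∈ 𝒜) : A ∩ B ∈ 𝒜 := by
  have := h.2.1 _ (h.2.2 _ (h.2.1 A hA) _ (h.2.1 B hB))
  simpa [Set.compl_union] using this
theorem diff_mem {A B : Set Ω} (hA : A ∈ 𝒜) (hB : B ∈ 𝒜) : A \ B ∈ 𝒜 := by
  have := inter_mem h hA (compl_mem h hB)
  simpa [Set.diff_eq] using this

theorem sUnion_mem {T : Finset (Set Ω)} (hT : (↑T : Set (Set Ω)) ⊆ 𝒜) :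
    ⋃₀ (↑T : Set (Set Ω)) ∈ 𝒜 := by
  classical
  induction T using Finset.induction_on with
  | empty => simpa using empty_mem h
  | @insert B T hBT ih =>
    have hB : B ∈ 𝒜 := hT (by simp)
    have h2 := ih (fun x hx => hT (by simp only [Finset.coe_insert, Set.mem_insert_iff]; tauto))
    simpa [Finset.coe_insert, Set.sUnion_insert] using union_mem h hB h2

end Field

namespace FAP

variable {𝒜 : Set (Set Ω)} {μ : Set Ω → ℝ} (hF : IsSetField 𝒜) (hμ : IsFAP 𝒜 μ)
include hF hμ

theorem nonneg {A : Set Ω} (hA : A ∈ 𝒜) : 0 ≤ μ A := (hμ.1 A hA).1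
theorem le_one {A : Set Ω} (hA : A ∈ 𝒜) : μ A ≤ 1 := (hμ.1 A hA).2
theorem univ_eq : μ Set.univ = 1 := hμ.2.1

theorem empty_eq : μ (∅ : Set Ω) = 0 := by
  have := hμ.2.2 Set.univ (Field.univ_mem hF) ∅ (Field.empty_mem hF) (by simp)
  simp only [Set.union_empty] at this
  linarith

theorem add_of_disjoint {A B : Set Ω} (hA : A ∈ 𝒜) (hB : B ∈ 𝒜) (hd : Disjoint A B) :
    μ (A ∪ B) = μ A + μ B := hμ.2.2 A hA B hB hd

theorem mono {A B : Set Ω} (hA : A ∈ 𝒜) (hB : B ∈ 𝒜) (hAB : A ⊆ B) : μ A ≤ μ B := by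
  have hdm : B \ A ∈ 𝒜 := Field.diff_mem hF hB hA
  have : μ (A ∪ B \ A) = μ A + μ (B \ A) :=
    add_of_disjoint hF hμ hA hdm disjoint_sdiff_self_right
  rw [Set.union_diff_cancel hAB] at this
  have := nonneg hF hμ hdm
  linarith

/-- Splitting a set by a finite family of pairwise disjoint sets in the field. -/
theorem inter_sum {A : Set Ω} (hA : A ∈ 𝒜) (T : Finset (Set Ω))
    (hT : (↑T : Set (Set Ω)) ⊆ 𝒜)
    (hdisj : ∀ B ∈ T, ∀ C ∈ T, B ≠ C → Disjoint B C) :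
    μ (A ∩ ⋃₀ (↑T : Set (Set Ω))) = ∑ B ∈ T, μ (A ∩ B) := by
  classical
  induction T using Finset.induction_on with
  | empty => simpa using empty_eq hF hμ
  | @insert B T hBT ih =>
    have hTsub : (↑T : Set (Set Ω)) ⊆ 𝒜 := fun x hx =>
      hT (by simp only [Finset.coe_insert, Set.mem_insert_iff]; tauto)
    have hB𝒜 : B ∈ 𝒜 := hT (by simp)
    have hU : ⋃₀ (↑T : Set (Set Ω)) ∈ 𝒜 := Field.sUnion_mem hF hTsub
    have hd : Disjoint (A ∩ B) (A ∩ ⋃₀ (↑T : Set (Set Ω))) := by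
      apply Set.disjoint_left.2
      rintro x ⟨hxA, hxB⟩ ⟨-, C, hC, hxC⟩
      have hC' : C ∈ T := by exact_mod_cast hC
      have hBC : B ≠ C := by rintro rfl; exact hBT hC'
      exact (hdisj B (by simp) C (by simp [hC']) hBC).le_bot ⟨hxB, hxC⟩ |>.elim
    have hrw : A ∩ ⋃₀ (↑(insert B T) : Set (Set Ω)) =
        (A ∩ B) ∪ (A ∩ ⋃₀ (↑T : Set (Set Ω))) := by
      simp [Finset.coe_insert, Set.sUnion_insert, Set.inter_union_distrib_left]
    rw [hrw, add_of_disjoint hF hμ (Field.inter_mem hF hA hB𝒜)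
        (Field.inter_mem hF hA hU) hd, Finset.sum_insert hBT,
      ih hTsub (fun B hB C hC h => hdisj B (by simp [hB]) C (by simp [hC]) h)]

theorem sum_partition {A : Set Ω} (hA : A ∈ 𝒜) {𝒜L : Set (Set Ω)} (h𝒜L : 𝒜L ⊆ 𝒜)
    {T : Finset (Set Ω)} (hT : IsFinPart 𝒜L T) :
    μ A = ∑ B ∈ T, μ (A ∩ B) := by
  have := inter_sum hF hμ hA T (fun x hx => h𝒜L (hT.1 hx)) hT.2.2.1
  rwa [hT.2.2.2, Set.inter_univ] at this

theorem sum_partition_one {𝒜L : Set (Set Ω)} (h𝒜L : 𝒜L ⊆ 𝒜)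
    {T : Finset (Set Ω)} (hT : IsFinPart 𝒜L T) : ∑ B ∈ T, μ B = 1 := by
  have := sum_partition hF hμ (Field.univ_mem hF) h𝒜L hT
  simp only [Set.univ_inter] at this
  rw [← this, univ_eq hF hμ]

end FAP

end S6

namespace S6

variable {Ω ι : Type*}

/-! ### Values on cells, lower/upper sums -/

def valsOn (H : ι → Set Ω) (X : ι → ℝ) (A : Set Ω) : Set ℝ := {y | ∃ i, H i ⊆ A ∧ y = X i}

noncomputable def infOn (H : ι → Set Ω) (X : ι → ℝ) (A : Set Ω) : ℝ := sInf (valsOn H X A)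
noncomputable def supOn (H : ι → Set Ω) (X : ι → ℝ) (A : Set Ω) : ℝ := sSup (valsOn H X A)

noncomputable def lowSum (H : ι → Set Ω) (X : ι → ℝ) (μ : Set Ω → ℝ)
    (T : Finset (Set Ω)) : ℝ := ∑ A ∈ T, infOn H X A * μ A

noncomputable def upSum (H : ι → Set Ω) (X : ι → ℝ) (μ : Set Ω → ℝ)
    (T : Finset (Set Ω)) : ℝ := ∑ A ∈ T, supOn H X A * μ A

variable {H : ι → Set Ω} {𝒜L : Set (Set Ω)} {X : ι → ℝ} {μ : Set Ω → ℝ} {M : ℝ}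

theorem valsOn_nonempty (hH : IsPartition H) (h𝒜L : IsFieldOver H 𝒜L) {A : Set Ω}
    (hA : A ∈ 𝒜L) (hne : A.Nonempty) : (valsOn H X A).Nonempty := by
  obtain ⟨i, hi⟩ := exists_atom_subset hH h𝒜L hA hne
  exact ⟨X i, i, hi, rfl⟩

theorem bddBelow_valsOn (hM : ∀ i, |X i| ≤ M) (A : Set Ω) : BddBelow (valsOn H X A) :=
  ⟨-M, by rintro y ⟨i, -, rfl⟩; exact neg_le_of_abs_le (hM i)⟩

theorem bddAbove_valsOn (hM : ∀ i, |X i| ≤ M) (A : Set Ω) : BddAbove (valsOn H X A) :=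
  ⟨M, by rintro y ⟨i, -, rfl⟩; exact le_of_abs_le (hM i)⟩

theorem infOn_le (hM : ∀ i, |X i| ≤ M) {A : Set Ω} {i : ι} (hi : H i ⊆ A) :
    infOn H X A ≤ X i := csInf_le (bddBelow_valsOn hM A) ⟨i, hi, rfl⟩

theorem le_supOn (hM : ∀ i, |X i| ≤ M) {A : Set Ω} {i : ι} (hi : H i ⊆ A) :
    X i ≤ supOn H X A := le_csSup (bddAbove_valsOn hM A) ⟨i, hi, rfl⟩

theorem le_infOn {c : ℝ} {A : Set Ω} (hne : (valsOn H X A).Nonempty)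
    (h : ∀ i, H i ⊆ A → c ≤ X i) : c ≤ infOn H X A :=
  le_csInf hne (by rintro y ⟨i, hi, rfl⟩; exact h i hi)

theorem supOn_le {c : ℝ} {A : Set Ω} (hne : (valsOn H X A).Nonempty)
    (h : ∀ i, H i ⊆ A → X i ≤ c) : supOn H X A ≤ c :=
  csSup_le hne (by rintro y ⟨i, hi, rfl⟩; exact h i hi)

theorem infOn_le_supOn (hM : ∀ i, |X i| ≤ M) {A : Set Ω}
    (hne : (valsOn H X A).Nonempty) : infOn H X A ≤ supOn H X A := by
  obtain ⟨y, hy⟩ := hne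
  exact le_trans (csInf_le (bddBelow_valsOn hM A) hy) (le_csSup (bddAbove_valsOn hM A) hy)

theorem infOn_mono (hM : ∀ i, |X i| ≤ M) {A B : Set Ω} (hBA : B ⊆ A)
    (hne : (valsOn H X B).Nonempty) : infOn H X A ≤ infOn H X B :=
  csInf_le_csInf (bddBelow_valsOn hM A) hne
    (by rintro y ⟨i, hi, rfl⟩; exact ⟨i, hi.trans hBA, rfl⟩)

theorem supOn_mono (hM : ∀ i, |X i| ≤ M) {A B : Set Ω} (hBA : B ⊆ A)
    (hne : (valsOn H X B).Nonempty) : supOn H X B ≤ supOn H X A :=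
  csSup_le_csSup (bddAbove_valsOn hM A) hne
    (by rintro y ⟨i, hi, rfl⟩; exact ⟨i, hi.trans hBA, rfl⟩)

theorem infOn_nonneg (hX : ∀ i, 0 ≤ X i) (A : Set Ω) : 0 ≤ infOn H X A :=
  Real.sInf_nonneg (by rintro y ⟨i, -, rfl⟩; exact hX i)

theorem supOn_nonneg (hX : ∀ i, 0 ≤ X i) (A : Set Ω) : 0 ≤ supOn H X A :=
  Real.sSup_nonneg (by rintro y ⟨i, -, rfl⟩; exact hX i)

theorem supOn_le_one (hX : ∀ i, X i ≤ 1) (A : Set Ω) : supOn H X A ≤ 1 :=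
  Real.sSup_le (by rintro y ⟨i, -, rfl⟩; exact hX i) zero_le_one

/-! ### Refinements -/

/-- `R` refines `T` if every cell of `R` is contained in a cell of `T`. -/
def Refines (T R : Finset (Set Ω)) : Prop := ∀ C ∈ R, ∃ A ∈ T, C ⊆ A

theorem lowSum_le_refine (hH : IsPartition H) (h𝒜L : IsFieldOver H 𝒜L)
    (hμ : IsFAP 𝒜L μ) (hM : ∀ i, |X i| ≤ M)
    {T R : Finset (Set Ω)} (hT : IsFinPart 𝒜L T) (hR : IsFinPart 𝒜L R)
    (href : Refines T R) : lowSum H X μ T ≤ lowSum H X μ R := by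
  classical
  have hF := h𝒜L.1
  have key : ∀ A ∈ T, infOn H X A * μ A = ∑ C ∈ R, infOn H X A * μ (A ∩ C) := by
    intro A hA
    rw [← Finset.mul_sum, ← FAP.sum_partition hF hμ (hT.1 hA) (subset_refl 𝒜L) hR]
  unfold lowSum
  rw [Finset.sum_congr rfl key, Finset.sum_comm]
  apply Finset.sum_le_sum
  intro C hC
  obtain ⟨A₀, hA₀T, hCA₀⟩ := href C hC
  have hCne : C.Nonempty := hR.2.1 C hC
  have hC𝒜 : C ∈ 𝒜L := hR.1 hC
  have hvne : (valsOn H X C).Nonempty := valsOn_nonempty hH h𝒜L hC𝒜 hCne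
  have hsingle : ∑ A ∈ T, infOn H X A * μ (A ∩ C) = infOn H X A₀ * μ C := by
    rw [Finset.sum_eq_single_of_mem A₀ hA₀T]
    · rw [Set.inter_eq_self_of_subset_right hCA₀]
    · intro A hA hAA₀
      have : A ∩ C = ∅ := by
        by_contra hne
        obtain ⟨x, hxA, hxC⟩ := Set.nonempty_iff_ne_empty.2 hne
        exact (hT.2.2.1 A hA A₀ hA₀T hAA₀).le_bot ⟨hxA, hCA₀ hxC⟩
      rw [this, FAP.empty_eq h𝒜L.1 hμ, mul_zero]
  rw [hsingle]
  exact mul_le_mul_of_nonneg_right (infOn_mono hM hCA₀ hvne)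
    (FAP.nonneg h𝒜L.1 hμ hC𝒜)

theorem upSum_refine_le (hH : IsPartition H) (h𝒜L : IsFieldOver H 𝒜L)
    (hμ : IsFAP 𝒜L μ) (hM : ∀ i, |X i| ≤ M)
    {T R : Finset (Set Ω)} (hT : IsFinPart 𝒜L T) (hR : IsFinPart 𝒜L R)
    (href : Refines T R) : upSum H X μ R ≤ upSum H X μ T := by
  classical
  have hF := h𝒜L.1
  have key : ∀ A ∈ T, supOn H X A * μ A = ∑ C ∈ R, supOn H X A * μ (A ∩ C) := by
    intro A hA
    rw [← Finset.mul_sum, ← FAP.sum_partition hF hμ (hT.1 hA) (subset_refl 𝒜L) hR]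
  unfold upSum
  rw [Finset.sum_congr rfl key, Finset.sum_comm]
  apply Finset.sum_le_sum
  intro C hC
  obtain ⟨A₀, hA₀T, hCA₀⟩ := href C hC
  have hCne : C.Nonempty := hR.2.1 C hC
  have hC𝒜 : C ∈ 𝒜L := hR.1 hC
  have hvne : (valsOn H X C).Nonempty := valsOn_nonempty hH h𝒜L hC𝒜 hCne
  have hsingle : ∑ A ∈ T, supOn H X A * μ (A ∩ C) = supOn H X A₀ * μ C := by
    rw [Finset.sum_eq_single_of_mem A₀ hA₀T]
    · rw [Set.inter_eq_self_of_subset_right hCA₀]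
    · intro A hA hAA₀
      have : A ∩ C = ∅ := by
        by_contra hne
        obtain ⟨x, hxA, hxC⟩ := Set.nonempty_iff_ne_empty.2 hne
        exact (hT.2.2.1 A hA A₀ hA₀T hAA₀).le_bot ⟨hxA, hCA₀ hxC⟩
      rw [this, FAP.empty_eq h𝒜L.1 hμ, mul_zero]
  rw [hsingle]
  exact mul_le_mul_of_nonneg_right (supOn_mono hM hCA₀ hvne)
    (FAP.nonneg h𝒜L.1 hμ hC𝒜)

theorem lowSum_le_upSum_self (hH : IsPartition H) (h𝒜L : IsFieldOver H 𝒜L)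
    (hμ : IsFAP 𝒜L μ) (hM : ∀ i, |X i| ≤ M)
    {T : Finset (Set Ω)} (hT : IsFinPart 𝒜L T) : lowSum H X μ T ≤ upSum H X μ T := by
  apply Finset.sum_le_sum
  intro A hA
  exact mul_le_mul_of_nonneg_right
    (infOn_le_supOn hM (valsOn_nonempty hH h𝒜L (hT.1 hA) (hT.2.1 A hA)))
    (FAP.nonneg h𝒜L.1 hμ (hT.1 hA))

/-- Common refinement. -/
noncomputable def commonRef (T T' : Finset (Set Ω)) : Finset (Set Ω) := by
  classical
  exact ((T ×ˢ T').image fun p => p.1 ∩ p.2).filter fun C => C.Nonempty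

theorem commonRef_isFinPart (h𝒜L : IsFieldOver H 𝒜L) {T T' : Finset (Set Ω)}
    (hT : IsFinPart 𝒜L T) (hT' : IsFinPart 𝒜L T') : IsFinPart 𝒜L (commonRef T T') := by
  classical
  have hmem : ∀ C ∈ commonRef T T', (∃ A ∈ T, ∃ B ∈ T', C = A ∩ B) ∧ C.Nonempty := by
    intro C hC
    simp only [commonRef, Finset.mem_filter, Finset.mem_image, Finset.mem_product] at hC
    obtain ⟨⟨⟨A, B⟩, ⟨hA, hB⟩, rfl⟩, hne⟩ := hC
    exact ⟨⟨A, hA, B, hB, rfl⟩, hne⟩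
  refine ⟨?_, ?_, ?_, ?_⟩
  · intro C hC
    obtain ⟨⟨A, hA, B, hB, rfl⟩, -⟩ := hmem C hC
    exact Field.inter_mem h𝒜L.1 (hT.1 hA) (hT'.1 hB)
  · intro C hC; exact (hmem C hC).2
  · intro C hC D hD hCD
    obtain ⟨⟨A, hA, B, hB, rfl⟩, -⟩ := hmem C hC
    obtain ⟨⟨A', hA', B', hB', rfl⟩, -⟩ := hmem D hD
    by_cases hAA : A = A'
    · subst hAA
      have hBB : B ≠ B' := by rintro rfl; exact hCD rfl
      refine Set.disjoint_left.2 ?_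
      rintro x ⟨-, hxB⟩ ⟨-, hxB'⟩
      exact (hT'.2.2.1 B hB B' hB' hBB).le_bot ⟨hxB, hxB'⟩
    · refine Set.disjoint_left.2 ?_
      rintro x ⟨hxA, -⟩ ⟨hxA', -⟩
      exact (hT.2.2.1 A hA A' hA' hAA).le_bot ⟨hxA, hxA'⟩
  · apply Set.eq_univ_of_forall
    intro x
    have hxT : x ∈ ⋃₀ (↑T : Set (Set Ω)) := hT.2.2.2 ▸ Set.mem_univ x
    have hxT' : x ∈ ⋃₀ (↑T' : Set (Set Ω)) := hT'.2.2.2 ▸ Set.mem_univ x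
    obtain ⟨A, hA, hxA⟩ := hxT
    obtain ⟨B, hB, hxB⟩ := hxT'
    refine Set.mem_sUnion.2 ⟨A ∩ B, ?_, hxA, hxB⟩
    simp only [commonRef, Finset.coe_filter, Set.mem_setOf_eq, Finset.mem_filter,
      Finset.mem_image, Finset.mem_product]
    exact ⟨⟨⟨A, B⟩, ⟨by exact_mod_cast hA, by exact_mod_cast hB⟩, rfl⟩, ⟨x, hxA, hxB⟩⟩

theorem commonRef_refines_left {T T' : Finset (Set Ω)} : Refines T (commonRef T T') := by
  classical
  intro C hC
  simp only [commonRef, Finset.mem_filter, Finset.mem_image, Finset.mem_product] at hC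
  obtain ⟨⟨⟨A, B⟩, ⟨hA, hB⟩, rfl⟩, -⟩ := hC
  exact ⟨A, hA, Set.inter_subset_left⟩

theorem commonRef_refines_right {T T' : Finset (Set Ω)} : Refines T' (commonRef T T') := by
  classical
  intro C hC
  simp only [commonRef, Finset.mem_filter, Finset.mem_image, Finset.mem_product] at hC
  obtain ⟨⟨⟨A, B⟩, ⟨hA, hB⟩, rfl⟩, -⟩ := hC
  exact ⟨B, hB, Set.inter_subset_right⟩

/-- Cross inequality: any lower sum is at most any upper sum. -/
theorem lowSum_le_upSum (hH : IsPartition H) (h𝒜L : IsFieldOver H 𝒜L)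
    (hμ : IsFAP 𝒜L μ) (hM : ∀ i, |X i| ≤ M)
    {T T' : Finset (Set Ω)} (hT : IsFinPart 𝒜L T) (hT' : IsFinPart 𝒜L T') :
    lowSum H X μ T ≤ upSum H X μ T' := by
  have hR := commonRef_isFinPart h𝒜L hT hT' (H := H)
  calc lowSum H X μ T ≤ lowSum H X μ (commonRef T T') :=
        lowSum_le_refine hH h𝒜L hμ hM hT hR commonRef_refines_left
    _ ≤ upSum H X μ (commonRef T T') := lowSum_le_upSum_self hH h𝒜L hμ hM hR
    _ ≤ upSum H X μ T' := upSum_refine_le hH h𝒜L hμ hM hT' hR commonRef_refines_right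

end S6

namespace S6

variable {Ω ι : Type*} {H : ι → Set Ω} {𝒜L : Set (Set Ω)} {X : ι → ℝ} {μ : Set Ω → ℝ} {M : ℝ}

theorem atom_subset_iUnion (hH : IsPartition H) {S : Set ι} {i : ι}
    (h : H i ⊆ ⋃ j ∈ S, H j) : i ∈ S := by
  obtain ⟨ω, hω⟩ := hH.1 i
  obtain ⟨j, hj, hωj⟩ := by simpa using h hω
  exact (atom_unique hH hω hωj) ▸ hj

theorem atom_subset_atom (hH : IsPartition H) {i j : ι} (h : H i ⊆ H j) : i = j := by
  obtain ⟨ω, hω⟩ := hH.1 i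
  exact atom_unique hH hω (h hω)

def lsSet (H : ι → Set Ω) (𝒜L : Set (Set Ω)) (X : ι → ℝ) (μ : Set Ω → ℝ) : Set ℝ :=
  {x | ∃ T : Finset (Set Ω), IsFinPart 𝒜L T ∧ x = lowSum H X μ T}

def usSet (H : ι → Set Ω) (𝒜L : Set (Set Ω)) (X : ι → ℝ) (μ : Set Ω → ℝ) : Set ℝ :=
  {x | ∃ T : Finset (Set Ω), IsFinPart 𝒜L T ∧ x = upSum H X μ T}

theorem lowerSInt_eq_sSup : lowerSInt H 𝒜L X μ = sSup (lsSet H 𝒜L X μ) := rfl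
theorem upperSInt_eq_sInf : upperSInt H 𝒜L X μ = sInf (usSet H 𝒜L X μ) := rfl

theorem univPart [Nonempty Ω] (h𝒜L : IsFieldOver H 𝒜L) :
    IsFinPart 𝒜L ({Set.univ} : Finset (Set Ω)) := by
  refine ⟨by simp [Field.univ_mem h𝒜L.1], by simp [Set.univ_nonempty], ?_, by simp⟩
  intro A hA B hB hAB
  simp only [Finset.mem_singleton] at hA hB
  exact absurd (hA.trans hB.symm) hAB

theorem lsSet_nonempty [Nonempty Ω] (h𝒜L : IsFieldOver H 𝒜L) :
    (lsSet H 𝒜L X μ).Nonempty := ⟨_, _, univPart h𝒜L, rfl⟩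

theorem usSet_nonempty [Nonempty Ω] (h𝒜L : IsFieldOver H 𝒜L) :
    (usSet H 𝒜L X μ).Nonempty := ⟨_, _, univPart h𝒜L, rfl⟩

theorem lsSet_bddAbove [Nonempty Ω] (hH : IsPartition H) (h𝒜L : IsFieldOver H 𝒜L)
    (hμ : IsFAP 𝒜L μ) (hM : ∀ i, |X i| ≤ M) : BddAbove (lsSet H 𝒜L X μ) := by
  refine ⟨upSum H X μ {Set.univ}, ?_⟩
  rintro x ⟨T, hT, rfl⟩
  exact lowSum_le_upSum hH h𝒜L hμ hM hT (univPart h𝒜L)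

theorem usSet_bddBelow [Nonempty Ω] (hH : IsPartition H) (h𝒜L : IsFieldOver H 𝒜L)
    (hμ : IsFAP 𝒜L μ) (hM : ∀ i, |X i| ≤ M) : BddBelow (usSet H 𝒜L X μ) := by
  refine ⟨lowSum H X μ {Set.univ}, ?_⟩
  rintro x ⟨T, hT, rfl⟩
  exact lowSum_le_upSum hH h𝒜L hμ hM (univPart h𝒜L) hT

theorem lowSum_le_lint [Nonempty Ω] (hH : IsPartition H) (h𝒜L : IsFieldOver H 𝒜L)
    (hμ : IsFAP 𝒜L μ) (hM : ∀ i, |X i| ≤ M) {T : Finset (Set Ω)} (hT : IsFinPart 𝒜L T) :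
    lowSum H X μ T ≤ lowerSInt H 𝒜L X μ :=
  le_csSup (lsSet_bddAbove hH h𝒜L hμ hM) ⟨T, hT, rfl⟩

theorem lint_le_upSum [Nonempty Ω] (hH : IsPartition H) (h𝒜L : IsFieldOver H 𝒜L)
    (hμ : IsFAP 𝒜L μ) (hM : ∀ i, |X i| ≤ M) {T : Finset (Set Ω)} (hT : IsFinPart 𝒜L T) :
    lowerSInt H 𝒜L X μ ≤ upSum H X μ T := by
  rw [lowerSInt_eq_sSup]
  apply csSup_le (lsSet_nonempty h𝒜L)
  rintro x ⟨T', hT', rfl⟩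
  exact lowSum_le_upSum hH h𝒜L hμ hM hT' hT

theorem lowSum_le_uint [Nonempty Ω] (hH : IsPartition H) (h𝒜L : IsFieldOver H 𝒜L)
    (hμ : IsFAP 𝒜L μ) (hM : ∀ i, |X i| ≤ M) {T : Finset (Set Ω)} (hT : IsFinPart 𝒜L T) :
    lowSum H X μ T ≤ upperSInt H 𝒜L X μ := by
  rw [upperSInt_eq_sInf]
  apply le_csInf (usSet_nonempty h𝒜L)
  rintro x ⟨T', hT', rfl⟩
  exact lowSum_le_upSum hH h𝒜L hμ hM hT hT'

theorem uint_le_upSum [Nonempty Ω] (hH : IsPartition H) (h𝒜L : IsFieldOver H 𝒜L)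
    (hμ : IsFAP 𝒜L μ) (hM : ∀ i, |X i| ≤ M) {T : Finset (Set Ω)} (hT : IsFinPart 𝒜L T) :
    upperSInt H 𝒜L X μ ≤ upSum H X μ T :=
  csInf_le (usSet_bddBelow hH h𝒜L hμ hM) ⟨T, hT, rfl⟩

theorem lint_squeeze [Nonempty Ω] (hH : IsPartition H) (h𝒜L : IsFieldOver H 𝒜L)
    (hμ : IsFAP 𝒜L μ) (hM : ∀ i, |X i| ≤ M) {T : Finset (Set Ω)} (hT : IsFinPart 𝒜L T)
    {v : ℝ} (hlow : lowSum H X μ T = v) (hup : upSum H X μ T = v) :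
    lowerSInt H 𝒜L X μ = v :=
  le_antisymm (hup ▸ lint_le_upSum hH h𝒜L hμ hM hT)
    (hlow ▸ lowSum_le_lint hH h𝒜L hμ hM hT)

/-! ### Constant values on cells -/

theorem valsOn_eq_singleton {A : Set Ω} {c : ℝ} (hc : ∀ i, H i ⊆ A → X i = c)
    (hex : ∃ i, H i ⊆ A) : valsOn H X A = {c} := by
  apply Set.eq_singleton_iff_nonempty_unique_mem.2
  constructor
  · obtain ⟨i, hi⟩ := hex; exact ⟨X i, i, hi, rfl⟩
  · rintro y ⟨i, hi, rfl⟩; exact hc i hi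

theorem infOn_eq_const {A : Set Ω} {c : ℝ} (hc : ∀ i, H i ⊆ A → X i = c)
    (hex : ∃ i, H i ⊆ A) : infOn H X A = c := by
  rw [infOn, valsOn_eq_singleton hc hex, csInf_singleton]

theorem supOn_eq_const {A : Set Ω} {c : ℝ} (hc : ∀ i, H i ⊆ A → X i = c)
    (hex : ∃ i, H i ⊆ A) : supOn H X A = c := by
  rw [supOn, valsOn_eq_singleton hc hex, csSup_singleton]

/-- The two-cell partition `{B, Bᶜ}` when both are nonempty. -/
theorem pairPart (h𝒜L : IsFieldOver H 𝒜L) {B : Set Ω} (hB : B ∈ 𝒜L)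
    (hBne : B.Nonempty) (hBcne : Bᶜ.Nonempty) :
    IsFinPart 𝒜L ({B, Bᶜ} : Finset (Set Ω)) ∧ B ≠ Bᶜ := by
  have hne : B ≠ Bᶜ := by
    obtain ⟨x, hx⟩ := hBne
    intro h
    exact (h ▸ hx : x ∈ Bᶜ) hx
  refine ⟨⟨?_, ?_, ?_, ?_⟩, hne⟩
  · intro C hC
    simp only [Finset.coe_insert, Finset.coe_singleton, Set.mem_insert_iff,
      Set.mem_singleton_iff] at hC
    rcases hC with rfl | rfl
    · exact hB
    · exact Field.compl_mem h𝒜L.1 hB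
  · intro C hC
    simp only [Finset.mem_insert, Finset.mem_singleton] at hC
    rcases hC with rfl | rfl
    · exact hBne
    · exact hBcne
  · intro C hC D hD hCD
    simp only [Finset.mem_insert, Finset.mem_singleton] at hC hD
    rcases hC with rfl | rfl <;> rcases hD with rfl | rfl
    · exact absurd rfl hCD
    · exact disjoint_compl_right
    · exact disjoint_compl_left
    · exact absurd rfl hCD
  · simp [Finset.coe_insert, Finset.coe_singleton, Set.sUnion_insert]

theorem lowSum_pair {B : Set Ω} (hne : B ≠ Bᶜ) :
    lowSum H X μ ({B, Bᶜ} : Finset (Set Ω)) = infOn H X B * μ B + infOn H X Bᶜ * μ Bᶜ := by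
  unfold lowSum
  rw [Finset.sum_pair hne]

theorem upSum_pair {B : Set Ω} (hne : B ≠ Bᶜ) :
    upSum H X μ ({B, Bᶜ} : Finset (Set Ω)) = supOn H X B * μ B + supOn H X Bᶜ * μ Bᶜ := by
  unfold upSum
  rw [Finset.sum_pair hne]

theorem lowSum_univ : lowSum H X μ ({Set.univ} : Finset (Set Ω)) =
    infOn H X Set.univ * μ Set.univ := by simp [lowSum]

theorem upSum_univ : upSum H X μ ({Set.univ} : Finset (Set Ω)) =
    supOn H X Set.univ * μ Set.univ := by simp [upSum]

/-- INT1: integral of the indicator of `B ∈ 𝒜L` equals `μ B`. -/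
theorem lint_indicator [Nonempty Ω] (hH : IsPartition H) (h𝒜L : IsFieldOver H 𝒜L)
    (hμ : IsFAP 𝒜L μ) {B : Set Ω} (hB : B ∈ 𝒜L)
    (h1 : ∀ i, H i ⊆ B → X i = 1) (h0 : ∀ i, ¬H i ⊆ B → X i = 0) :
    lowerSInt H 𝒜L X μ = μ B := by
  have hM : ∀ i, |X i| ≤ 1 := by
    intro i
    by_cases h : H i ⊆ B
    · rw [h1 i h]; norm_num
    · rw [h0 i h]; norm_num
  by_cases hBne : B.Nonempty
  · by_cases hBcne : Bᶜ.Nonempty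
    · obtain ⟨hT, hne⟩ := pairPart h𝒜L hB hBne hBcne
      have hexB : ∃ i, H i ⊆ B := exists_atom_subset hH h𝒜L hB hBne
      have hexBc : ∃ i, H i ⊆ Bᶜ :=
        exists_atom_subset hH h𝒜L (Field.compl_mem h𝒜L.1 hB) hBcne
      have h0c : ∀ i, H i ⊆ Bᶜ → X i = 0 := by
        intro i hi
        apply h0
        intro hsub
        obtain ⟨ω, hω⟩ := hH.1 i
        exact (hi hω) (hsub hω)
      apply lint_squeeze hH h𝒜L hμ hM hT
      · rw [lowSum_pair hne, infOn_eq_const h1 hexB, infOn_eq_const h0c hexBc]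
        ring
      · rw [upSum_pair hne, supOn_eq_const h1 hexB, supOn_eq_const h0c hexBc]
        ring
    · -- B = univ
      rw [Set.not_nonempty_iff_eq_empty, Set.compl_empty_iff] at hBcne
      subst hBcne
      have hall : ∀ i, H i ⊆ Set.univ → X i = 1 := fun i h => h1 i h
      have hex : ∃ i, H i ⊆ Set.univ := by
        obtain ⟨i, -⟩ := exists_atom_mem hH (Classical.arbitrary Ω)
        exact ⟨i, Set.subset_univ _⟩
      apply lint_squeeze hH h𝒜L hμ hM (univPart h𝒜L)
      · rw [lowSum_univ, infOn_eq_const hall hex, FAP.univ_eq h𝒜L.1 hμ, one_mul]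
      · rw [upSum_univ, supOn_eq_const hall hex, FAP.univ_eq h𝒜L.1 hμ, one_mul]
  · -- B empty : X ≡ 0 on all atoms (no atom is ⊆ ∅ … any i has X i = 0 unless H i ⊆ B = ∅)
    rw [Set.not_nonempty_iff_eq_empty] at hBne
    subst hBne
    have h0' : ∀ i, H i ⊆ (∅ : Set Ω) → False := by
      intro i hi
      obtain ⟨ω, hω⟩ := hH.1 i
      exact hi hω
    have hall : ∀ i, H i ⊆ Set.univ → X i = 0 := fun i _ =>
      h0 i (fun h => h0' i h)
    have hex : ∃ i, H i ⊆ Set.univ := by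
      obtain ⟨i, -⟩ := exists_atom_mem hH (Classical.arbitrary Ω)
      exact ⟨i, Set.subset_univ _⟩
    apply lint_squeeze hH h𝒜L hμ hM (univPart h𝒜L)
    · rw [lowSum_univ, infOn_eq_const hall hex, FAP.empty_eq h𝒜L.1 hμ, zero_mul]
    · rw [upSum_univ, supOn_eq_const hall hex, FAP.empty_eq h𝒜L.1 hμ, zero_mul]

end S6

namespace S6

variable {Ω ι : Type*} {H : ι → Set Ω} {𝒜L : Set (Set Ω)} {X : ι → ℝ} {μ : Set Ω → ℝ} {M : ℝ}

/-- INT2: integral of a function supported on the atom `i₀`. -/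
theorem lint_atom [Nonempty Ω] (hH : IsPartition H) (h𝒜L : IsFieldOver H 𝒜L)
    (hμ : IsFAP 𝒜L μ) (hM : ∀ i, |X i| ≤ M) (i₀ : ι) (h0 : ∀ i, i ≠ i₀ → X i = 0) :
    lowerSInt H 𝒜L X μ = X i₀ * μ (H i₀) := by
  have hatom : H i₀ ∈ 𝒜L := h𝒜L.2.1 i₀
  have hc : ∀ i, H i ⊆ H i₀ → X i = X i₀ := by
    intro i hi; rw [atom_subset_atom hH hi]
  have hex : ∃ i, H i ⊆ H i₀ := ⟨i₀, subset_rfl⟩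
  by_cases hcne : (H i₀)ᶜ.Nonempty
  · obtain ⟨hT, hne⟩ := pairPart h𝒜L hatom (hH.1 i₀) hcne
    have hc0 : ∀ i, H i ⊆ (H i₀)ᶜ → X i = 0 := by
      intro i hi
      apply h0
      rintro rfl
      obtain ⟨ω, hω⟩ := hH.1 i
      exact hi hω hω
    have hex0 : ∃ i, H i ⊆ (H i₀)ᶜ :=
      exists_atom_subset hH h𝒜L (Field.compl_mem h𝒜L.1 hatom) hcne
    apply lint_squeeze hH h𝒜L hμ hM hT
    · rw [lowSum_pair hne, infOn_eq_const hc hex, infOn_eq_const hc0 hex0]; ring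
    · rw [upSum_pair hne, supOn_eq_const hc hex, supOn_eq_const hc0 hex0]; ring
  · rw [Set.not_nonempty_iff_eq_empty, Set.compl_empty_iff] at hcne
    have hcu : ∀ i, H i ⊆ Set.univ → X i = X i₀ := fun i _ => hc i (hcne ▸ Set.subset_univ _)
    apply lint_squeeze hH h𝒜L hμ hM (univPart h𝒜L)
    · rw [lowSum_univ, infOn_eq_const hcu ⟨i₀, Set.subset_univ _⟩, hcne]
    · rw [upSum_univ, supOn_eq_const hcu ⟨i₀, Set.subset_univ _⟩, hcne]

/-- INT3: integral with respect to the 0-1 measure concentrated on atom `i₀`. -/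
theorem lint_delta [Nonempty Ω] (hH : IsPartition H) (h𝒜L : IsFieldOver H 𝒜L)
    (hμ : IsFAP 𝒜L μ) (hM : ∀ i, |X i| ≤ M) (i₀ : ι)
    (hμδ : ∀ B ∈ 𝒜L, μ B = if H i₀ ⊆ B then 1 else 0) :
    lowerSInt H 𝒜L X μ = X i₀ := by
  have hatom : H i₀ ∈ 𝒜L := h𝒜L.2.1 i₀
  have hc : ∀ i, H i ⊆ H i₀ → X i = X i₀ := by
    intro i hi; rw [atom_subset_atom hH hi]
  have hex : ∃ i, H i ⊆ H i₀ := ⟨i₀, subset_rfl⟩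
  have hμ1 : μ (H i₀) = 1 := by rw [hμδ _ hatom, if_pos subset_rfl]
  by_cases hcne : (H i₀)ᶜ.Nonempty
  · obtain ⟨hT, hne⟩ := pairPart h𝒜L hatom (hH.1 i₀) hcne
    have hμ0 : μ ((H i₀)ᶜ) = 0 := by
      rw [hμδ _ (Field.compl_mem h𝒜L.1 hatom), if_neg]
      intro hsub
      obtain ⟨ω, hω⟩ := hH.1 i₀
      exact hsub hω hω
    apply lint_squeeze hH h𝒜L hμ hM hT
    · rw [lowSum_pair hne, infOn_eq_const hc hex, hμ1, hμ0]; ring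
    · rw [upSum_pair hne, supOn_eq_const hc hex, hμ1, hμ0]; ring
  · rw [Set.not_nonempty_iff_eq_empty, Set.compl_empty_iff] at hcne
    have hcu : ∀ i, H i ⊆ Set.univ → X i = X i₀ := fun i _ => hc i (hcne ▸ Set.subset_univ _)
    apply lint_squeeze hH h𝒜L hμ hM (univPart h𝒜L)
    · rw [lowSum_univ, infOn_eq_const hcu ⟨i₀, Set.subset_univ _⟩,
        FAP.univ_eq h𝒜L.1 hμ, mul_one]
    · rw [upSum_univ, supOn_eq_const hcu ⟨i₀, Set.subset_univ _⟩,
        FAP.univ_eq h𝒜L.1 hμ, mul_one]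

/-- S-integrability: for `𝒜L`-continuous `X`, the upper integral is at most the lower one. -/
theorem uint_le_lint [Nonempty Ω] (hH : IsPartition H) (h𝒜L : IsFieldOver H 𝒜L)
    (hμ : IsFAP 𝒜L μ) (hX : ALContinuous H 𝒜L X) :
    upperSInt H 𝒜L X μ ≤ lowerSInt H 𝒜L X μ := by
  classical
  obtain ⟨M, hM⟩ := hX.1
  apply le_of_forall_pos_le_add
  intro ε hε
  set δ := ε / 2 with hδdef
  have hδ : 0 < δ := by positivity
  obtain ⟨n, hn⟩ := exists_nat_ge (2 * M / δ)
  have h2M : 2 * M ≤ ((n : ℝ) + 1) * δ := by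
    have h1 : 2 * M / δ ≤ (n : ℝ) := hn
    have h2 : 2 * M ≤ (n : ℝ) * δ := by
      calc 2 * M = (2 * M / δ) * δ := by field_simp
        _ ≤ (n : ℝ) * δ := by nlinarith
    nlinarith
  set t : ℕ → ℝ := fun k => -M + k * δ - δ with ht
  choose g hg𝒜 hg2 hg3 using fun k : ℕ => hX.2 (t k) δ hδ
  set A : ℕ → Set Ω := fun k => if k = 0 then Set.univ else if k ≤ n then g k else ∅ with hA
  have hA𝒜 : ∀ k, A k ∈ 𝒜L := by
    intro k
    simp only [hA]
    split_ifs with h1 h2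
    · exact Field.univ_mem h𝒜L.1
    · exact hg𝒜 k
    · exact Field.empty_mem h𝒜L.1
  have hA0 : A 0 = Set.univ := by simp [hA]
  have hsucc : ∀ k, A (k + 1) ⊆ A k := by
    intro k
    by_cases h1 : k + 1 ≤ n
    · have : A (k + 1) = g (k + 1) := by simp [hA, Nat.succ_ne_zero, h1]
      rw [this]
      by_cases hk0 : k = 0
      · subst hk0; rw [hA0]; exact Set.subset_univ _
      · have hkn : k ≤ n := le_trans (Nat.le_succ k) h1
        have hAk : A k = g k := by simp [hA, hk0, hkn]
        rw [hAk]
        intro x hx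
        have hx2 := hg3 (k + 1) hx
        apply hg2 k
        simp only [Set.mem_iUnion, Set.mem_setOf_eq, exists_prop] at hx2 ⊢
        obtain ⟨i, hi, hxi⟩ := hx2
        refine ⟨i, ?_, hxi⟩
        have : t (k + 1) = t k + δ := by simp only [ht]; push_cast; ring
        linarith [this ▸ hi]
    · have : A (k + 1) = ∅ := by simp [hA, Nat.succ_ne_zero, h1]
      rw [this]; exact Set.empty_subset _
  have hanti : ∀ {k l : ℕ}, k ≤ l → A l ⊆ A k := by
    intro k l hkl
    induction hkl with
    | refl => exact subset_rfl
    | @step m h ih => exact (hsucc m).trans ih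
  set D : ℕ → Set Ω := fun k => if k = n then A n else A k \ A (k + 1) with hD
  have hDsub : ∀ k, D k ⊆ A k := by
    intro k
    simp only [hD]
    split_ifs with h
    · subst h; exact subset_rfl
    · exact Set.diff_subset
  have hD𝒜 : ∀ k, D k ∈ 𝒜L := by
    intro k
    simp only [hD]
    split_ifs with h
    · exact hA𝒜 n
    · exact Field.diff_mem h𝒜L.1 (hA𝒜 k) (hA𝒜 (k + 1))
  have hDdisj : ∀ k l, k < l → l ≤ n → Disjoint (D k) (D l) := by
    intro k l hkl hln
    have hkn : k ≠ n := by omega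
    have hDk : D k = A k \ A (k + 1) := by simp [hD, hkn]
    apply Set.disjoint_left.2
    intro x hxk hxl
    have hx2 : x ∈ A l := hDsub l hxl
    have hx3 : x ∈ A (k + 1) := hanti (by omega) hx2
    rw [hDk] at hxk
    exact hxk.2 hx3
  set T : Finset (Set Ω) := ((Finset.range (n + 1)).image D).filter (fun C => C.Nonempty)
    with hTdef
  have hmemT : ∀ C ∈ T, ∃ k ≤ n, C = D k ∧ C.Nonempty := by
    intro C hC
    simp only [hTdef, Finset.mem_filter, Finset.mem_image, Finset.mem_range] at hC
    obtain ⟨⟨k, hk, rfl⟩, hne⟩ := hC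
    exact ⟨k, by omega, rfl, hne⟩
  have hT : IsFinPart 𝒜L T := by
    refine ⟨?_, ?_, ?_, ?_⟩
    · intro C hC
      obtain ⟨k, -, rfl, -⟩ := hmemT C (by exact_mod_cast hC)
      exact hD𝒜 k
    · intro C hC
      obtain ⟨k, -, rfl, hne⟩ := hmemT C hC
      exact hne
    · intro C hC C' hC' hne
      obtain ⟨k, hk, rfl, -⟩ := hmemT C hC
      obtain ⟨l, hl, rfl, -⟩ := hmemT C' hC'
      rcases lt_trichotomy k l with h | h | h
      · exact hDdisj k l h hl
      · exact absurd (by rw [h]) hne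
      · exact (hDdisj l k h hk).symm
    · apply Set.eq_univ_of_forall
      intro x
      have hP0 : x ∈ A 0 := by rw [hA0]; trivial
      have hxk₀' : x ∈ A (Nat.findGreatest (fun k => x ∈ A k) n) :=
        Nat.findGreatest_spec (P := fun k => x ∈ A k) (Nat.zero_le n) hP0
      set k₀ := Nat.findGreatest (fun k => x ∈ A k) n with hk₀
      have hxk₀ : x ∈ A k₀ := hxk₀'
      have hk₀n : k₀ ≤ n := Nat.findGreatest_le n
      have hxD : x ∈ D k₀ := by
        by_cases h : k₀ = n
        · simp only [hD, h, if_pos rfl]; rwa [← h]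
        · have hnot : x ∉ A (k₀ + 1) :=
            Nat.findGreatest_is_greatest (P := fun k => x ∈ A k)
              (Nat.lt_succ_self k₀) (by omega)
          simp only [hD, h, if_neg h]
          exact ⟨hxk₀, hnot⟩
      refine Set.mem_sUnion.2 ⟨D k₀, ?_, hxD⟩
      simp only [hTdef, Finset.coe_filter, Set.mem_setOf_eq, Finset.mem_image,
        Finset.mem_range]
      exact ⟨⟨k₀, by omega, rfl⟩, ⟨x, hxD⟩⟩
  -- per-cell bounds
  have hcell : ∀ k ≤ n, ∀ i, H i ⊆ D k → t k ≤ X i ∧ X i ≤ t k + 2 * δ := by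
    intro k hk i hi
    constructor
    · by_cases hk0 : k = 0
      · subst hk0
        have : t 0 = -M - δ := by simp [ht]
        rw [this]
        have := neg_le_of_abs_le (hM i)
        linarith
      · have hAk : A k = g k := by simp [hA, hk0, hk]
        have hsub : H i ⊆ g k := (hi.trans (hDsub k)).trans_eq (by rw [hAk])
        have := (hsub.trans (hg3 k))
        have hiS := atom_subset_iUnion hH this
        exact hiS
    · by_cases hkn : k = n
      · have h1 : X i ≤ M := le_of_abs_le (hM i)
        have h2 : t n + 2 * δ = -M + ((n : ℝ) + 1) * δ := by simp only [ht]; ring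
        subst hkn
        rw [h2]
        linarith
      · by_contra hgt
        push_neg at hgt
        have hik1 : i ∈ {i | t (k + 1) + δ ≤ X i} := by
          have : t (k + 1) + δ = t k + 2 * δ := by simp only [ht]; push_cast; ring
          rw [Set.mem_setOf_eq, this]
          linarith
        have hsub : H i ⊆ g (k + 1) := by
          refine Set.Subset.trans ?_ (hg2 (k + 1))
          intro y hy
          exact Set.mem_biUnion hik1 hy
        have hA1 : A (k + 1) = g (k + 1) := by
          simp [hA, Nat.succ_ne_zero, Nat.succ_le_of_lt (lt_of_le_of_ne hk hkn)]
        have hDk : D k = A k \ A (k + 1) := by simp [hD, hkn]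
        obtain ⟨ω, hω⟩ := hH.1 i
        have h1 : ω ∈ A (k + 1) := by rw [hA1]; exact hsub hω
        have h2 := hi hω
        rw [hDk] at h2
        exact h2.2 h1
  -- conclude
  have hwidth : ∀ C ∈ T, supOn H X C - infOn H X C ≤ 2 * δ := by
    intro C hC
    obtain ⟨k, hk, rfl, hne⟩ := hmemT C hC
    have hvne : (valsOn H X (D k)).Nonempty := valsOn_nonempty hH h𝒜L (hD𝒜 k) hne
    have h1 : supOn H X (D k) ≤ t k + 2 * δ :=
      supOn_le hvne (fun i hi => (hcell k hk i hi).2)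
    have h2 : t k ≤ infOn H X (D k) :=
      le_infOn hvne (fun i hi => (hcell k hk i hi).1)
    linarith
  have hub : upSum H X μ T ≤ lowSum H X μ T + ε := by
    have heq : upSum H X μ T - lowSum H X μ T =
        ∑ C ∈ T, (supOn H X C - infOn H X C) * μ C := by
      unfold upSum lowSum
      rw [← Finset.sum_sub_distrib]
      congr 1
      ext C
      ring
    have hle : ∑ C ∈ T, (supOn H X C - infOn H X C) * μ C ≤ ∑ C ∈ T, 2 * δ * μ C := by
      apply Finset.sum_le_sum
      intro C hC
      exact mul_le_mul_of_nonneg_right (hwidth C hC) (FAP.nonneg h𝒜L.1 hμ (hT.1 hC))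
    have hsum1 : ∑ C ∈ T, μ C = 1 := FAP.sum_partition_one h𝒜L.1 hμ (subset_refl 𝒜L) hT
    have : ∑ C ∈ T, 2 * δ * μ C = 2 * δ := by
      rw [← Finset.mul_sum, hsum1, mul_one]
    have hδε : 2 * δ = ε := by rw [hδdef]; ring
    linarith
  calc upperSInt H 𝒜L X μ ≤ upSum H X μ T := uint_le_upSum hH h𝒜L hμ hM hT
    _ ≤ lowSum H X μ T + ε := hub
    _ ≤ lowerSInt H 𝒜L X μ + ε := by linarith [lowSum_le_lint hH h𝒜L hμ hM hT]

end S6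

namespace S6

variable {Ω ι : Type*} {H : ι → Set Ω} {𝒜L : Set (Set Ω)} {X Y Z : ι → ℝ}
  {μ : Set Ω → ℝ} {M : ℝ}

theorem lint_nonneg [Nonempty Ω] (hH : IsPartition H) (h𝒜L : IsFieldOver H 𝒜L)
    (hμ : IsFAP 𝒜L μ) (hM : ∀ i, |X i| ≤ M) (hX0 : ∀ i, 0 ≤ X i) :
    0 ≤ lowerSInt H 𝒜L X μ := by
  have h : 0 ≤ lowSum H X μ {Set.univ} := by
    rw [lowSum_univ]
    exact mul_nonneg (infOn_nonneg hX0 _) (by rw [FAP.univ_eq h𝒜L.1 hμ]; norm_num)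
  exact le_trans h (lowSum_le_lint hH h𝒜L hμ hM (univPart h𝒜L))

theorem lint_le_one [Nonempty Ω] (hH : IsPartition H) (h𝒜L : IsFieldOver H 𝒜L)
    (hμ : IsFAP 𝒜L μ) (hM : ∀ i, |X i| ≤ M) (hX1 : ∀ i, X i ≤ 1) :
    lowerSInt H 𝒜L X μ ≤ 1 := by
  have h : upSum H X μ {Set.univ} ≤ 1 := by
    rw [upSum_univ, FAP.univ_eq h𝒜L.1 hμ, mul_one]
    exact supOn_le_one hX1 _
  exact le_trans (lint_le_upSum hH h𝒜L hμ hM (univPart h𝒜L)) h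

theorem lowSum_congr {μ' : Set Ω → ℝ} (h : ∀ B ∈ 𝒜L, μ B = μ' B)
    {T : Finset (Set Ω)} (hT : IsFinPart 𝒜L T) :
    lowSum H X μ T = lowSum H X μ' T := by
  unfold lowSum
  apply Finset.sum_congr rfl
  intro A hA
  rw [h A (hT.1 hA)]

theorem lint_congr {μ' : Set Ω → ℝ} (h : ∀ B ∈ 𝒜L, μ B = μ' B) :
    lowerSInt H 𝒜L X μ = lowerSInt H 𝒜L X μ' := by
  rw [lowerSInt_eq_sSup, lowerSInt_eq_sSup]
  congr 1
  ext x
  constructor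
  · rintro ⟨T, hT, rfl⟩; exact ⟨T, hT, lowSum_congr h hT⟩
  · rintro ⟨T, hT, rfl⟩; exact ⟨T, hT, (lowSum_congr h hT).symm⟩

/-- Additivity of the lower integral on `𝒜L`-continuous summands. -/
theorem lint_add [Nonempty Ω] (hH : IsPartition H) (h𝒜L : IsFieldOver H 𝒜L)
    (hμ : IsFAP 𝒜L μ) (hX : ALContinuous H 𝒜L X) (hY : ALContinuous H 𝒜L Y)
    (hZ : ALContinuous H 𝒜L Z) (hXYZ : ∀ i, Z i = X i + Y i) :
    lowerSInt H 𝒜L Z μ = lowerSInt H 𝒜L X μ + lowerSInt H 𝒜L Y μ := by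
  obtain ⟨MX, hMX⟩ := hX.1
  obtain ⟨MY, hMY⟩ := hY.1
  obtain ⟨MZ, hMZ⟩ := hZ.1
  -- pointwise superadditivity of lower sums on a common partition
  have hlowadd : ∀ {T : Finset (Set Ω)}, IsFinPart 𝒜L T →
      lowSum H X μ T + lowSum H Y μ T ≤ lowSum H Z μ T := by
    intro T hT
    unfold lowSum
    rw [← Finset.sum_add_distrib]
    apply Finset.sum_le_sum
    intro A hA
    have hvne : (valsOn H Z A).Nonempty := valsOn_nonempty hH h𝒜L (hT.1 hA) (hT.2.1 A hA)
    have hinf : infOn H X A + infOn H Y A ≤ infOn H Z A := by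
      apply le_infOn hvne
      intro i hi
      rw [hXYZ i]
      exact add_le_add (infOn_le hMX hi) (infOn_le hMY hi)
    calc infOn H X A * μ A + infOn H Y A * μ A = (infOn H X A + infOn H Y A) * μ A := by
          ring
      _ ≤ infOn H Z A * μ A :=
          mul_le_mul_of_nonneg_right hinf (FAP.nonneg h𝒜L.1 hμ (hT.1 hA))
  have hupadd : ∀ {T : Finset (Set Ω)}, IsFinPart 𝒜L T →
      upSum H Z μ T ≤ upSum H X μ T + upSum H Y μ T := by
    intro T hT
    unfold upSum
    rw [← Finset.sum_add_distrib]
    apply Finset.sum_le_sum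
    intro A hA
    have hvne : (valsOn H Z A).Nonempty := valsOn_nonempty hH h𝒜L (hT.1 hA) (hT.2.1 A hA)
    have hsup : supOn H Z A ≤ supOn H X A + supOn H Y A := by
      apply supOn_le hvne
      intro i hi
      rw [hXYZ i]
      exact add_le_add (le_supOn hMX hi) (le_supOn hMY hi)
    calc supOn H Z A * μ A ≤ (supOn H X A + supOn H Y A) * μ A :=
          mul_le_mul_of_nonneg_right hsup (FAP.nonneg h𝒜L.1 hμ (hT.1 hA))
      _ = supOn H X A * μ A + supOn H Y A * μ A := by ring
  apply le_antisymm
  · -- lint Z ≤ lint X + lint Y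
    apply le_of_forall_pos_le_add
    intro ε hε
    have hεh : 0 < ε / 2 := by positivity
    have hu1 : upperSInt H 𝒜L X μ < lowerSInt H 𝒜L X μ + ε / 2 :=
      lt_of_le_of_lt (uint_le_lint hH h𝒜L hμ hX) (by linarith)
    have hu2 : upperSInt H 𝒜L Y μ < lowerSInt H 𝒜L Y μ + ε / 2 :=
      lt_of_le_of_lt (uint_le_lint hH h𝒜L hμ hY) (by linarith)
    rw [upperSInt_eq_sInf] at hu1 hu2
    obtain ⟨u1, ⟨T1, hT1, rfl⟩, hu1'⟩ := exists_lt_of_csInf_lt (usSet_nonempty h𝒜L) hu1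
    obtain ⟨u2, ⟨T2, hT2, rfl⟩, hu2'⟩ := exists_lt_of_csInf_lt (usSet_nonempty h𝒜L) hu2
    have hR := commonRef_isFinPart h𝒜L hT1 hT2 (H := H)
    calc lowerSInt H 𝒜L Z μ ≤ upSum H Z μ (commonRef T1 T2) :=
          lint_le_upSum hH h𝒜L hμ hMZ hR
      _ ≤ upSum H X μ (commonRef T1 T2) + upSum H Y μ (commonRef T1 T2) := hupadd hR
      _ ≤ upSum H X μ T1 + upSum H Y μ T2 :=
          add_le_add (upSum_refine_le hH h𝒜L hμ hMX hT1 hR commonRef_refines_left)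
            (upSum_refine_le hH h𝒜L hμ hMY hT2 hR commonRef_refines_right)
      _ ≤ lowerSInt H 𝒜L X μ + lowerSInt H 𝒜L Y μ + ε := by linarith
  · -- lint X + lint Y ≤ lint Z
    have key : ∀ a ∈ lsSet H 𝒜L X μ, ∀ b ∈ lsSet H 𝒜L Y μ,
        a + b ≤ lowerSInt H 𝒜L Z μ := by
      rintro a ⟨T1, hT1, rfl⟩ b ⟨T2, hT2, rfl⟩
      have hR := commonRef_isFinPart h𝒜L hT1 hT2 (H := H)
      calc lowSum H X μ T1 + lowSum H Y μ T2
          ≤ lowSum H X μ (commonRef T1 T2) + lowSum H Y μ (commonRef T1 T2) :=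
            add_le_add (lowSum_le_refine hH h𝒜L hμ hMX hT1 hR commonRef_refines_left)
              (lowSum_le_refine hH h𝒜L hμ hMY hT2 hR commonRef_refines_right)
        _ ≤ lowSum H Z μ (commonRef T1 T2) := hlowadd hR
        _ ≤ lowerSInt H 𝒜L Z μ := lowSum_le_lint hH h𝒜L hμ hMZ hR
    rw [lowerSInt_eq_sSup, lowerSInt_eq_sSup]
    apply add_le_of_le_sub_right
    apply csSup_le (lsSet_nonempty h𝒜L)
    intro a ha
    rw [le_sub_iff_add_le, add_comm]
    apply add_le_of_le_sub_right
    apply csSup_le (lsSet_nonempty h𝒜L)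
    intro b hb
    rw [le_sub_iff_add_le, add_comm]
    exact add_comm a b ▸ key a ha b hb

/-- The conditional finitely additive probability `B ↦ μ(B ∩ K)/μ(K)`. -/
theorem fap_cond {𝒜' : Set (Set Ω)} (hF : IsSetField 𝒜') (hμ : IsFAP 𝒜' μ)
    {K : Set Ω} (hK : K ∈ 𝒜') (hμK : μ K ≠ 0) :
    IsFAP 𝒜' (fun B => μ (B ∩ K) / μ K) := by
  have hKpos : 0 < μ K := lt_of_le_of_ne (FAP.nonneg hF hμ hK) (Ne.symm hμK)
  refine ⟨?_, ?_, ?_⟩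
  · intro A hA
    have hm : A ∩ K ∈ 𝒜' := Field.inter_mem hF hA hK
    constructor
    · exact div_nonneg (FAP.nonneg hF hμ hm) hKpos.le
    · rw [div_le_one hKpos]
      exact FAP.mono hF hμ hm hK Set.inter_subset_right
  · simp only [Set.univ_inter]
    exact div_self hμK
  · intro A hA B hB hd
    dsimp only
    rw [Set.union_inter_distrib_right,
      FAP.add_of_disjoint hF hμ (Field.inter_mem hF hA hK) (Field.inter_mem hF hB hK)
        (hd.mono Set.inter_subset_left Set.inter_subset_left)]
    ring

/-- Partitions split by `K`. -/
def SplitBy (K : Set Ω) (T : Finset (Set Ω)) : Prop := ∀ C ∈ T, C ⊆ K ∨ C ⊆ Kᶜ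

theorem exists_split_refine (h𝒜L : IsFieldOver H 𝒜L) {K : Set Ω} (hK : K ∈ 𝒜L)
    (hKne : K.Nonempty) (hKcne : Kᶜ.Nonempty) {T : Finset (Set Ω)}
    (hT : IsFinPart 𝒜L T) :
    ∃ R : Finset (Set Ω), IsFinPart 𝒜L R ∧ Refines T R ∧ SplitBy K R := by
  classical
  obtain ⟨hTK, -⟩ := pairPart h𝒜L hK hKne hKcne (H := H)
  refine ⟨commonRef T {K, Kᶜ}, commonRef_isFinPart h𝒜L hT hTK, commonRef_refines_left, ?_⟩
  intro C hC
  simp only [commonRef, Finset.mem_filter, Finset.mem_image, Finset.mem_product] at hC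
  obtain ⟨⟨⟨A, B⟩, ⟨hA, hB⟩, rfl⟩, -⟩ := hC
  simp only [Finset.mem_insert, Finset.mem_singleton] at hB
  rcases hB with rfl | rfl
  · exact Or.inl Set.inter_subset_right
  · exact Or.inr Set.inter_subset_right

/-- On a split partition, the lower sum w.r.t. `μ` equals `μ K` times the one w.r.t.
the conditional measure, provided `X` vanishes outside `K`. -/
theorem lowSum_split (hH : IsPartition H) (h𝒜L : IsFieldOver H 𝒜L) (hμ : IsFAP 𝒜L μ)
    {K : Set Ω} (hK : K ∈ 𝒜L) (hμK : μ K ≠ 0)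
    (hX0 : ∀ i, ¬H i ⊆ K → X i = 0) {T : Finset (Set Ω)} (hT : IsFinPart 𝒜L T)
    (hsp : SplitBy K T) :
    lowSum H X μ T = μ K * lowSum H X (fun B => μ (B ∩ K) / μ K) T := by
  unfold lowSum
  rw [Finset.mul_sum]
  apply Finset.sum_congr rfl
  intro C hC
  have hCne : C.Nonempty := hT.2.1 C hC
  have hC𝒜 : C ∈ 𝒜L := hT.1 hC
  rcases hsp C hC with hsub | hsub
  · dsimp only
    rw [Set.inter_eq_self_of_subset_left hsub]
    field_simp
  · have h0 : ∀ i, H i ⊆ C → X i = 0 := by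
      intro i hi
      apply hX0
      intro hiK
      obtain ⟨ω, hω⟩ := hH.1 i
      exact (hsub (hi hω)) (hiK hω)
    have hex : ∃ i, H i ⊆ C := exists_atom_subset hH h𝒜L hC𝒜 hCne
    dsimp only
    rw [infOn_eq_const h0 hex]
    have : C ∩ K = ∅ := by
      apply Set.eq_empty_iff_forall_notMem.2
      rintro x ⟨hxC, hxK⟩
      exact (hsub hxC) hxK
    rw [this, FAP.empty_eq h𝒜L.1 hμ]
    simp

/-- COND: conditional-integral identity. -/
theorem lint_cond [Nonempty Ω] (hH : IsPartition H) (h𝒜L : IsFieldOver H 𝒜L)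
    (hμ : IsFAP 𝒜L μ) (hM : ∀ i, |X i| ≤ M) {K : Set Ω} (hK : K ∈ 𝒜L) (hμK : μ K ≠ 0)
    (hX0 : ∀ i, ¬H i ⊆ K → X i = 0) :
    lowerSInt H 𝒜L X μ = μ K * lowerSInt H 𝒜L X (fun B => μ (B ∩ K) / μ K) := by
  have hF := h𝒜L.1
  have hKpos : 0 < μ K := lt_of_le_of_ne (FAP.nonneg hF hμ hK) (Ne.symm hμK)
  have hν : IsFAP 𝒜L (fun B => μ (B ∩ K) / μ K) := fap_cond h𝒜L.1 hμ hK hμK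
  have hKne : K.Nonempty := by
    rcases Set.eq_empty_or_nonempty K with rfl | h
    · rw [FAP.empty_eq hF hμ] at hμK; exact absurd rfl hμK
    · exact h
  by_cases hKcne : Kᶜ.Nonempty
  · apply le_antisymm
    · rw [lowerSInt_eq_sSup]
      apply csSup_le (lsSet_nonempty h𝒜L)
      rintro x ⟨T, hT, rfl⟩
      obtain ⟨R, hR, href, hsp⟩ := exists_split_refine h𝒜L hK hKne hKcne hT
      calc lowSum H X μ T ≤ lowSum H X μ R := lowSum_le_refine hH h𝒜L hμ hM hT hR href
        _ = μ K * lowSum H X (fun B => μ (B ∩ K) / μ K) R :=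
            lowSum_split hH h𝒜L hμ hK hμK hX0 hR hsp
        _ ≤ μ K * lowerSInt H 𝒜L X (fun B => μ (B ∩ K) / μ K) :=
            mul_le_mul_of_nonneg_left (lowSum_le_lint hH h𝒜L hν hM hR) hKpos.le
    · rw [← le_div_iff₀' hKpos, lowerSInt_eq_sSup]
      apply csSup_le (lsSet_nonempty h𝒜L)
      rintro x ⟨T, hT, rfl⟩
      rw [le_div_iff₀' hKpos]
      obtain ⟨R, hR, href, hsp⟩ := exists_split_refine h𝒜L hK hKne hKcne hT
      calc μ K * lowSum H X (fun B => μ (B ∩ K) / μ K) T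
          ≤ μ K * lowSum H X (fun B => μ (B ∩ K) / μ K) R :=
            mul_le_mul_of_nonneg_left
              (lowSum_le_refine hH h𝒜L hν hM hT hR href) hKpos.le
        _ = lowSum H X μ R := (lowSum_split hH h𝒜L hμ hK hμK hX0 hR hsp).symm
        _ ≤ lowerSInt H 𝒜L X μ := lowSum_le_lint hH h𝒜L hμ hM hR
  · rw [Set.not_nonempty_iff_eq_empty, Set.compl_empty_iff] at hKcne
    subst hKcne
    have h1 : μ Set.univ = 1 := FAP.univ_eq hF hμ
    rw [h1, one_mul]
    apply lint_congr
    intro B hB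
    simp [h1]

end S6

namespace S6

variable {Ω ι : Type*}

/-! ### Minima for the well-ordering relation -/

noncomputable def wmin {α : Type*} (S : Set α) (h : S.Nonempty) : α :=
  (IsWellFounded.wf (r := (WellOrderingRel : α → α → Prop))).min S h

theorem wmin_mem {α : Type*} (S : Set α) (h : S.Nonempty) : wmin S h ∈ S :=
  WellFounded.min_mem _ S h

theorem wmin_eq_of_subset {α : Type*} {S S' : Set α} (hsub : S' ⊆ S)
    (h : S.Nonempty) (h' : S'.Nonempty) (hmem : wmin S h ∈ S') :
    wmin S' h' = wmin S h := by
  have h1 : ¬WellOrderingRel (wmin S' h') (wmin S h) :=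
    WellFounded.not_lt_min _ S (hsub (wmin_mem S' h'))
  have h2 : ¬WellOrderingRel (wmin S h) (wmin S' h') :=
    WellFounded.not_lt_min _ S' hmem
  rcases trichotomous_of (WellOrderingRel : α → α → Prop) (wmin S' h') (wmin S h) with
    h | h | h
  · exact absurd h h1
  · exact h
  · exact absurd h h2

/-! ### Strategy lemmas -/

variable {H : ι → Set Ω} {𝒜L 𝒜 : Set (Set Ω)} {π : Set Ω → ℝ} {σ : Set Ω → ι → ℝ}

theorem sigma_nonneg (hF : IsSetField 𝒜) (hσ : IsStrategy 𝒜 H σ) {F : Set Ω}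
    (hFm : F ∈ 𝒜) (i : ι) : 0 ≤ σ F i := FAP.nonneg hF (hσ i).1 hFm

theorem sigma_le_one (hF : IsSetField 𝒜) (hσ : IsStrategy 𝒜 H σ) {F : Set Ω}
    (hFm : F ∈ 𝒜) (i : ι) : σ F i ≤ 1 := FAP.le_one hF (hσ i).1 hFm

theorem sigma_bound (hF : IsSetField 𝒜) (hσ : IsStrategy 𝒜 H σ) {F : Set Ω}
    (hFm : F ∈ 𝒜) : ∀ i, |σ F i| ≤ 1 := by
  intro i
  rw [abs_le]
  exact ⟨by linarith [sigma_nonneg hF hσ hFm i], sigma_le_one hF hσ hFm i⟩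

theorem sigma_mono (hF : IsSetField 𝒜) (hσ : IsStrategy 𝒜 H σ) {F G : Set Ω}
    (hFm : F ∈ 𝒜) (hGm : G ∈ 𝒜) (hFG : F ⊆ G) (i : ι) : σ F i ≤ σ G i :=
  FAP.mono hF (hσ i).1 hFm hGm hFG

theorem sigma_compl (hF : IsSetField 𝒜) (hσ : IsStrategy 𝒜 H σ) {F : Set Ω}
    (hFm : F ∈ 𝒜) (i : ι) : σ Fᶜ i = 1 - σ F i := by
  have h := (hσ i).1.2.2 F hFm Fᶜ (Field.compl_mem hF hFm) disjoint_compl_right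
  rw [Set.union_compl_self] at h
  have h2 : σ Set.univ i = 1 := (hσ i).1.2.1
  linarith

/-- On sets of `𝒜L`, the strategy takes 0-1 (indicator) values. -/
theorem sigma_indicator_one (hH : IsPartition H) (hF : IsSetField 𝒜)
    (hsub : 𝒜L ⊆ 𝒜) (hσ : IsStrategy 𝒜 H σ) {B : Set Ω} (hB : B ∈ 𝒜L)
    {i : ι} (hi : H i ⊆ B) : σ B i = 1 := (hσ i).2 B (hsub hB) hi

theorem sigma_indicator_zero (hH : IsPartition H) (h𝒜L : IsFieldOver H 𝒜L)
    (hF : IsSetField 𝒜) (hsub : 𝒜L ⊆ 𝒜) (hσ : IsStrategy 𝒜 H σ) {B : Set Ω}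
    (hB : B ∈ 𝒜L) {i : ι} (hi : ¬H i ⊆ B) : σ B i = 0 := by
  rcases atom_subset_or hH h𝒜L hB i with h | h
  · exact absurd h hi
  · have hBc : H i ⊆ Bᶜ := by
      intro x hx
      intro hxB
      exact Set.eq_empty_iff_forall_notMem.1 h x ⟨hx, hxB⟩
    have h1 : σ Bᶜ i = 1 := (hσ i).2 Bᶜ (Field.compl_mem hF (hsub hB)) hBc
    have h2 := sigma_compl hF hσ (hsub hB) i
    rw [h1] at h2
    linarith

theorem sigma_indicator (hH : IsPartition H) (h𝒜L : IsFieldOver H 𝒜L)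
    (hF : IsSetField 𝒜) (hsub : 𝒜L ⊆ 𝒜) (hσ : IsStrategy 𝒜 H σ) {B : Set Ω}
    (hB : B ∈ 𝒜L) (i : ι) : σ B i = if H i ⊆ B then 1 else 0 := by
  split_ifs with h
  · exact sigma_indicator_one hH hF hsub hσ hB h
  · exact sigma_indicator_zero hH h𝒜L hF hsub hσ hB h

/-- If `H i ⊆ K` with `K ∈ 𝒜L`, then `σ (F ∩ K) i = σ F i`. -/
theorem sigma_inter_of_subset (hH : IsPartition H) (h𝒜L : IsFieldOver H 𝒜L)
    (hF : IsSetField 𝒜) (hsub : 𝒜L ⊆ 𝒜) (hσ : IsStrategy 𝒜 H σ) {F K : Set Ω}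
    (hFm : F ∈ 𝒜) (hK : K ∈ 𝒜L) {i : ι} (hi : H i ⊆ K) : σ (F ∩ K) i = σ F i := by
  have hK𝒜 : K ∈ 𝒜 := hsub hK
  have hKc : Kᶜ ∈ 𝒜 := Field.compl_mem hF hK𝒜
  have hFKc : F ∩ Kᶜ ∈ 𝒜 := Field.inter_mem hF hFm hKc
  have hFK : F ∩ K ∈ 𝒜 := Field.inter_mem hF hFm hK𝒜
  have hsplit : σ F i = σ (F ∩ K) i + σ (F ∩ Kᶜ) i := by
    have hd : Disjoint (F ∩ K) (F ∩ Kᶜ) :=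
      (disjoint_compl_right (a := K)).mono Set.inter_subset_right Set.inter_subset_right
    have := (hσ i).1.2.2 (F ∩ K) hFK (F ∩ Kᶜ) hFKc hd
    rw [← Set.inter_union_distrib_left, Set.union_compl_self, Set.inter_univ] at this
    exact this
  have hKc0 : σ Kᶜ i = 0 := by
    rw [sigma_compl hF hσ hK𝒜, sigma_indicator_one hH hF hsub hσ hK hi]
    ring
  have h0 : σ (F ∩ Kᶜ) i = 0 := by
    have h1 := sigma_mono hF hσ hFKc hKc Set.inter_subset_right i
    have h2 := sigma_nonneg hF hσ hFKc i
    linarith [hKc0 ▸ h1]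
  linarith

theorem sigma_inter_atom (hH : IsPartition H) (h𝒜L : IsFieldOver H 𝒜L)
    (hF : IsSetField 𝒜) (hsub : 𝒜L ⊆ 𝒜) (hσ : IsStrategy 𝒜 H σ) {F : Set Ω}
    (hFm : F ∈ 𝒜) (i : ι) : σ (F ∩ H i) i = σ F i :=
  sigma_inter_of_subset hH h𝒜L hF hsub hσ hFm (h𝒜L.2.1 i) subset_rfl

theorem sigma_inter_atom_ne (hH : IsPartition H) (h𝒜L : IsFieldOver H 𝒜L)
    (hF : IsSetField 𝒜) (hsub : 𝒜L ⊆ 𝒜) (hσ : IsStrategy 𝒜 H σ) {F : Set Ω}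
    (hFm : F ∈ 𝒜) {i j : ι} (hij : j ≠ i) : σ (F ∩ H i) j = 0 := by
  have hatom : H i ∈ 𝒜 := hsub (h𝒜L.2.1 i)
  have h1 : σ (H i) j = 0 := by
    apply sigma_indicator_zero hH h𝒜L hF hsub hσ (h𝒜L.2.1 i)
    intro hsubj
    exact hij (atom_subset_atom hH hsubj)
  have h2 := sigma_mono hF hσ (Field.inter_mem hF hFm hatom) hatom
    Set.inter_subset_right j
  have h3 := sigma_nonneg hF hσ (Field.inter_mem hF hFm hatom) j
  linarith

/-! ### The unconditional measure `ν_π = ∫ σ dπ` -/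

noncomputable def nupi (H : ι → Set Ω) (𝒜L : Set (Set Ω)) (π : Set Ω → ℝ)
    (σ : Set Ω → ι → ℝ) : Set Ω → ℝ :=
  fun F => lowerSInt H 𝒜L (fun i => σ F i) π

section nupi

variable [Nonempty Ω] (hH : IsPartition H) (h𝒜L : IsFieldOver H 𝒜L)
  (hF : IsSetField 𝒜) (hsub : 𝒜L ⊆ 𝒜) (hπ : IsFAP 𝒜L π) (hσ : IsStrategy 𝒜 H σ)
  (hcont : ∀ F ∈ 𝒜, ALContinuous H 𝒜L fun i => σ F i)
include hH h𝒜L hF hsub hπ hσ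

theorem nupi_on_AL {B : Set Ω} (hB : B ∈ 𝒜L) : nupi H 𝒜L π σ B = π B := by
  apply lint_indicator hH h𝒜L hπ hB
  · exact fun i hi => sigma_indicator_one hH hF hsub hσ hB hi
  · exact fun i hi => sigma_indicator_zero hH h𝒜L hF hsub hσ hB hi

theorem nupi_univ : nupi H 𝒜L π σ Set.univ = 1 := by
  rw [nupi_on_AL hH h𝒜L hF hsub hπ hσ (Field.univ_mem h𝒜L.1)]
  exact FAP.univ_eq h𝒜L.1 hπ

theorem nupi_atom {F : Set Ω} (hFm : F ∈ 𝒜) (i : ι) :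
    nupi H 𝒜L π σ (F ∩ H i) = σ F i * π (H i) := by
  have h := lint_atom hH h𝒜L hπ
    (sigma_bound hF hσ (Field.inter_mem hF hFm (hsub (h𝒜L.2.1 i)))) i
    (fun j hj => sigma_inter_atom_ne hH h𝒜L hF hsub hσ hFm hj)
  rw [nupi, h, sigma_inter_atom hH h𝒜L hF hsub hσ hFm]

include hcont in
theorem nupi_fap : IsFAP 𝒜 (nupi H 𝒜L π σ) := by
  refine ⟨?_, nupi_univ hH h𝒜L hF hsub hπ hσ, ?_⟩
  · intro F hFm
    constructor
    · exact lint_nonneg hH h𝒜L hπ (sigma_bound hF hσ hFm)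
        (fun i => sigma_nonneg hF hσ hFm i)
    · exact lint_le_one hH h𝒜L hπ (sigma_bound hF hσ hFm)
        (fun i => sigma_le_one hF hσ hFm i)
  · intro F hFm G hGm hd
    have hun : F ∪ G ∈ 𝒜 := Field.union_mem hF hFm hGm
    apply lint_add hH h𝒜L hπ (hcont F hFm) (hcont G hGm) (hcont (F ∪ G) hun)
    intro i
    exact (hσ i).1.2.2 F hFm G hGm hd

end nupi

/-! ### The constructed full conditional probability -/

/-- The minimal index charging `K`. -/
noncomputable def idx0 (σ : Set Ω → ι → ℝ) (K : Set Ω) (h : ∃ i, σ K i ≠ 0) : ι :=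
  wmin {i | σ K i ≠ 0} h

noncomputable def QCon (H : ι → Set Ω) (𝒜L : Set (Set Ω)) (π : Set Ω → ℝ)
    (σ : Set Ω → ι → ℝ) : Set Ω → Set Ω → ℝ := fun F K =>
  if nupi H 𝒜L π σ K = 0 then
    (if hι : ∃ i, σ K i ≠ 0 then σ (F ∩ K) (idx0 σ K hι) / σ K (idx0 σ K hι)
     else if hK : K.Nonempty then (if wmin K hK ∈ F ∩ K then 1 else 0) else 0)
  else nupi H 𝒜L π σ (F ∩ K) / nupi H 𝒜L π σ K

theorem QCon_layer1 {K : Set Ω} (h : nupi H 𝒜L π σ K ≠ 0) (F : Set Ω) :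
    QCon H 𝒜L π σ F K = nupi H 𝒜L π σ (F ∩ K) / nupi H 𝒜L π σ K := by
  rw [QCon, if_neg h]

theorem QCon_layer2 {K : Set Ω} (h : nupi H 𝒜L π σ K = 0) (hι : ∃ i, σ K i ≠ 0)
    (F : Set Ω) :
    QCon H 𝒜L π σ F K = σ (F ∩ K) (idx0 σ K hι) / σ K (idx0 σ K hι) := by
  rw [QCon, if_pos h, dif_pos hι]

theorem QCon_layer3 {K : Set Ω} (h : nupi H 𝒜L π σ K = 0) (hι : ¬∃ i, σ K i ≠ 0)
    (hK : K.Nonempty) (F : Set Ω) :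
    QCon H 𝒜L π σ F K = if wmin K hK ∈ F ∩ K then 1 else 0 := by
  rw [QCon, if_pos h, dif_neg hι, dif_pos hK]

end S6

namespace S6

variable {Ω ι : Type*} {H : ι → Set Ω} {𝒜L 𝒜 : Set (Set Ω)} {π ν : Set Ω → ℝ}
  {σ : Set Ω → ι → ℝ} {X X' : ι → ℝ} {M M' : ℝ}

theorem lint_congrX (h : ∀ i, X i = X' i) :
    lowerSInt H 𝒜L X ν = lowerSInt H 𝒜L X' ν := by
  have : X = X' := funext h
  rw [this]

theorem lowSum_loc (hH : IsPartition H) (h𝒜L : IsFieldOver H 𝒜L) {K : Set Ω}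
    (hloc : ∀ i, H i ⊆ K → X i = X' i) (hν0 : ∀ C ∈ 𝒜L, C ∩ K = ∅ → ν C = 0)
    {T : Finset (Set Ω)} (hT : IsFinPart 𝒜L T) (hsp : SplitBy K T) :
    lowSum H X ν T = lowSum H X' ν T := by
  unfold lowSum
  apply Finset.sum_congr rfl
  intro C hC
  rcases hsp C hC with hsub | hsub
  · have hvals : valsOn H X C = valsOn H X' C := by
      ext y
      constructor
      · rintro ⟨i, hi, rfl⟩; exact ⟨i, hi, hloc i (hi.trans hsub)⟩
      · rintro ⟨i, hi, rfl⟩; exact ⟨i, hi, (hloc i (hi.trans hsub)).symm⟩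
    rw [infOn, infOn, hvals]
  · have h0 : ν C = 0 := by
      apply hν0 C (hT.1 hC)
      apply Set.eq_empty_iff_forall_notMem.2
      rintro x ⟨hxC, hxK⟩
      exact (hsub hxC) hxK
    rw [h0, mul_zero, mul_zero]

/-- LOC: the integral only depends on the values on atoms inside `K`,
when the measure vanishes outside `K`. -/
theorem lint_loc [Nonempty Ω] (hH : IsPartition H) (h𝒜L : IsFieldOver H 𝒜L)
    (hν : IsFAP 𝒜L ν) (hMX : ∀ i, |X i| ≤ M) (hMX' : ∀ i, |X' i| ≤ M')
    {K : Set Ω} (hK : K ∈ 𝒜L) (hKne : K.Nonempty)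
    (hloc : ∀ i, H i ⊆ K → X i = X' i) (hν0 : ∀ C ∈ 𝒜L, C ∩ K = ∅ → ν C = 0) :
    lowerSInt H 𝒜L X ν = lowerSInt H 𝒜L X' ν := by
  by_cases hKcne : Kᶜ.Nonempty
  · apply le_antisymm
    · rw [lowerSInt_eq_sSup]
      apply csSup_le (lsSet_nonempty h𝒜L)
      rintro x ⟨T, hT, rfl⟩
      obtain ⟨R, hR, href, hsp⟩ := exists_split_refine h𝒜L hK hKne hKcne hT
      calc lowSum H X ν T ≤ lowSum H X ν R := lowSum_le_refine hH h𝒜L hν hMX hT hR href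
        _ = lowSum H X' ν R := lowSum_loc hH h𝒜L hloc hν0 hR hsp
        _ ≤ lowerSInt H 𝒜L X' ν := lowSum_le_lint hH h𝒜L hν hMX' hR
    · rw [lowerSInt_eq_sSup]
      apply csSup_le (lsSet_nonempty h𝒜L)
      rintro x ⟨T, hT, rfl⟩
      obtain ⟨R, hR, href, hsp⟩ := exists_split_refine h𝒜L hK hKne hKcne hT
      calc lowSum H X' ν T ≤ lowSum H X' ν R :=
            lowSum_le_refine hH h𝒜L hν hMX' hT hR href
        _ = lowSum H X ν R := (lowSum_loc hH h𝒜L hloc hν0 hR hsp).symm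
        _ ≤ lowerSInt H 𝒜L X ν := lowSum_le_lint hH h𝒜L hν hMX hR
  · rw [Set.not_nonempty_iff_eq_empty, Set.compl_empty_iff] at hKcne
    subst hKcne
    exact lint_congrX fun i => hloc i (Set.subset_univ _)

theorem fap_restrict {𝒜' 𝒜'' : Set (Set Ω)} (hsub : 𝒜' ⊆ 𝒜'') (hν : IsFAP 𝒜'' ν) :
    IsFAP 𝒜' ν :=
  ⟨fun A hA => hν.1 A (hsub hA), hν.2.1,
    fun A hA B hB hd => hν.2.2 A (hsub hA) B (hsub hB) hd⟩

theorem fap_point (hF : IsSetField 𝒜) {K : Set Ω} {ω₀ : Ω} (hω : ω₀ ∈ K) :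
    IsFAP 𝒜 (fun E => if ω₀ ∈ E ∩ K then (1 : ℝ) else 0) := by
  refine ⟨?_, ?_, ?_⟩
  · intro A hA
    dsimp only
    split_ifs <;> norm_num
  · simp [hω]
  · intro A hA B hB hd
    by_cases hA' : ω₀ ∈ A <;> by_cases hB' : ω₀ ∈ B
    · exact absurd (hd.le_bot ⟨hA', hB'⟩) (by simp)
    all_goals simp [Set.mem_inter_iff, Set.mem_union, hA', hB', hω]

theorem idx0_spec {K : Set Ω} (hι : ∃ i, σ K i ≠ 0) : σ K (idx0 σ K hι) ≠ 0 :=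
  wmin_mem {i | σ K i ≠ 0} hι

theorem QCon_congr {F F' K : Set Ω} (h : F ∩ K = F' ∩ K) :
    QCon H 𝒜L π σ F K = QCon H 𝒜L π σ F' K := by
  unfold QCon
  simp only [h]

/-! ### Main construction lemmas -/

section main

variable [Nonempty Ω] (hH : IsPartition H) (h𝒜L : IsFieldOver H 𝒜L)
  (hF : IsSetField 𝒜) (hsub : 𝒜L ⊆ 𝒜) (hπ : IsFAP 𝒜L π) (hσ : IsStrategy 𝒜 H σ)
  (hcont : ∀ F ∈ 𝒜, ALContinuous H 𝒜L fun i => σ F i)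
include hH h𝒜L hF hsub hπ hσ hcont

theorem nupi_zero_inter {E K : Set Ω} (hE : E ∈ 𝒜) (hK : K ∈ 𝒜)
    (h : nupi H 𝒜L π σ K = 0) : nupi H 𝒜L π σ (E ∩ K) = 0 := by
  have hfap := nupi_fap hH h𝒜L hF hsub hπ hσ hcont
  have hm : E ∩ K ∈ 𝒜 := Field.inter_mem hF hE hK
  have h1 := FAP.mono hF hfap hm hK Set.inter_subset_right
  have h2 := FAP.nonneg hF hfap hm
  linarith

omit hcont in
theorem sigma_zero_inter {E K : Set Ω} (hE : E ∈ 𝒜) (hK : K ∈ 𝒜) {i : ι}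
    (h : σ K i = 0) : σ (E ∩ K) i = 0 := by
  have hm : E ∩ K ∈ 𝒜 := Field.inter_mem hF hE hK
  have h1 := sigma_mono hF hσ hm hK Set.inter_subset_right i
  have h2 := sigma_nonneg hF hσ hm i
  linarith

theorem QCon_fap {K : Set Ω} (hK : K ∈ 𝒜) (hKne : K.Nonempty) :
    IsFAP 𝒜 (fun E => QCon H 𝒜L π σ E K) := by
  by_cases hnu : nupi H 𝒜L π σ K = 0
  · by_cases hι : ∃ i, σ K i ≠ 0
    · have heq : (fun E => QCon H 𝒜L π σ E K) =
          fun E => σ (E ∩ K) (idx0 σ K hι) / σ K (idx0 σ K hι) :=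
        funext fun E => QCon_layer2 hnu hι E
      rw [heq]
      exact fap_cond hF (hσ (idx0 σ K hι)).1 hK (idx0_spec hι)
    · have heq : (fun E => QCon H 𝒜L π σ E K) =
          fun E => if wmin K hKne ∈ E ∩ K then (1 : ℝ) else 0 :=
        funext fun E => QCon_layer3 hnu hι hKne E
      rw [heq]
      exact fap_point hF (wmin_mem K hKne)
  · have heq : (fun E => QCon H 𝒜L π σ E K) =
        fun E => nupi H 𝒜L π σ (E ∩ K) / nupi H 𝒜L π σ K :=
      funext fun E => QCon_layer1 hnu E
    rw [heq]
    exact fap_cond hF (nupi_fap hH h𝒜L hF hsub hπ hσ hcont) hK hnu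

omit hH h𝒜L hF hsub hπ hσ hcont in
theorem QCon_C1 (E K : Set Ω) : QCon H 𝒜L π σ E K = QCon H 𝒜L π σ (E ∩ K) K :=
  QCon_congr (by rw [Set.inter_assoc, Set.inter_self])

theorem QCon_C3 {E F K : Set Ω} (hE : E ∈ 𝒜) (hFm : F ∈ 𝒜) (hK : K ∈ 𝒜)
    (hKne : K.Nonempty) (hGne : (E ∩ K).Nonempty) :
    QCon H 𝒜L π σ (E ∩ F) K = QCon H 𝒜L π σ E K * QCon H 𝒜L π σ F (E ∩ K) := by
  have hG : E ∩ K ∈ 𝒜 := Field.inter_mem hF hE hK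
  have hset : (E ∩ F) ∩ K = F ∩ (E ∩ K) := by
    ext x; simp only [Set.mem_inter_iff]; tauto
  by_cases hnu : nupi H 𝒜L π σ K = 0
  · have hnuG : nupi H 𝒜L π σ (E ∩ K) = 0 :=
      nupi_zero_inter hH h𝒜L hF hsub hπ hσ hcont hE hK hnu
    by_cases hι : ∃ i, σ K i ≠ 0
    · set i₀ := idx0 σ K hι with hi₀
      by_cases hσG : σ (E ∩ K) i₀ = 0
      · rw [QCon_layer2 hnu hι, QCon_layer2 hnu hι, hσG, zero_div, zero_mul, hset]
        have h0 : σ (F ∩ (E ∩ K)) i₀ = 0 :=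
          sigma_zero_inter hH h𝒜L hF hsub hπ hσ hFm hG hσG
        rw [h0, zero_div]
      · have hιG : ∃ i, σ (E ∩ K) i ≠ 0 := ⟨i₀, hσG⟩
        have hsubS : {i | σ (E ∩ K) i ≠ 0} ⊆ {i | σ K i ≠ 0} := by
          intro i hi
          simp only [Set.mem_setOf_eq] at hi ⊢
          intro h0
          exact hi (sigma_zero_inter hH h𝒜L hF hsub hπ hσ hE hK h0)
        have hidx : idx0 σ (E ∩ K) hιG = i₀ :=
          wmin_eq_of_subset hsubS hι hιG hσG
        rw [QCon_layer2 hnu hι, QCon_layer2 hnu hι, QCon_layer2 hnuG hιG, hidx]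
        simp only [hset]
        rw [← hi₀]
        have ha : σ K i₀ ≠ 0 := idx0_spec hι
        field_simp
    · push_neg at hι
      have hιG : ¬∃ i, σ (E ∩ K) i ≠ 0 := by
        push_neg
        exact fun i => sigma_zero_inter hH h𝒜L hF hsub hπ hσ hE hK (hι i)
      rw [QCon_layer3 hnu (by push_neg; exact hι) hKne,
        QCon_layer3 hnu (by push_neg; exact hι) hKne,
        QCon_layer3 hnuG hιG hGne]
      by_cases hωE : wmin K hKne ∈ E ∩ K
      · have hwm : wmin (E ∩ K) hGne = wmin K hKne :=
          wmin_eq_of_subset Set.inter_subset_right hKne hGne hωE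
        rw [if_pos hωE, one_mul]
        simp only [hwm, hset]
      · rw [if_neg hωE, zero_mul, if_neg]
        intro h
        exact hωE ⟨h.1.1, h.2⟩
  · by_cases hnuG : nupi H 𝒜L π σ (E ∩ K) = 0
    · rw [QCon_layer1 hnu, QCon_layer1 hnu, hnuG, zero_div, zero_mul, hset]
      have h0 : nupi H 𝒜L π σ (F ∩ (E ∩ K)) = 0 :=
        nupi_zero_inter hH h𝒜L hF hsub hπ hσ hcont hFm hG hnuG
      rw [h0, zero_div]
    · rw [QCon_layer1 hnu, QCon_layer1 hnu, QCon_layer1 hnuG, hset]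
      field_simp

theorem QCon_prior {B : Set Ω} (hB : B ∈ 𝒜L) :
    QCon H 𝒜L π σ B Set.univ = π B := by
  have h1 : nupi H 𝒜L π σ Set.univ = 1 := nupi_univ hH h𝒜L hF hsub hπ hσ
  rw [QCon_layer1 (by rw [h1]; norm_num), h1, Set.inter_univ, div_one]
  exact nupi_on_AL hH h𝒜L hF hsub hπ hσ hB

theorem QCon_strategy {F : Set Ω} (hFm : F ∈ 𝒜) (i : ι) :
    QCon H 𝒜L π σ F (H i) = σ F i := by
  have hatom : H i ∈ 𝒜L := h𝒜L.2.1 i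
  have hσi : σ (H i) i = 1 := sigma_indicator_one hH hF hsub hσ hatom subset_rfl
  by_cases hnu : nupi H 𝒜L π σ (H i) = 0
  · have hι : ∃ j, σ (H i) j ≠ 0 := ⟨i, by rw [hσi]; norm_num⟩
    have hidx : idx0 σ (H i) hι = i := by
      have hmem := idx0_spec hι
      by_contra hne
      exact hmem (sigma_indicator_zero hH h𝒜L hF hsub hσ hatom
        (fun hss => hne (atom_subset_atom hH hss)))
    rw [QCon_layer2 hnu hι, hidx, hσi, div_one]
    exact sigma_inter_atom hH h𝒜L hF hsub hσ hFm i
  · have hpi : nupi H 𝒜L π σ (H i) = π (H i) := nupi_on_AL hH h𝒜L hF hsub hπ hσ hatom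
    rw [QCon_layer1 hnu, nupi_atom hH h𝒜L hF hsub hπ hσ hFm i, hpi]
    rw [hpi] at hnu
    field_simp

theorem QCon_disint {F K : Set Ω} (hFm : F ∈ 𝒜) (hK : K ∈ 𝒜L) (hKne : K.Nonempty) :
    QCon H 𝒜L π σ F K =
      lowerSInt H 𝒜L (fun i => σ F i) (fun B => QCon H 𝒜L π σ B K) := by
  have hK𝒜 : K ∈ 𝒜 := hsub hK
  by_cases hnu : nupi H 𝒜L π σ K = 0
  · -- layer 2: K ∈ 𝒜L nonempty always has a charged atom
    obtain ⟨i, hi⟩ := exists_atom_subset hH h𝒜L hK hKne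
    have hι : ∃ j, σ K j ≠ 0 :=
      ⟨i, by rw [sigma_indicator_one hH hF hsub hσ hK hi]; norm_num⟩
    set i₀ := idx0 σ K hι with hi₀
    have hσK : σ K i₀ ≠ 0 := idx0_spec hι
    have hi₀K : H i₀ ⊆ K := by
      by_contra hcon
      exact hσK (sigma_indicator_zero hH h𝒜L hF hsub hσ hK hcon)
    have hσK1 : σ K i₀ = 1 := sigma_indicator_one hH hF hsub hσ hK hi₀K
    have hQδ : ∀ B ∈ 𝒜L, QCon H 𝒜L π σ B K = if H i₀ ⊆ B then 1 else 0 := by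
      intro B hB
      rw [QCon_layer2 hnu hι, ← hi₀, hσK1, div_one]
      have hBK : B ∩ K ∈ 𝒜L := Field.inter_mem h𝒜L.1 hB hK
      rw [sigma_indicator hH h𝒜L hF hsub hσ hBK i₀]
      by_cases h : H i₀ ⊆ B
      · rw [if_pos (Set.subset_inter h hi₀K), if_pos h]
      · rw [if_neg (fun hss => h (hss.trans Set.inter_subset_left)), if_neg h]
    have hνfap : IsFAP 𝒜L (fun B => QCon H 𝒜L π σ B K) :=
      fap_restrict hsub (QCon_fap hH h𝒜L hF hsub hπ hσ hcont hK𝒜 hKne)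
    rw [lint_delta hH h𝒜L hνfap (sigma_bound hF hσ hFm) i₀ hQδ]
    rw [QCon_layer2 hnu hι, ← hi₀, hσK1, div_one]
    exact sigma_inter_of_subset hH h𝒜L hF hsub hσ hFm hK hi₀K
  · -- layer 1
    have hπK : π K ≠ 0 := by
      rw [← nupi_on_AL hH h𝒜L hF hsub hπ hσ hK]
      exact hnu
    have hπKpos : 0 < π K := lt_of_le_of_ne (FAP.nonneg h𝒜L.1 hπ hK) (Ne.symm hπK)
    have hcongr : lowerSInt H 𝒜L (fun i => σ F i) (fun B => QCon H 𝒜L π σ B K) =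
        lowerSInt H 𝒜L (fun i => σ F i) (fun B => π (B ∩ K) / π K) := by
      apply lint_congr
      intro B hB
      rw [QCon_layer1 hnu, nupi_on_AL hH h𝒜L hF hsub hπ hσ (Field.inter_mem h𝒜L.1 hB hK),
        nupi_on_AL hH h𝒜L hF hsub hπ hσ hK]
    have hFK : F ∩ K ∈ 𝒜 := Field.inter_mem hF hFm hK𝒜
    have hstep2 : nupi H 𝒜L π σ (F ∩ K) =
        π K * lowerSInt H 𝒜L (fun i => σ (F ∩ K) i) (fun B => π (B ∩ K) / π K) := by
      rw [show nupi H 𝒜L π σ (F ∩ K) =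
        lowerSInt H 𝒜L (fun i => σ (F ∩ K) i) π from rfl]
      apply lint_cond hH h𝒜L hπ (sigma_bound hF hσ hFK) hK hπK
      intro i hiK
      have h0 : σ K i = 0 := sigma_indicator_zero hH h𝒜L hF hsub hσ hK hiK
      exact sigma_zero_inter hH h𝒜L hF hsub hπ hσ hFm hK𝒜 h0
    have hstep3 : lowerSInt H 𝒜L (fun i => σ (F ∩ K) i) (fun B => π (B ∩ K) / π K) =
        lowerSInt H 𝒜L (fun i => σ F i) (fun B => π (B ∩ K) / π K) := by
      apply lint_loc hH h𝒜L (fap_cond h𝒜L.1 hπ hK hπK) (sigma_bound hF hσ hFK)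
        (sigma_bound hF hσ hFm) hK hKne
      · intro i hiK
        exact sigma_inter_of_subset hH h𝒜L hF hsub hσ hFm hK hiK
      · intro C hC hCK
        rw [hCK, FAP.empty_eq h𝒜L.1 hπ, zero_div]
    rw [hcongr, QCon_layer1 hnu, nupi_on_AL hH h𝒜L hF hsub hπ hσ hK, hstep2, hstep3]
    field_simp

/-- The constructed kernel belongs to `𝒬^fd`. -/
theorem QCon_mem : QCon H 𝒜L π σ ∈ QfdSet 𝒜 𝒜L H π σ := by
  refine ⟨⟨?_, ?_, ?_⟩, ⟨?_, ?_⟩, ?_⟩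
  · intro E hE K hK hKne
    exact QCon_C1 E K
  · intro K hK hKne
    exact QCon_fap hH h𝒜L hF hsub hπ hσ hcont hK hKne
  · intro E hE F hFm K hK hKne hGne
    exact QCon_C3 hH h𝒜L hF hsub hπ hσ hcont hE hFm hK hKne hGne
  · intro B hB
    exact QCon_prior hH h𝒜L hF hsub hπ hσ hcont hB
  · intro F hFm i
    exact QCon_strategy hH h𝒜L hF hsub hπ hσ hcont hFm i
  · intro F hFm K hK hKne
    exact QCon_disint hH h𝒜L hF hsub hπ hσ hcont hFm hK hKne

end main

end S6

namespace S6

variable {Ω ι : Type*}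

/-- Extension of a point of the product space to a kernel (0 outside the domain). -/
noncomputable def qof (𝒜 : Set (Set Ω))
    (p : {q : Set Ω × Set Ω // q.1 ∈ 𝒜 ∧ q.2 ∈ 𝒜 ∧ q.2.Nonempty} → ℝ)
    (F K : Set Ω) : ℝ :=
  if h : F ∈ 𝒜 ∧ K ∈ 𝒜 ∧ K.Nonempty then p ⟨(F, K), h⟩ else 0

theorem qof_pos (𝒜 : Set (Set Ω))
    (p : {q : Set Ω × Set Ω // q.1 ∈ 𝒜 ∧ q.2 ∈ 𝒜 ∧ q.2.Nonempty} → ℝ)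
    {F K : Set Ω} (h : F ∈ 𝒜 ∧ K ∈ 𝒜 ∧ K.Nonempty) :
    qof 𝒜 p F K = p ⟨(F, K), h⟩ := dif_pos h

theorem qof_restrict (𝒜 : Set (Set Ω)) (Q : Set Ω → Set Ω → ℝ) {F K : Set Ω}
    (h : F ∈ 𝒜 ∧ K ∈ 𝒜 ∧ K.Nonempty) :
    qof 𝒜 (restrictPairs 𝒜 𝒜 Q) F K = Q F K := by
  rw [qof_pos 𝒜 _ h]
  rfl

theorem restrict_qof (𝒜 : Set (Set Ω))
    (p : {q : Set Ω × Set Ω // q.1 ∈ 𝒜 ∧ q.2 ∈ 𝒜 ∧ q.2.Nonempty} → ℝ) :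
    restrictPairs 𝒜 𝒜 (fun F K => qof 𝒜 p F K) = p := by
  funext d
  obtain ⟨⟨F, K⟩, h⟩ := d
  show qof 𝒜 p F K = _
  rw [qof_pos 𝒜 p h]

theorem continuous_qof (𝒜 : Set (Set Ω)) (F K : Set Ω) :
    Continuous fun p : {q : Set Ω × Set Ω // q.1 ∈ 𝒜 ∧ q.2 ∈ 𝒜 ∧ q.2.Nonempty} → ℝ =>
      qof 𝒜 p F K := by
  unfold qof
  by_cases h : F ∈ 𝒜 ∧ K ∈ 𝒜 ∧ K.Nonempty
  · simp only [dif_pos h]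
    exact continuous_apply _
  · simp only [dif_neg h]
    exact continuous_const

theorem continuous_lowSum_qof (𝒜 : Set (Set Ω)) (H : ι → Set Ω) (X : ι → ℝ)
    (K : Set Ω) (T : Finset (Set Ω)) :
    Continuous fun p : {q : Set Ω × Set Ω // q.1 ∈ 𝒜 ∧ q.2 ∈ 𝒜 ∧ q.2.Nonempty} → ℝ =>
      lowSum H X (fun B => qof 𝒜 p B K) T := by
  unfold lowSum
  apply continuous_finset_sum
  intro A _
  exact continuous_const.mul (continuous_qof 𝒜 A K)

theorem continuous_upSum_qof (𝒜 : Set (Set Ω)) (H : ι → Set Ω) (X : ι → ℝ)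
    (K : Set Ω) (T : Finset (Set Ω)) :
    Continuous fun p : {q : Set Ω × Set Ω // q.1 ∈ 𝒜 ∧ q.2 ∈ 𝒜 ∧ q.2.Nonempty} → ℝ =>
      upSum H X (fun B => qof 𝒜 p B K) T := by
  unfold upSum
  apply continuous_finset_sum
  intro A _
  exact continuous_const.mul (continuous_qof 𝒜 A K)

theorem upSum_congr {H : ι → Set Ω} {𝒜L : Set (Set Ω)} {X : ι → ℝ} {μ μ' : Set Ω → ℝ}
    (h : ∀ B ∈ 𝒜L, μ B = μ' B) {T : Finset (Set Ω)} (hT : IsFinPart 𝒜L T) :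
    upSum H X μ T = upSum H X μ' T := by
  unfold upSum
  apply Finset.sum_congr rfl
  intro A hA
  rw [h A (hT.1 hA)]

/-- The closed constraint set describing the image of `𝒬^fd`. -/
def CSet (𝒜 𝒜L : Set (Set Ω)) (H : ι → Set Ω) (π : Set Ω → ℝ) (σ : Set Ω → ι → ℝ) :
    Set ({q : Set Ω × Set Ω // q.1 ∈ 𝒜 ∧ q.2 ∈ 𝒜 ∧ q.2.Nonempty} → ℝ) :=
  {p | (∀ d, p d ∈ Set.Icc (0 : ℝ) 1) ∧
    (∀ E K : Set Ω, E ∈ 𝒜 → K ∈ 𝒜 → K.Nonempty →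
      qof 𝒜 p E K = qof 𝒜 p (E ∩ K) K) ∧
    (∀ K : Set Ω, K ∈ 𝒜 → K.Nonempty → qof 𝒜 p Set.univ K = 1) ∧
    (∀ E F K : Set Ω, E ∈ 𝒜 → F ∈ 𝒜 → K ∈ 𝒜 → K.Nonempty → Disjoint E F →
      qof 𝒜 p (E ∪ F) K = qof 𝒜 p E K + qof 𝒜 p F K) ∧
    (∀ E F K : Set Ω, E ∈ 𝒜 → F ∈ 𝒜 → K ∈ 𝒜 → K.Nonempty → (E ∩ K).Nonempty →
      qof 𝒜 p (E ∩ F) K = qof 𝒜 p E K * qof 𝒜 p F (E ∩ K)) ∧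
    (∀ B : Set Ω, B ∈ 𝒜L → qof 𝒜 p B Set.univ = π B) ∧
    (∀ F : Set Ω, F ∈ 𝒜 → ∀ i : ι, qof 𝒜 p F (H i) = σ F i) ∧
    (∀ F K : Set Ω, F ∈ 𝒜 → K ∈ 𝒜L → K.Nonempty → ∀ T : Finset (Set Ω),
      IsFinPart 𝒜L T →
      lowSum H (fun i => σ F i) (fun B => qof 𝒜 p B K) T ≤ qof 𝒜 p F K ∧
      qof 𝒜 p F K ≤ upSum H (fun i => σ F i) (fun B => qof 𝒜 p B K) T)}

theorem CSet_closed (𝒜 𝒜L : Set (Set Ω)) (H : ι → Set Ω) (π : Set Ω → ℝ)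
    (σ : Set Ω → ι → ℝ) : IsClosed (CSet 𝒜 𝒜L H π σ) := by
  unfold CSet
  simp only [Set.setOf_and]
  refine IsClosed.inter ?_ (IsClosed.inter ?_ (IsClosed.inter ?_ (IsClosed.inter ?_
    (IsClosed.inter ?_ (IsClosed.inter ?_ (IsClosed.inter ?_ ?_))))))
  · have : {p : {q : Set Ω × Set Ω // q.1 ∈ 𝒜 ∧ q.2 ∈ 𝒜 ∧ q.2.Nonempty} → ℝ |
        ∀ d, p d ∈ Set.Icc (0 : ℝ) 1} =
        Set.pi Set.univ (fun _ => Set.Icc (0 : ℝ) 1) := by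
      ext p
      rw [Set.mem_setOf_eq, Set.mem_univ_pi]
    rw [this]
    exact isClosed_set_pi fun _ _ => isClosed_Icc
  · simp only [Set.setOf_forall]
    exact isClosed_iInter fun E => isClosed_iInter fun K => isClosed_iInter fun _ =>
      isClosed_iInter fun _ => isClosed_iInter fun _ =>
      isClosed_eq (continuous_qof 𝒜 E K) (continuous_qof 𝒜 (E ∩ K) K)
  · simp only [Set.setOf_forall]
    exact isClosed_iInter fun K => isClosed_iInter fun _ => isClosed_iInter fun _ =>
      isClosed_eq (continuous_qof 𝒜 Set.univ K) continuous_const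
  · simp only [Set.setOf_forall]
    exact isClosed_iInter fun E => isClosed_iInter fun F => isClosed_iInter fun K =>
      isClosed_iInter fun _ => isClosed_iInter fun _ => isClosed_iInter fun _ =>
      isClosed_iInter fun _ => isClosed_iInter fun _ =>
      isClosed_eq (continuous_qof 𝒜 (E ∪ F) K)
        ((continuous_qof 𝒜 E K).add (continuous_qof 𝒜 F K))
  · simp only [Set.setOf_forall]
    exact isClosed_iInter fun E => isClosed_iInter fun F => isClosed_iInter fun K =>
      isClosed_iInter fun _ => isClosed_iInter fun _ => isClosed_iInter fun _ =>
      isClosed_iInter fun _ => isClosed_iInter fun _ =>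
      isClosed_eq (continuous_qof 𝒜 (E ∩ F) K)
        ((continuous_qof 𝒜 E K).mul (continuous_qof 𝒜 F (E ∩ K)))
  · simp only [Set.setOf_forall]
    exact isClosed_iInter fun B => isClosed_iInter fun _ =>
      isClosed_eq (continuous_qof 𝒜 B Set.univ) continuous_const
  · simp only [Set.setOf_forall]
    exact isClosed_iInter fun F => isClosed_iInter fun _ => isClosed_iInter fun i =>
      isClosed_eq (continuous_qof 𝒜 F (H i)) continuous_const
  · simp only [Set.setOf_forall, Set.setOf_and]
    exact isClosed_iInter fun F => isClosed_iInter fun K => isClosed_iInter fun _ =>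
      isClosed_iInter fun _ => isClosed_iInter fun _ => isClosed_iInter fun T =>
      isClosed_iInter fun _ =>
      IsClosed.inter
        (isClosed_le (continuous_lowSum_qof 𝒜 H _ K T) (continuous_qof 𝒜 F K))
        (isClosed_le (continuous_qof 𝒜 F K) (continuous_upSum_qof 𝒜 H _ K T))

theorem CSet_compact (𝒜 𝒜L : Set (Set Ω)) (H : ι → Set Ω) (π : Set Ω → ℝ)
    (σ : Set Ω → ι → ℝ) : IsCompact (CSet 𝒜 𝒜L H π σ) := by
  apply IsCompact.of_isClosed_subset
    (isCompact_univ_pi fun _ : {q : Set Ω × Set Ω // q.1 ∈ 𝒜 ∧ q.2 ∈ 𝒜 ∧ q.2.Nonempty}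
      => isCompact_Icc (a := (0 : ℝ)) (b := 1))
    (CSet_closed 𝒜 𝒜L H π σ)
  intro p hp
  rw [Set.mem_univ_pi]
  exact fun d => hp.1 d

end S6

namespace S6

variable {Ω ι : Type*} {H : ι → Set Ω} {𝒜L 𝒜 : Set (Set Ω)} {π : Set Ω → ℝ}
  {σ : Set Ω → ι → ℝ}

theorem restrict_mem_CSet [Nonempty Ω] (hH : IsPartition H) (h𝒜L : IsFieldOver H 𝒜L)
    (hFA : IsSetField 𝒜) (hsub : 𝒜L ⊆ 𝒜) (hσ : IsStrategy 𝒜 H σ)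
    {Q : Set Ω → Set Ω → ℝ} (hQ : Q ∈ QfdSet 𝒜 𝒜L H π σ) :
    restrictPairs 𝒜 𝒜 Q ∈ CSet 𝒜 𝒜L H π σ := by
  obtain ⟨⟨hC1, hC2, hC3⟩, ⟨hprior, hstrat⟩, hdis⟩ := hQ
  refine ⟨?_, ?_, ?_, ?_, ?_, ?_, ?_, ?_⟩
  · rintro ⟨⟨F, K⟩, hF, hK, hne⟩
    rw [Set.mem_Icc]
    exact (hC2 K hK hne).1 F hF
  · intro E K hE hK hne
    rw [qof_restrict 𝒜 Q ⟨hE, hK, hne⟩,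
      qof_restrict 𝒜 Q ⟨Field.inter_mem hFA hE hK, hK, hne⟩]
    exact hC1 E hE K hK hne
  · intro K hK hne
    rw [qof_restrict 𝒜 Q ⟨Field.univ_mem hFA, hK, hne⟩]
    exact (hC2 K hK hne).2.1
  · intro E F K hE hF hK hne hd
    rw [qof_restrict 𝒜 Q ⟨Field.union_mem hFA hE hF, hK, hne⟩,
      qof_restrict 𝒜 Q ⟨hE, hK, hne⟩, qof_restrict 𝒜 Q ⟨hF, hK, hne⟩]
    exact (hC2 K hK hne).2.2 E hE F hF hd
  · intro E F K hE hF hK hne hGne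
    rw [qof_restrict 𝒜 Q ⟨Field.inter_mem hFA hE hF, hK, hne⟩,
      qof_restrict 𝒜 Q ⟨hE, hK, hne⟩,
      qof_restrict 𝒜 Q ⟨hF, Field.inter_mem hFA hE hK, hGne⟩]
    exact hC3 E hE F hF K hK hne hGne
  · intro B hB
    rw [qof_restrict 𝒜 Q ⟨hsub hB, Field.univ_mem hFA, Set.univ_nonempty⟩]
    exact hprior B hB
  · intro F hF i
    rw [qof_restrict 𝒜 Q ⟨hF, hsub (h𝒜L.2.1 i), hH.1 i⟩]
    exact hstrat F hF i
  · intro F K hF hK hne T hT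
    have hμQ : IsFAP 𝒜L (fun B => Q B K) := fap_restrict hsub (hC2 K (hsub hK) hne)
    have hμcongr : ∀ B ∈ 𝒜L, qof 𝒜 (restrictPairs 𝒜 𝒜 Q) B K = Q B K := fun B hB =>
      qof_restrict 𝒜 Q ⟨hsub hB, hsub hK, hne⟩
    have hM := sigma_bound hFA hσ hF
    constructor
    · rw [lowSum_congr hμcongr hT, qof_restrict 𝒜 Q ⟨hF, hsub hK, hne⟩,
        hdis F hF K hK hne]
      exact lowSum_le_lint hH h𝒜L hμQ hM hT
    · rw [upSum_congr hμcongr hT, qof_restrict 𝒜 Q ⟨hF, hsub hK, hne⟩,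
        hdis F hF K hK hne]
      exact lint_le_upSum hH h𝒜L hμQ hM hT

theorem mem_image_of_mem_CSet [Nonempty Ω] (hH : IsPartition H)
    (h𝒜L : IsFieldOver H 𝒜L) (hFA : IsSetField 𝒜) (hsub : 𝒜L ⊆ 𝒜)
    (hσ : IsStrategy 𝒜 H σ)
    (hcont : ∀ F ∈ 𝒜, ALContinuous H 𝒜L fun i => σ F i)
    {p : {q : Set Ω × Set Ω // q.1 ∈ 𝒜 ∧ q.2 ∈ 𝒜 ∧ q.2.Nonempty} → ℝ}
    (hp : p ∈ CSet 𝒜 𝒜L H π σ) :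
    p ∈ restrictPairs 𝒜 𝒜 '' QfdSet 𝒜 𝒜L H π σ := by
  obtain ⟨h0, h1, h2, h3, h4, h5, h6, h7⟩ := hp
  refine ⟨fun F K => qof 𝒜 p F K, ?_, restrict_qof 𝒜 p⟩
  have hfap : ∀ K, K ∈ 𝒜 → K.Nonempty → IsFAP 𝒜 (fun E => qof 𝒜 p E K) := by
    intro K hK hne
    refine ⟨?_, h2 K hK hne, fun A hA B hB hd => h3 A B K hA hB hK hne hd⟩
    intro A hA
    have hicc := h0 ⟨(A, K), hA, hK, hne⟩
    rw [Set.mem_Icc] at hicc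
    dsimp only
    rw [qof_pos 𝒜 p ⟨hA, hK, hne⟩]
    exact hicc
  refine ⟨⟨?_, ?_, ?_⟩, ⟨?_, ?_⟩, ?_⟩
  · intro E hE K hK hne
    exact h1 E K hE hK hne
  · intro K hK hne
    exact hfap K hK hne
  · intro E hE F hF K hK hne hGne
    exact h4 E F K hE hF hK hne hGne
  · intro B hB
    exact h5 B hB
  · intro F hF i
    exact h6 F hF i
  · intro F hF K hK hne
    have hμ : IsFAP 𝒜L (fun B => qof 𝒜 p B K) :=
      fap_restrict hsub (hfap K (hsub hK) hne)
    have hM := sigma_bound hFA hσ hF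
    apply le_antisymm
    · calc qof 𝒜 p F K
          ≤ upperSInt H 𝒜L (fun i => σ F i) (fun B => qof 𝒜 p B K) := by
            rw [upperSInt_eq_sInf]
            apply le_csInf (usSet_nonempty h𝒜L)
            rintro x ⟨T, hT, rfl⟩
            exact (h7 F K hF hK hne T hT).2
        _ ≤ lowerSInt H 𝒜L (fun i => σ F i) (fun B => qof 𝒜 p B K) :=
            uint_le_lint hH h𝒜L hμ (hcont F hF)
    · rw [lowerSInt_eq_sSup]
      apply csSup_le (lsSet_nonempty h𝒜L)
      rintro x ⟨T, hT, rfl⟩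
      exact (h7 F K hF hK hne T hT).1

end S6
/-- `𝒬^fd` is a nonempty compact subset of `[0,1]^(𝒜 × 𝒜⁰)` with the
product topology of pointwise convergence. -/
theorem statement6 {Ω ι κ : Type*} [Nonempty Ω] (H : ι → Set Ω) (E : κ → Set Ω)
    (𝒜L 𝒜E 𝒜 : Set (Set Ω))
    (hH : IsPartition H) (hE : IsPartition E)
    (h𝒜L : IsFieldOver H 𝒜L) (h𝒜E : IsFieldOver E 𝒜E)
    (h𝒜 : IsJointField H E 𝒜L 𝒜E 𝒜)
    (π : Set Ω → ℝ) (hπ : IsFAP 𝒜L π)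
    (σ : Set Ω → ι → ℝ) (hσ : IsStrategy 𝒜 H σ)
    (hcont : ∀ F ∈ 𝒜, ALContinuous H 𝒜L fun i => σ F i) :
    (restrictPairs 𝒜 𝒜 '' QfdSet 𝒜 𝒜L H π σ).Nonempty ∧
    IsCompact (restrictPairs 𝒜 𝒜 '' QfdSet 𝒜 𝒜L H π σ) := by
  classical
  have hFA : IsSetField 𝒜 := h𝒜.1
  have hsub : 𝒜L ⊆ 𝒜 := h𝒜.2.1
  have himg : restrictPairs 𝒜 𝒜 '' QfdSet 𝒜 𝒜L H π σ = S6.CSet 𝒜 𝒜L H π σ := by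
    apply Set.eq_of_subset_of_subset
    · rintro p ⟨Q, hQ, rfl⟩
      exact S6.restrict_mem_CSet hH h𝒜L hFA hsub hσ hQ
    · intro p hp
      exact S6.mem_image_of_mem_CSet hH h𝒜L hFA hsub hσ hcont hp
  constructor
  · exact ⟨restrictPairs 𝒜 𝒜 (S6.QCon H 𝒜L π σ), S6.QCon H 𝒜L π σ,
      S6.QCon_mem hH h𝒜L hFA hsub hπ hσ hcont, rfl⟩
  · rw [himg]
    exact S6.CSet_compact 𝒜 𝒜L H π σ
end

section
/- The set {Q̃|_{𝒜_ℒ×𝒜_ℒ⁰} : Q̃ ∈ 𝒫} of restrictions to 𝒜_ℒ × 𝒜_ℒ⁰ of full conditional probabilities on 𝒜 extending {π, σ} coincides with the set of all full conditional probabilities π̃ on 𝒜_ℒ with π̃(B|Ω) = π(B) for every B ∈ 𝒜_ℒ; in particular this set does not depend on the strategy σ. -/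
open Set

open scoped Classical

variable {Ω : Type*}

/-! ### Auxiliary machinery for Statement 19 -/

namespace S19

variable {Ω : Type*}

lemma field_empty {𝒜 : Set (Set Ω)} (h : IsSetField 𝒜) : (∅ : Set Ω) ∈ 𝒜 := by
  have := h.2.1 _ h.1
  simpa using this

lemma field_inter {𝒜 : Set (Set Ω)} (h : IsSetField 𝒜) {A B : Set Ω}
    (hA : A ∈ 𝒜) (hB : B ∈ 𝒜) : A ∩ B ∈ 𝒜 := by
  have : A ∩ B = (Aᶜ ∪ Bᶜ)ᶜ := by simp [Set.compl_union]
  rw [this]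
  exact h.2.1 _ (h.2.2 _ (h.2.1 _ hA) _ (h.2.1 _ hB))

lemma field_diff {𝒜 : Set (Set Ω)} (h : IsSetField 𝒜) {A B : Set Ω}
    (hA : A ∈ 𝒜) (hB : B ∈ 𝒜) : A \ B ∈ 𝒜 :=
  field_inter h hA (h.2.1 _ hB)

lemma field_biUnion {𝒜 : Set (Set Ω)} (h𝒜 : IsSetField 𝒜) {α : Type*}
    (t : Finset α) (f : α → Set Ω) (hf : ∀ a ∈ t, f a ∈ 𝒜) :
    (⋃ a ∈ t, f a) ∈ 𝒜 := by
  classical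
  induction t using Finset.induction_on with
  | empty => simpa using field_empty h𝒜
  | @insert c tt hc ihh =>
    rw [Finset.set_biUnion_insert]
    exact h𝒜.2.2 _ (hf c (Finset.mem_insert_self _ _))
      _ (ihh (fun x hx => hf x (Finset.mem_insert_of_mem hx)))

lemma fap_empty {𝒜 : Set (Set Ω)} {P : Set Ω → ℝ} (h𝒜 : IsSetField 𝒜)
    (h : IsFAP 𝒜 P) : P ∅ = 0 := by
  have := h.2.2 ∅ (field_empty h𝒜) ∅ (field_empty h𝒜) (by simp)
  simp at this
  linarith

lemma fap_mono {𝒜 : Set (Set Ω)} {P : Set Ω → ℝ} (h𝒜 : IsSetField 𝒜)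
    (h : IsFAP 𝒜 P) {A B : Set Ω} (hA : A ∈ 𝒜) (hB : B ∈ 𝒜) (hAB : A ⊆ B) :
    P A ≤ P B := by
  have hd : B \ A ∈ 𝒜 := field_diff h𝒜 hB hA
  have hu : A ∪ B \ A = B := Set.union_diff_cancel hAB
  have := h.2.2 A hA (B \ A) hd Set.disjoint_sdiff_right
  rw [hu] at this
  have h0 := (h.1 _ hd).1
  linarith

lemma fap_compl {𝒜 : Set (Set Ω)} {P : Set Ω → ℝ} (h𝒜 : IsSetField 𝒜)
    (h : IsFAP 𝒜 P) {A : Set Ω} (hA : A ∈ 𝒜) : P Aᶜ = 1 - P A := by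
  have := h.2.2 A hA Aᶜ (h𝒜.2.1 _ hA) disjoint_compl_right
  rw [Set.union_compl_self] at this
  rw [h.2.1] at this
  linarith

/-- Finite additivity over a `Finset` of pairwise disjoint sets. -/
lemma fap_biUnion {𝒜 : Set (Set Ω)} {P : Set Ω → ℝ} (h𝒜 : IsSetField 𝒜)
    (h : IsFAP 𝒜 P) {α : Type*} (t : Finset α) (f : α → Set Ω)
    (hf : ∀ a ∈ t, f a ∈ 𝒜)
    (hd : ∀ a ∈ t, ∀ b ∈ t, a ≠ b → Disjoint (f a) (f b)) :
    P (⋃ a ∈ t, f a) = ∑ a ∈ t, P (f a) := by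
  classical
  induction t using Finset.induction_on with
  | empty => simpa using fap_empty h𝒜 h
  | @insert a t ha ih =>
    have hmem : ∀ x ∈ t, f x ∈ 𝒜 := fun x hx => hf x (Finset.mem_insert_of_mem hx)
    have hUt : (⋃ b ∈ t, f b) ∈ 𝒜 := field_biUnion h𝒜 t f hmem
    have hdisj : Disjoint (f a) (⋃ b ∈ t, f b) := by
      refine Set.disjoint_iUnion₂_right.mpr fun b hb =>
        hd a (Finset.mem_insert_self _ _) b (Finset.mem_insert_of_mem hb) ?_
      rintro rfl; exact ha hb
    rw [Finset.set_biUnion_insert, h.2.2 _ (hf a (Finset.mem_insert_self _ _)) _ hUt hdisj,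
      Finset.sum_insert ha, ih hmem
        (fun x hx y hy => hd x (Finset.mem_insert_of_mem hx) y (Finset.mem_insert_of_mem hy))]

end S19

namespace S19

variable {Ω : Type*}

/-- The cell (atom) of the finite collection `sL` with membership pattern `u`. -/
def cell (sL u : Finset (Set Ω)) : Set Ω := {ω | ∀ B ∈ sL, (ω ∈ B ↔ B ∈ u)}

lemma cell_subset {sL u : Finset (Set Ω)} {B : Set Ω} (hB : B ∈ sL) (hBu : B ∈ u) :
    cell sL u ⊆ B := fun ω hω => (hω B hB).2 hBu

lemma cell_subset_compl {sL u : Finset (Set Ω)} {B : Set Ω} (hB : B ∈ sL) (hBu : B ∉ u) :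
    cell sL u ⊆ Bᶜ := fun ω hω hωB => hBu ((hω B hB).1 hωB)

lemma mem_cell_pattern {sL : Finset (Set Ω)} (ω : Ω) :
    ω ∈ cell sL (sL.filter (fun B => ω ∈ B)) := by
  intro B hB
  simp [Finset.mem_filter, hB]

lemma cell_pattern_eq {sL u v : Finset (Set Ω)} (hu : u ⊆ sL) (hv : v ⊆ sL) {ω : Ω}
    (hωu : ω ∈ cell sL u) (hωv : ω ∈ cell sL v) : u = v := by
  ext B
  constructor
  · intro hBu
    exact (hωv B (hu hBu)).1 ((hωu B (hu hBu)).2 hBu)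
  · intro hBv
    exact (hωu B (hv hBv)).1 ((hωv B (hv hBv)).2 hBv)

lemma cell_disjoint {sL u v : Finset (Set Ω)} (hu : u ⊆ sL) (hv : v ⊆ sL) (huv : u ≠ v) :
    Disjoint (cell sL u) (cell sL v) := by
  rw [Set.disjoint_left]
  intro ω hωu hωv
  exact huv (cell_pattern_eq hu hv hωu hωv)

lemma field_biInter {𝒜 : Set (Set Ω)} (h𝒜 : IsSetField 𝒜) {α : Type*}
    (t : Finset α) (f : α → Set Ω) (hf : ∀ a ∈ t, f a ∈ 𝒜) :
    (⋂ a ∈ t, f a) ∈ 𝒜 := by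
  classical
  induction t using Finset.induction_on with
  | empty => simpa using h𝒜.1
  | @insert c tt hc ihh =>
    rw [Finset.set_biInter_insert]
    exact field_inter h𝒜 (hf c (Finset.mem_insert_self _ _))
      (ihh (fun x hx => hf x (Finset.mem_insert_of_mem hx)))

lemma cell_eq_biInter (sL u : Finset (Set Ω)) :
    cell sL u = ⋂ B ∈ sL, (if B ∈ u then B else Bᶜ) := by
  ext ω
  simp only [cell, Set.mem_setOf_eq, Set.mem_iInter]
  constructor
  · intro h B hB
    by_cases hBu : B ∈ u <;> simp [hBu, h B hB]
  · intro h B hB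
    have := h B hB
    by_cases hBu : B ∈ u <;> simp [hBu] at this <;> simp [hBu, this]

lemma cell_mem_field {𝒜L : Set (Set Ω)} (h𝒜L : IsSetField 𝒜L) {sL : Finset (Set Ω)}
    (hsL : ↑sL ⊆ 𝒜L) (u : Finset (Set Ω)) : cell sL u ∈ 𝒜L := by
  rw [cell_eq_biInter]
  refine field_biInter h𝒜L _ _ fun B hB => ?_
  by_cases hBu : B ∈ u <;> simp [hBu]
  · exact hsL hB
  · exact h𝒜L.2.1 _ (hsL hB)

/-- The nonempty cells of `sL`. -/
noncomputable def atoms0 (sL : Finset (Set Ω)) : Finset (Finset (Set Ω)) :=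
  sL.powerset.filter fun u => (cell sL u).Nonempty

lemma atoms0_subset {sL : Finset (Set Ω)} {u : Finset (Set Ω)} (hu : u ∈ atoms0 sL) :
    u ⊆ sL := Finset.mem_powerset.1 (Finset.mem_filter.1 hu).1

lemma atoms0_nonempty_cell {sL : Finset (Set Ω)} {u : Finset (Set Ω)} (hu : u ∈ atoms0 sL) :
    (cell sL u).Nonempty := (Finset.mem_filter.1 hu).2

lemma exists_atom_mem {sL : Finset (Set Ω)} (ω : Ω) :
    ∃ u ∈ atoms0 sL, ω ∈ cell sL u := by
  refine ⟨sL.filter (fun B => ω ∈ B), ?_, mem_cell_pattern ω⟩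
  exact Finset.mem_filter.2 ⟨Finset.mem_powerset.2 (Finset.filter_subset _ _),
    ⟨ω, mem_cell_pattern ω⟩⟩

lemma biUnion_atoms0 (sL : Finset (Set Ω)) : (⋃ u ∈ atoms0 sL, cell sL u) = Set.univ := by
  refine Set.eq_univ_of_forall fun ω => ?_
  obtain ⟨u, hu, hω⟩ := exists_atom_mem (sL := sL) ω
  exact Set.mem_biUnion hu hω

/-- Dichotomy: a nonempty cell is contained in, or disjoint from, any union of cells. -/
lemma cell_subset_or_disjoint {sL : Finset (Set Ω)} {u : Finset (Set Ω)}
    (hu : u ∈ atoms0 sL) (V : Finset (Finset (Set Ω))) (hV : V ⊆ atoms0 sL) :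
    cell sL u ⊆ (⋃ v ∈ V, cell sL v) ∨ cell sL u ∩ (⋃ v ∈ V, cell sL v) = ∅ := by
  by_cases h : cell sL u ∩ (⋃ v ∈ V, cell sL v) = ∅
  · exact Or.inr h
  · left
    obtain ⟨ω, hωu, hωV⟩ := Set.nonempty_iff_ne_empty.2 h
    obtain ⟨v, hv, hωv⟩ := Set.mem_iUnion₂.1 hωV
    have : u = v := cell_pattern_eq (atoms0_subset hu) (atoms0_subset (hV hv)) hωu hωv
    subst this
    exact fun x hx => Set.mem_biUnion hv hx

lemma sL_mem_eq_biUnion {sL : Finset (Set Ω)} {B : Set Ω} (hB : B ∈ sL) :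
    B = ⋃ u ∈ (atoms0 sL).filter (fun u => B ∈ u), cell sL u := by
  apply Set.eq_of_subset_of_subset
  · intro ω hω
    obtain ⟨u, hu, hωu⟩ := exists_atom_mem (sL := sL) ω
    have hBu : B ∈ u := (hωu B hB).1 hω
    exact Set.mem_biUnion (Finset.mem_filter.2 ⟨hu, hBu⟩) hωu
  · refine Set.iUnion₂_subset fun u hu => ?_
    exact cell_subset hB (Finset.mem_filter.1 hu).2

lemma sL_inter_eq_biUnion {sL : Finset (Set Ω)} {B K : Set Ω} (hB : B ∈ sL) (hK : K ∈ sL) :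
    B ∩ K = ⋃ u ∈ (atoms0 sL).filter (fun u => B ∈ u ∧ K ∈ u), cell sL u := by
  apply Set.eq_of_subset_of_subset
  · rintro ω ⟨hωB, hωK⟩
    obtain ⟨u, hu, hωu⟩ := exists_atom_mem (sL := sL) ω
    exact Set.mem_biUnion
      (Finset.mem_filter.2 ⟨hu, (hωu B hB).1 hωB, (hωu K hK).1 hωK⟩) hωu
  · refine Set.iUnion₂_subset fun u hu => ?_
    obtain ⟨_, hBu, hKu⟩ := Finset.mem_filter.1 hu
    exact Set.subset_inter (cell_subset hB hBu) (cell_subset hK hKu)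

end S19

namespace S19

variable {Ω : Type*}

/-- The decreasing chain of "null parts" for `π'` on the cells of `sL`. -/
noncomputable def Cch (π' : Set Ω → Set Ω → ℝ) (sL : Finset (Set Ω)) : ℕ → Set Ω
  | 0 => Set.univ
  | k + 1 => ⋃ u ∈ (atoms0 sL).filter
      (fun u => cell sL u ⊆ Cch π' sL k ∧ π' (cell sL u) (Cch π' sL k) = 0), cell sL u

/-- The cells contained in `Cch k`. -/
noncomputable def Tch (π' : Set Ω → Set Ω → ℝ) (sL : Finset (Set Ω)) (k : ℕ) :
    Finset (Finset (Set Ω)) :=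
  (atoms0 sL).filter fun u => cell sL u ⊆ Cch π' sL k

section Chain

variable {𝒜L : Set (Set Ω)} {sL : Finset (Set Ω)} {π' : Set Ω → Set Ω → ℝ}

lemma Cch_mem (h𝒜L : IsSetField 𝒜L) (hsL : ↑sL ⊆ 𝒜L) (k : ℕ) :
    Cch π' sL k ∈ 𝒜L := by
  cases k with
  | zero => exact h𝒜L.1
  | succ k => exact field_biUnion h𝒜L _ _ fun u _ => cell_mem_field h𝒜L hsL u

lemma Cch_succ_subset (k : ℕ) : Cch π' sL (k + 1) ⊆ Cch π' sL k := by
  refine Set.iUnion₂_subset fun u hu => ?_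
  exact (Finset.mem_filter.1 hu).2.1

lemma Cch_anti {k l : ℕ} (h : k ≤ l) : Cch π' sL l ⊆ Cch π' sL k := by
  induction l with
  | zero => simp_all
  | succ l ih =>
    rcases Nat.lt_or_ge k (l + 1) with h' | h'
    · exact (Cch_succ_subset l).trans (ih (Nat.lt_succ_iff.1 h'))
    · have : k = l + 1 := le_antisymm h h'
      subst this; rfl

lemma Tch_succ_eq (k : ℕ) :
    Tch π' sL (k + 1) = (atoms0 sL).filter
      (fun u => cell sL u ⊆ Cch π' sL k ∧ π' (cell sL u) (Cch π' sL k) = 0) := by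
  ext u
  simp only [Tch, Finset.mem_filter]
  constructor
  · rintro ⟨hu, hsub⟩
    refine ⟨hu, ?_⟩
    obtain ⟨ω, hω⟩ := atoms0_nonempty_cell hu
    have hωC : ω ∈ Cch π' sL (k + 1) := hsub hω
    obtain ⟨v, hv, hωv⟩ := Set.mem_iUnion₂.1 hωC
    have hveq : u = v := cell_pattern_eq (atoms0_subset hu)
      (atoms0_subset (Finset.mem_filter.1 hv).1) hω hωv
    subst hveq
    exact (Finset.mem_filter.1 hv).2
  · rintro ⟨hu, hcond⟩
    refine ⟨hu, fun x hx => ?_⟩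
    exact Set.mem_biUnion (Finset.mem_filter.2 ⟨hu, hcond⟩) hx

lemma Cch_eq_T (k : ℕ) : Cch π' sL k = ⋃ u ∈ Tch π' sL k, cell sL u := by
  cases k with
  | zero =>
    have : Tch π' sL 0 = atoms0 sL := by
      ext u; simp [Tch, Cch]
    rw [this, biUnion_atoms0]; rfl
  | succ k =>
    rw [Tch_succ_eq]; rfl

lemma Tch_subset_atoms0 (k : ℕ) : Tch π' sL k ⊆ atoms0 sL := Finset.filter_subset _ _

lemma sum_Tch (h𝒜L : IsSetField 𝒜L) (hsL : ↑sL ⊆ 𝒜L) (hπ' : IsFCP 𝒜L π')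
    (k : ℕ) (hk : (Cch π' sL k).Nonempty) :
    ∑ u ∈ Tch π' sL k, π' (cell sL u) (Cch π' sL k) = 1 := by
  have hCk : Cch π' sL k ∈ 𝒜L := Cch_mem h𝒜L hsL k
  have hFAP : IsFAP 𝒜L fun E => π' E (Cch π' sL k) := hπ'.2.1 _ hCk hk
  have hsum := fap_biUnion h𝒜L hFAP (Tch π' sL k) (cell sL)
    (fun u _ => cell_mem_field h𝒜L hsL u)
    (fun u hu v hv huv => cell_disjoint (atoms0_subset (Tch_subset_atoms0 k hu))
      (atoms0_subset (Tch_subset_atoms0 k hv)) huv)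
  rw [← Cch_eq_T] at hsum
  rw [← hsum]
  have h1 : π' Set.univ (Cch π' sL k) = 1 := hFAP.2.1
  have hC1 := hπ'.1 Set.univ h𝒜L.1 _ hCk hk
  rw [Set.univ_inter] at hC1
  rw [← hC1, h1]

lemma Tch_ssubset (h𝒜L : IsSetField 𝒜L) (hsL : ↑sL ⊆ 𝒜L) (hπ' : IsFCP 𝒜L π')
    (k : ℕ) (hk : (Cch π' sL k).Nonempty) : Tch π' sL (k + 1) ⊂ Tch π' sL k := by
  have hsub : Tch π' sL (k + 1) ⊆ Tch π' sL k := by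
    intro u hu
    obtain ⟨hu0, hsubC⟩ := Finset.mem_filter.1 hu
    exact Finset.mem_filter.2 ⟨hu0, hsubC.trans (Cch_succ_subset k)⟩
  refine Finset.ssubset_iff_of_subset hsub |>.2 ?_
  have hs := sum_Tch h𝒜L hsL hπ' k hk
  have : ∃ u ∈ Tch π' sL k, π' (cell sL u) (Cch π' sL k) ≠ 0 := by
    by_contra h
    push_neg at h
    rw [Finset.sum_eq_zero h] at hs
    norm_num at hs
  obtain ⟨u, hu, hune⟩ := this
  refine ⟨u, hu, fun hmem => ?_⟩
  rw [Tch_succ_eq] at hmem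
  exact hune (Finset.mem_filter.1 hmem).2.2

lemma card_add_le (h𝒜L : IsSetField 𝒜L) (hsL : ↑sL ⊆ 𝒜L) (hπ' : IsFCP 𝒜L π') :
    ∀ k : ℕ, (Cch π' sL k).Nonempty → (Tch π' sL k).card + k ≤ (Tch π' sL 0).card := by
  intro k
  induction k with
  | zero => simp
  | succ k ih =>
    intro hk
    have hkne : (Cch π' sL k).Nonempty := hk.mono (Cch_succ_subset k)
    have h1 := ih hkne
    have h2 := Finset.card_lt_card (Tch_ssubset h𝒜L hsL hπ' k hkne)
    omega

lemma Cch_nonempty_le (h𝒜L : IsSetField 𝒜L) (hsL : ↑sL ⊆ 𝒜L) (hπ' : IsFCP 𝒜L π')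
    {k : ℕ} (hk : (Cch π' sL k).Nonempty) : k ≤ (atoms0 sL).card := by
  have := card_add_le h𝒜L hsL hπ' k hk
  have h0 : (Tch π' sL 0).card ≤ (atoms0 sL).card :=
    Finset.card_le_card (Tch_subset_atoms0 0)
  omega

lemma exists_Cch_empty (h𝒜L : IsSetField 𝒜L) (hsL : ↑sL ⊆ 𝒜L) (hπ' : IsFCP 𝒜L π') :
    ∃ k, Cch π' sL k = ∅ := by
  by_contra h
  push_neg at h
  have := Cch_nonempty_le h𝒜L hsL hπ' (k := (atoms0 sL).card + 1) (h _)
  omega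

/-- The level of a cell in the chain. -/
noncomputable def lev (π' : Set Ω → Set Ω → ℝ) (sL : Finset (Set Ω))
    (u : Finset (Set Ω)) : ℕ :=
  sInf {k | ¬ cell sL u ⊆ Cch π' sL (k + 1)}

lemma lev_set_nonempty (h𝒜L : IsSetField 𝒜L) (hsL : ↑sL ⊆ 𝒜L) (hπ' : IsFCP 𝒜L π')
    {u : Finset (Set Ω)} (hu : u ∈ atoms0 sL) :
    {k | ¬ cell sL u ⊆ Cch π' sL (k + 1)}.Nonempty := by
  obtain ⟨k0, hk0⟩ := exists_Cch_empty h𝒜L hsL hπ' (sL := sL)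
  obtain ⟨ω, hω⟩ := atoms0_nonempty_cell hu
  cases k0 with
  | zero =>
    exfalso
    have : ω ∈ Cch π' sL 0 := Set.mem_univ ω
    rw [hk0] at this; exact this
  | succ k =>
    exact ⟨k, fun hsub => by rw [hk0] at hsub; exact hsub hω⟩

lemma lev_not_subset (h𝒜L : IsSetField 𝒜L) (hsL : ↑sL ⊆ 𝒜L) (hπ' : IsFCP 𝒜L π')
    {u : Finset (Set Ω)} (hu : u ∈ atoms0 sL) :
    ¬ cell sL u ⊆ Cch π' sL (lev π' sL u + 1) :=
  Nat.sInf_mem (lev_set_nonempty h𝒜L hsL hπ' hu)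

lemma lev_subset (h𝒜L : IsSetField 𝒜L) (hsL : ↑sL ⊆ 𝒜L) (hπ' : IsFCP 𝒜L π')
    {u : Finset (Set Ω)} (hu : u ∈ atoms0 sL) :
    cell sL u ⊆ Cch π' sL (lev π' sL u) := by
  cases h : lev π' sL u with
  | zero => exact fun x _ => Set.mem_univ x
  | succ k =>
    by_contra hns
    have : k ∈ {k | ¬ cell sL u ⊆ Cch π' sL (k + 1)} := hns
    have := Nat.sInf_le this
    rw [lev] at h
    omega

lemma subset_Cch_iff (h𝒜L : IsSetField 𝒜L) (hsL : ↑sL ⊆ 𝒜L) (hπ' : IsFCP 𝒜L π')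
    {u : Finset (Set Ω)} (hu : u ∈ atoms0 sL) (j : ℕ) :
    cell sL u ⊆ Cch π' sL j ↔ j ≤ lev π' sL u := by
  constructor
  · intro hsub
    by_contra hlt
    push_neg at hlt
    exact lev_not_subset h𝒜L hsL hπ' hu (hsub.trans (Cch_anti (by omega)))
  · intro hj
    exact (lev_subset h𝒜L hsL hπ' hu).trans (Cch_anti hj)

lemma lev_pos_prob (h𝒜L : IsSetField 𝒜L) (hsL : ↑sL ⊆ 𝒜L) (hπ' : IsFCP 𝒜L π')
    {u : Finset (Set Ω)} (hu : u ∈ atoms0 sL) :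
    0 < π' (cell sL u) (Cch π' sL (lev π' sL u)) := by
  set l := lev π' sL u
  have hsub : cell sL u ⊆ Cch π' sL l := lev_subset h𝒜L hsL hπ' hu
  have hCne : (Cch π' sL l).Nonempty := (atoms0_nonempty_cell hu).mono hsub
  have hFAP : IsFAP 𝒜L fun E => π' E (Cch π' sL l) :=
    hπ'.2.1 _ (Cch_mem h𝒜L hsL l) hCne
  have h0 : 0 ≤ π' (cell sL u) (Cch π' sL l) :=
    (hFAP.1 _ (cell_mem_field h𝒜L hsL u)).1
  rcases h0.lt_or_eq with h | h
  · exact h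
  · exfalso
    refine lev_not_subset h𝒜L hsL hπ' hu fun x hx => ?_
    show x ∈ Cch π' sL (l + 1)
    exact Set.mem_biUnion (Finset.mem_filter.2 ⟨hu, hsub, h.symm⟩) hx

lemma lev_le_card (h𝒜L : IsSetField 𝒜L) (hsL : ↑sL ⊆ 𝒜L) (hπ' : IsFCP 𝒜L π')
    {u : Finset (Set Ω)} (hu : u ∈ atoms0 sL) :
    lev π' sL u ≤ (atoms0 sL).card :=
  Cch_nonempty_le h𝒜L hsL hπ'
    ((atoms0_nonempty_cell hu).mono (lev_subset h𝒜L hsL hπ' hu))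

lemma pi'_cell_zero_of_lt_lev (h𝒜L : IsSetField 𝒜L) (hsL : ↑sL ⊆ 𝒜L) (hπ' : IsFCP 𝒜L π')
    {u : Finset (Set Ω)} (hu : u ∈ atoms0 sL) {k : ℕ} (hk : k < lev π' sL u) :
    π' (cell sL u) (Cch π' sL k) = 0 := by
  have hsub : cell sL u ⊆ Cch π' sL (k + 1) :=
    (subset_Cch_iff h𝒜L hsL hπ' hu (k + 1)).2 hk
  have : u ∈ Tch π' sL (k + 1) := Finset.mem_filter.2 ⟨hu, hsub⟩
  rw [Tch_succ_eq] at this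
  exact (Finset.mem_filter.1 this).2.2

end Chain

end S19

namespace S19

variable {Ω ι : Type*}

lemma H_inj {H : ι → Set Ω} (hH : IsPartition H) {i j : ι} (hij : H i = H j) : i = j := by
  by_contra hne
  have hd : Disjoint (H i) (H j) := hH.2.1 hne
  rw [hij] at hd
  exact (hH.1 j).ne_empty (by simpa using disjoint_self.1 hd)

lemma strategy_one {𝒜 : Set (Set Ω)} {H : ι → Set Ω} {σ : Set Ω → ι → ℝ}
    (hσ : IsStrategy 𝒜 H σ) {i : ι} {W : Set Ω} (hW : W ∈ 𝒜) (h : H i ⊆ W) :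
    σ W i = 1 := (hσ i).2 W hW h

lemma strategy_zero {𝒜 : Set (Set Ω)} {H : ι → Set Ω} {σ : Set Ω → ι → ℝ}
    (h𝒜 : IsSetField 𝒜) (hσ : IsStrategy 𝒜 H σ) {i : ι} {W : Set Ω} (hW : W ∈ 𝒜)
    (h : H i ∩ W = ∅) : σ W i = 0 := by
  have hc : σ Wᶜ i = 1 := strategy_one hσ (h𝒜.2.1 _ hW)
    (fun x hx hxW => Set.eq_empty_iff_forall_notMem.1 h x ⟨hx, hxW⟩)
  have := fap_compl h𝒜 (hσ i).1 hW
  rw [hc] at this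
  linarith

lemma strategy_inter_self {𝒜 : Set (Set Ω)} {H : ι → Set Ω} {σ : Set Ω → ι → ℝ}
    (h𝒜 : IsSetField 𝒜) (hσ : IsStrategy 𝒜 H σ) {i : ι} (hHi : H i ∈ 𝒜) {F : Set Ω}
    (hF : F ∈ 𝒜) : σ (F ∩ H i) i = σ F i := by
  have hsplit : F = (F ∩ H i) ∪ (F ∩ (H i)ᶜ) := by
    rw [← Set.inter_union_distrib_left, Set.union_compl_self, Set.inter_univ]
  have h1 : F ∩ H i ∈ 𝒜 := field_inter h𝒜 hF hHi
  have h2 : F ∩ (H i)ᶜ ∈ 𝒜 := field_inter h𝒜 hF (h𝒜.2.1 _ hHi)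
  have hadd : σ ((F ∩ H i) ∪ (F ∩ (H i)ᶜ)) i = σ (F ∩ H i) i + σ (F ∩ (H i)ᶜ) i :=
    (hσ i).1.2.2 _ h1 _ h2 (Set.disjoint_left.2 fun x hx hx' => hx'.2 hx.2)
  have hz : σ (F ∩ (H i)ᶜ) i = 0 := strategy_zero h𝒜 hσ h2
    (by ext x; simp only [Set.mem_inter_iff, Set.mem_empty_iff_false, iff_false]
        rintro ⟨hx, _, hx'⟩; exact hx' hx)
  rw [← hsplit] at hadd
  rw [hadd, hz]; ring

/-- Monotonicity from nonnegativity and additivity on a field. -/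
lemma addnn_mono {𝒜 : Set (Set Ω)} (h𝒜 : IsSetField 𝒜) {μ : Set Ω → ℝ}
    (h0 : ∀ A ∈ 𝒜, 0 ≤ μ A)
    (hadd : ∀ A ∈ 𝒜, ∀ B ∈ 𝒜, Disjoint A B → μ (A ∪ B) = μ A + μ B)
    {F G : Set Ω} (hF : F ∈ 𝒜) (hG : G ∈ 𝒜) (hFG : F ⊆ G) : μ F ≤ μ G := by
  have hd : G \ F ∈ 𝒜 := field_diff h𝒜 hG hF
  have := hadd F hF _ hd Set.disjoint_sdiff_right
  rw [Set.union_diff_cancel hFG] at this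
  have := h0 _ hd
  linarith

/-- The lift of a cell to a finitely additive probability on `𝒜`: the strategy if the
cell is a partition class, a point mass otherwise. -/
noncomputable def nu (H : ι → Set Ω) (σ : Set Ω → ι → ℝ) (sL u : Finset (Set Ω)) :
    Set Ω → ℝ :=
  if h : ∃ i, cell sL u = H i then fun F => σ F h.choose
  else if h2 : (cell sL u).Nonempty then fun F => if h2.choose ∈ F then 1 else 0
  else fun _ => 0

section Nu

variable {𝒜 : Set (Set Ω)} {H : ι → Set Ω} {σ : Set Ω → ι → ℝ} {sL u : Finset (Set Ω)}

lemma nu_nonneg (hσ : IsStrategy 𝒜 H σ) {F : Set Ω} (hF : F ∈ 𝒜) :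
    0 ≤ nu H σ sL u F := by
  unfold nu
  split_ifs with h h2
  · exact ((hσ h.choose).1.1 F hF).1

  · positivity
  · exact le_rfl

lemma nu_additive (h𝒜 : IsSetField 𝒜) (hσ : IsStrategy 𝒜 H σ) {A B : Set Ω}
    (hA : A ∈ 𝒜) (hB : B ∈ 𝒜) (hAB : Disjoint A B) :
    nu H σ sL u (A ∪ B) = nu H σ sL u A + nu H σ sL u B := by
  unfold nu
  split_ifs with h h2
  · exact (hσ h.choose).1.2.2 A hA B hB hAB
  · by_cases hA' : h2.choose ∈ A
    · have hB' : h2.choose ∉ B := fun hB' => Set.disjoint_left.1 hAB hA' hB'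
      simp [hA', hB']
    · by_cases hB' : h2.choose ∈ B <;> simp [hA', hB']
  · simp

lemma nu_one_of_subset (hσ : IsStrategy 𝒜 H σ) (hune : (cell sL u).Nonempty)
    {W : Set Ω} (hW : W ∈ 𝒜) (hsub : cell sL u ⊆ W) : nu H σ sL u W = 1 := by
  unfold nu
  split_ifs with h
  · exact strategy_one hσ hW (h.choose_spec ▸ hsub)
  · exact if_pos (hsub (Exists.choose_spec hune))

lemma nu_zero_of_disjoint (h𝒜 : IsSetField 𝒜) (hσ : IsStrategy 𝒜 H σ)
    {W : Set Ω} (hW : W ∈ 𝒜) (hd : cell sL u ∩ W = ∅) : nu H σ sL u W = 0 := by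
  unfold nu
  split_ifs with h h2
  · exact strategy_zero h𝒜 hσ hW (h.choose_spec ▸ hd)
  · have : Exists.choose h2 ∉ W := fun hw =>
      Set.eq_empty_iff_forall_notMem.1 hd _ ⟨Exists.choose_spec h2, hw⟩
    simp [this]
  · rfl

end Nu

/-- The chain of finitely additive probabilities on `𝒜` lifting the `π'`-chain. -/
noncomputable def rho (H : ι → Set Ω) (σ : Set Ω → ι → ℝ) (π' : Set Ω → Set Ω → ℝ)
    (sL : Finset (Set Ω)) (k : ℕ) (F : Set Ω) : ℝ :=
  ∑ u ∈ (atoms0 sL).filter (fun u => lev π' sL u = k),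
    π' (cell sL u) (Cch π' sL k) * nu H σ sL u F

section Rho

variable {𝒜 𝒜L : Set (Set Ω)} {H : ι → Set Ω} {σ : Set Ω → ι → ℝ}
  {π' : Set Ω → Set Ω → ℝ} {sL : Finset (Set Ω)}

lemma rho_coeff_pos (h𝒜L : IsSetField 𝒜L) (hsL : ↑sL ⊆ 𝒜L) (hπ' : IsFCP 𝒜L π')
    {u : Finset (Set Ω)} {k : ℕ}
    (hu : u ∈ (atoms0 sL).filter (fun u => lev π' sL u = k)) :
    0 < π' (cell sL u) (Cch π' sL k) := by
  obtain ⟨hu0, hlev⟩ := Finset.mem_filter.1 hu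
  rw [← hlev]
  exact lev_pos_prob h𝒜L hsL hπ' hu0

lemma rho_nonneg (h𝒜L : IsSetField 𝒜L) (hsL : ↑sL ⊆ 𝒜L) (hπ' : IsFCP 𝒜L π')
    (hσ : IsStrategy 𝒜 H σ) (k : ℕ) {F : Set Ω} (hF : F ∈ 𝒜) :
    0 ≤ rho H σ π' sL k F := by
  refine Finset.sum_nonneg fun u hu => ?_
  exact mul_nonneg (rho_coeff_pos h𝒜L hsL hπ' hu).le (nu_nonneg hσ hF)

lemma rho_additive (h𝒜 : IsSetField 𝒜) (hσ : IsStrategy 𝒜 H σ) (k : ℕ) {A B : Set Ω}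
    (hA : A ∈ 𝒜) (hB : B ∈ 𝒜) (hAB : Disjoint A B) :
    rho H σ π' sL k (A ∪ B) = rho H σ π' sL k A + rho H σ π' sL k B := by
  unfold rho
  rw [← Finset.sum_add_distrib]
  refine Finset.sum_congr rfl fun u _ => ?_
  rw [nu_additive h𝒜 hσ hA hB hAB]; ring

/-- The key computation: on `𝒜L`-events that are unions of cells, `rho k` agrees with
`π' (· | Cch k)`. -/
lemma rho_eq_pi' (h𝒜 : IsSetField 𝒜) (h𝒜L : IsSetField 𝒜L) (hLsub : 𝒜L ⊆ 𝒜)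
    (hsL : ↑sL ⊆ 𝒜L) (hπ' : IsFCP 𝒜L π') (hσ : IsStrategy 𝒜 H σ)
    {W : Set Ω} (hW : W ∈ 𝒜L)
    (hdich : ∀ u ∈ atoms0 sL, cell sL u ⊆ W ∨ cell sL u ∩ W = ∅)
    (k : ℕ) (hk : (Cch π' sL k).Nonempty) :
    rho H σ π' sL k W = π' W (Cch π' sL k) := by
  have hCk : Cch π' sL k ∈ 𝒜L := Cch_mem h𝒜L hsL k
  have hFAP : IsFAP 𝒜L fun E => π' E (Cch π' sL k) := hπ'.2.1 _ hCk hk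
  -- W ∩ Cch k as a union of cells
  have hWC : W ∩ Cch π' sL k = ⋃ u ∈ (atoms0 sL).filter
      (fun u => cell sL u ⊆ W ∧ cell sL u ⊆ Cch π' sL k), cell sL u := by
    apply Set.eq_of_subset_of_subset
    · rintro ω ⟨hωW, hωC⟩
      obtain ⟨u, hu, hωu⟩ := exists_atom_mem (sL := sL) ω
      have hsubW : cell sL u ⊆ W := by
        rcases hdich u hu with h | h
        · exact h
        · exact absurd (Set.eq_empty_iff_forall_notMem.1 h ω ⟨hωu, hωW⟩) (fun h => h)
      have hsubC : cell sL u ⊆ Cch π' sL k := by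
        rcases cell_subset_or_disjoint hu (Tch π' sL k) (Tch_subset_atoms0 k) with h | h
        · rw [← Cch_eq_T] at h; exact h
        · exfalso
          rw [← Cch_eq_T] at h
          exact Set.eq_empty_iff_forall_notMem.1 h ω ⟨hωu, hωC⟩
      exact Set.mem_biUnion (Finset.mem_filter.2 ⟨hu, hsubW, hsubC⟩) hωu
    · refine Set.iUnion₂_subset fun u hu => ?_
      obtain ⟨_, h1, h2⟩ := Finset.mem_filter.1 hu
      exact Set.subset_inter h1 h2
  have hC1 : π' W (Cch π' sL k) = π' (W ∩ Cch π' sL k) (Cch π' sL k) :=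
    hπ'.1 W hW _ hCk hk
  have hsum : π' (W ∩ Cch π' sL k) (Cch π' sL k) =
      ∑ u ∈ (atoms0 sL).filter
        (fun u => cell sL u ⊆ W ∧ cell sL u ⊆ Cch π' sL k),
        π' (cell sL u) (Cch π' sL k) := by
    rw [hWC]
    exact fap_biUnion h𝒜L hFAP _ _ (fun u _ => cell_mem_field h𝒜L hsL u)
      (fun u hu v hv huv => cell_disjoint
        (atoms0_subset (Finset.mem_filter.1 hu).1)
        (atoms0_subset (Finset.mem_filter.1 hv).1) huv)
  rw [hC1, hsum]
  unfold rho
  rw [Finset.sum_filter, Finset.sum_filter]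
  refine Finset.sum_congr rfl fun u hu => ?_
  rcases hdich u hu with hsubW | hdisW
  · have hνW : nu H σ sL u W = 1 :=
      nu_one_of_subset hσ (atoms0_nonempty_cell hu) (hLsub hW) hsubW
    by_cases hlev : lev π' sL u = k
    · have hsubC : cell sL u ⊆ Cch π' sL k := hlev ▸ lev_subset h𝒜L hsL hπ' hu
      simp [hlev, hsubW, hsubC, hνW]
    · simp only [hlev, if_false]
      by_cases hsubC : cell sL u ⊆ Cch π' sL k
      · have hk' : k ≤ lev π' sL u := (subset_Cch_iff h𝒜L hsL hπ' hu k).1 hsubC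
        have hklt : k < lev π' sL u := lt_of_le_of_ne hk' (Ne.symm hlev)
        simp [hsubW, hsubC, pi'_cell_zero_of_lt_lev h𝒜L hsL hπ' hu hklt]
      · simp [hsubC]
  · have hνW : nu H σ sL u W = 0 := nu_zero_of_disjoint h𝒜 hσ (hLsub hW) hdisW
    have hnsub : ¬ cell sL u ⊆ W := fun hsub' => by
      obtain ⟨ω, hω⟩ := atoms0_nonempty_cell hu
      exact Set.eq_empty_iff_forall_notMem.1 hdisW ω ⟨hω, hsub' hω⟩
    simp [hνW, hnsub]

end Rho

end S19

namespace S19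

variable {Ω ι : Type*}

/-- Tail enumeration of chosen points of the nonempty intersections of pairs from `s`. -/
noncomputable def tailPt [Nonempty Ω] (s : Finset (Set Ω)) (j : ℕ) : Ω :=
  (((s ×ˢ s).toList).map fun p =>
    if h : (p.1 ∩ p.2).Nonempty then Exists.choose h else Classical.arbitrary Ω).getD j
    (Classical.arbitrary Ω)

lemma exists_tailPt_mem [Nonempty Ω] {s : Finset (Set Ω)} {E K : Set Ω}
    (hE : E ∈ s) (hK : K ∈ s) (hne : (E ∩ K).Nonempty) :
    ∃ j, tailPt s j ∈ E ∩ K := by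
  have hp : (E, K) ∈ (s ×ˢ s).toList := by
    rw [Finset.mem_toList]
    exact Finset.mem_product.2 ⟨hE, hK⟩
  obtain ⟨n, hn⟩ := List.mem_iff_get.1 hp
  refine ⟨n, ?_⟩
  unfold tailPt
  rw [List.getD_eq_getElem?_getD, List.getElem?_map, List.getElem?_eq_getElem n.isLt,
    Option.map_some, Option.getD_some, ← List.get_eq_getElem]
  beta_reduce
  rw [hn]
  rw [dif_pos hne]
  exact Exists.choose_spec hne

/-- The full chain of measures: the `π'`-lift chain followed by tail point masses. -/
noncomputable def Mseq [Nonempty Ω] (H : ι → Set Ω) (σ : Set Ω → ι → ℝ)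
    (π' : Set Ω → Set Ω → ℝ) (sL s : Finset (Set Ω)) (k : ℕ) : Set Ω → ℝ :=
  if k ≤ (atoms0 sL).card then rho H σ π' sL k
  else fun F => if tailPt s (k - (atoms0 sL).card - 1) ∈ F then 1 else 0

section Mseq

variable [Nonempty Ω] {𝒜 𝒜L : Set (Set Ω)} {H : ι → Set Ω} {σ : Set Ω → ι → ℝ}
  {π' : Set Ω → Set Ω → ℝ} {sL s : Finset (Set Ω)}

lemma Mseq_nonneg (h𝒜L : IsSetField 𝒜L) (hsL : ↑sL ⊆ 𝒜L) (hπ' : IsFCP 𝒜L π')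
    (hσ : IsStrategy 𝒜 H σ) (k : ℕ) {F : Set Ω} (hF : F ∈ 𝒜) :
    0 ≤ Mseq H σ π' sL s k F := by
  unfold Mseq
  split_ifs with h
  · exact rho_nonneg h𝒜L hsL hπ' hσ k hF
  · positivity

lemma Mseq_additive (h𝒜 : IsSetField 𝒜) (hσ : IsStrategy 𝒜 H σ) (k : ℕ) {A B : Set Ω}
    (hA : A ∈ 𝒜) (hB : B ∈ 𝒜) (hAB : Disjoint A B) :
    Mseq H σ π' sL s k (A ∪ B) = Mseq H σ π' sL s k A + Mseq H σ π' sL s k B := by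
  unfold Mseq
  split_ifs with h
  · exact rho_additive h𝒜 hσ k hA hB hAB
  · set ω := tailPt s (k - (atoms0 sL).card - 1)
    by_cases hA' : ω ∈ A
    · have hB' : ω ∉ B := fun hB' => Set.disjoint_left.1 hAB hA' hB'
      simp [hA', hB']
    · by_cases hB' : ω ∈ B <;> simp [hA', hB']

lemma Mseq_mono (h𝒜 : IsSetField 𝒜) (h𝒜L : IsSetField 𝒜L) (hsL : ↑sL ⊆ 𝒜L)
    (hπ' : IsFCP 𝒜L π') (hσ : IsStrategy 𝒜 H σ) (k : ℕ) {F G : Set Ω}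
    (hF : F ∈ 𝒜) (hG : G ∈ 𝒜) (hFG : F ⊆ G) :
    Mseq H σ π' sL s k F ≤ Mseq H σ π' sL s k G :=
  addnn_mono h𝒜 (fun A hA => Mseq_nonneg h𝒜L hsL hπ' hσ k hA)
    (fun A hA B hB hd => Mseq_additive h𝒜 hσ k hA hB hd) hF hG hFG

lemma Mseq_exists_pos {E K : Set Ω} (hE : E ∈ s) (hK : K ∈ s)
    (hne : (E ∩ K).Nonempty) : ∃ k, 0 < Mseq H σ π' sL s k (E ∩ K) := by
  obtain ⟨j, hj⟩ := exists_tailPt_mem hE hK hne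
  refine ⟨(atoms0 sL).card + 1 + j, ?_⟩
  unfold Mseq
  rw [if_neg (by omega)]
  have : (atoms0 sL).card + 1 + j - (atoms0 sL).card - 1 = j := by omega
  rw [this, if_pos hj]
  norm_num

end Mseq

/-- The conditional probability built from a chain of measures. -/
noncomputable def qfin (𝒜 : Set (Set Ω)) (M : ℕ → Set Ω → ℝ) (F K : Set Ω) : ℝ :=
  if h : F ∈ 𝒜 ∧ K ∈ 𝒜 ∧ ∃ k, 0 < M k K then
    M (Nat.find h.2.2) (F ∩ K) / M (Nat.find h.2.2) K
  else 0

section Qfin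

variable {𝒜 : Set (Set Ω)} {M : ℕ → Set Ω → ℝ}

lemma qfin_eq {F K : Set Ω} (hF : F ∈ 𝒜) (hK : K ∈ 𝒜) (hex : ∃ k, 0 < M k K) :
    qfin 𝒜 M F K = M (Nat.find hex) (F ∩ K) / M (Nat.find hex) K := by
  rw [qfin, dif_pos ⟨hF, hK, hex⟩]

variable (h𝒜 : IsSetField 𝒜) (hnn : ∀ k, ∀ A ∈ 𝒜, 0 ≤ M k A)
  (hadd : ∀ k, ∀ A ∈ 𝒜, ∀ B ∈ 𝒜, Disjoint A B → M k (A ∪ B) = M k A + M k B)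

include h𝒜 hnn hadd

lemma Mzero_of_lt_find {K : Set Ω} (hK : K ∈ 𝒜) (hex : ∃ k, 0 < M k K) {k : ℕ}
    (hk : k < Nat.find hex) : M k K = 0 :=
  le_antisymm (not_lt.1 (Nat.find_min hex hk)) (hnn k K hK)

lemma qfin_mem_Icc : ∀ F K : Set Ω, qfin 𝒜 M F K ∈ Set.Icc (0 : ℝ) 1 := by
  intro F K
  unfold qfin
  split_ifs with h
  · have hpos : 0 < M (Nat.find h.2.2) K := Nat.find_spec h.2.2
    have hFK : F ∩ K ∈ 𝒜 := field_inter h𝒜 h.1 h.2.1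
    have h0 : 0 ≤ M (Nat.find h.2.2) (F ∩ K) := hnn _ _ hFK
    have hle : M (Nat.find h.2.2) (F ∩ K) ≤ M (Nat.find h.2.2) K :=
      addnn_mono h𝒜 (hnn _) (hadd _) hFK h.2.1 Set.inter_subset_right
    exact ⟨div_nonneg h0 hpos.le, (div_le_one hpos).2 hle⟩
  · exact ⟨le_rfl, by norm_num⟩

lemma qfin_C1 {F K : Set Ω} (hF : F ∈ 𝒜) (hK : K ∈ 𝒜) (hex : ∃ k, 0 < M k K) :
    qfin 𝒜 M F K = qfin 𝒜 M (F ∩ K) K := by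
  rw [qfin_eq hF hK hex, qfin_eq (field_inter h𝒜 hF hK) hK hex,
    Set.inter_assoc, Set.inter_self]

lemma qfin_univ {K : Set Ω} (hK : K ∈ 𝒜) (hex : ∃ k, 0 < M k K) :
    qfin 𝒜 M Set.univ K = 1 := by
  rw [qfin_eq h𝒜.1 hK hex, Set.univ_inter, div_self (Nat.find_spec hex).ne']

lemma qfin_add {A B K : Set Ω} (hA : A ∈ 𝒜) (hB : B ∈ 𝒜) (hK : K ∈ 𝒜)
    (hAB : Disjoint A B) (hex : ∃ k, 0 < M k K) :
    qfin 𝒜 M (A ∪ B) K = qfin 𝒜 M A K + qfin 𝒜 M B K := by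
  rw [qfin_eq (h𝒜.2.2 _ hA _ hB) hK hex, qfin_eq hA hK hex, qfin_eq hB hK hex]
  rw [Set.union_inter_distrib_right,
    hadd _ _ (field_inter h𝒜 hA hK) _ (field_inter h𝒜 hB hK)
      (hAB.mono Set.inter_subset_left Set.inter_subset_left),
    add_div]

lemma qfin_C3 {E F K : Set Ω} (hE : E ∈ 𝒜) (hF : F ∈ 𝒜) (hK : K ∈ 𝒜)
    (hexK : ∃ k, 0 < M k K) (hexEK : ∃ k, 0 < M k (E ∩ K)) :
    qfin 𝒜 M (E ∩ F) K = qfin 𝒜 M E K * qfin 𝒜 M F (E ∩ K) := by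
  have hEK : E ∩ K ∈ 𝒜 := field_inter h𝒜 hE hK
  have hab : Nat.find hexK ≤ Nat.find hexEK := by
    by_contra hlt
    push_neg at hlt
    have h1 : M (Nat.find hexEK) K = 0 := Mzero_of_lt_find h𝒜 hnn hadd hK hexK hlt
    have h2 : M (Nat.find hexEK) (E ∩ K) ≤ M (Nat.find hexEK) K :=
      addnn_mono h𝒜 (hnn _) (hadd _) hEK hK Set.inter_subset_right
    have h3 : 0 < M (Nat.find hexEK) (E ∩ K) := Nat.find_spec hexEK
    linarith
  rw [qfin_eq (field_inter h𝒜 hE hF) hK hexK, qfin_eq hE hK hexK,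
    qfin_eq hF hEK hexEK]
  rcases eq_or_lt_of_le hab with heq | hlt
  · rw [← heq]
    have hpos1 : 0 < M (Nat.find hexK) K := Nat.find_spec hexK
    have hpos2 : 0 < M (Nat.find hexK) (E ∩ K) := heq ▸ Nat.find_spec hexEK
    have hset : E ∩ F ∩ K = F ∩ (E ∩ K) := by
      ext x; simp only [Set.mem_inter_iff]; tauto
    rw [hset]
    field_simp
  · have h0 : M (Nat.find hexK) (E ∩ K) = 0 :=
      Mzero_of_lt_find h𝒜 hnn hadd hEK hexEK hlt
    have h1 : M (Nat.find hexK) (E ∩ F ∩ K) = 0 := by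
      have hle : M (Nat.find hexK) (E ∩ F ∩ K) ≤ M (Nat.find hexK) (E ∩ K) :=
        addnn_mono h𝒜 (hnn _) (hadd _)
          (field_inter h𝒜 (field_inter h𝒜 hE hF) hK) hEK
          (fun x hx => ⟨hx.1.1, hx.2⟩)
      have hge : 0 ≤ M (Nat.find hexK) (E ∩ F ∩ K) :=
        hnn _ _ (field_inter h𝒜 (field_inter h𝒜 hE hF) hK)
      linarith
    rw [h1, h0]
    simp

end Qfin

end S19

namespace S19

variable {Ω ι : Type*}

lemma HL_dich {H : ι → Set Ω} {𝒜L : Set (Set Ω)} (hH : IsPartition H)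
    (h𝒜L : IsFieldOver H 𝒜L) (i : ι) {B : Set Ω} (hB : B ∈ 𝒜L) :
    H i ⊆ B ∨ H i ∩ B = ∅ := by
  obtain ⟨S, rfl⟩ := h𝒜L.2.2 B hB
  by_cases hi : i ∈ S
  · exact Or.inl (Set.subset_biUnion_of_mem hi)
  · right
    ext x
    simp only [Set.mem_inter_iff, Set.mem_iUnion, Set.mem_empty_iff_false, iff_false]
    rintro ⟨hx, j, hj, hxj⟩
    have hij : i ≠ j := fun h => hi (h ▸ hj)
    exact Set.disjoint_left.1 (hH.2.1 hij) hx hxj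

/-- The master finite-stage construction. -/
lemma exists_finite_q [Nonempty Ω] {H : ι → Set Ω} {𝒜L 𝒜 : Set (Set Ω)}
    {σ : Set Ω → ι → ℝ} {π' : Set Ω → Set Ω → ℝ}
    (hH : IsPartition H) (h𝒜L : IsFieldOver H 𝒜L) (h𝒜 : IsSetField 𝒜)
    (hL𝒜 : 𝒜L ⊆ 𝒜) (hσ : IsStrategy 𝒜 H σ) (hπ' : IsFCP 𝒜L π')
    (s : Finset (Set Ω)) (hs : ↑s ⊆ 𝒜) :
    ∃ q : Set Ω → Set Ω → ℝ,
      (∀ F K : Set Ω, q F K ∈ Set.Icc (0 : ℝ) 1) ∧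
      (∀ E ∈ s, ∀ K ∈ s, K.Nonempty → q E K = q (E ∩ K) K) ∧
      (∀ K ∈ s, K.Nonempty → q Set.univ K = 1) ∧
      (∀ A ∈ s, ∀ B ∈ s, ∀ K ∈ s, K.Nonempty → Disjoint A B →
        q (A ∪ B) K = q A K + q B K) ∧
      (∀ E ∈ s, ∀ F ∈ s, ∀ K ∈ s, K.Nonempty → (E ∩ K).Nonempty →
        q (E ∩ F) K = q E K * q F (E ∩ K)) ∧
      (∀ B ∈ s, B ∈ 𝒜L → ∀ K ∈ s, K ∈ 𝒜L → K.Nonempty → q B K = π' B K) ∧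
      (∀ F ∈ s, ∀ i : ι, H i ∈ s → q F (H i) = σ F i) := by
  classical
  have h𝒜Lf : IsSetField 𝒜L := h𝒜L.1
  set sL : Finset (Set Ω) := s.filter (fun B => B ∈ 𝒜L) with hsLdef
  have hsub_sL : ↑sL ⊆ 𝒜L := by
    intro B hB
    exact (Finset.mem_filter.1 hB).2
  set n0 := (atoms0 sL).card with hn0
  set M := Mseq H σ π' sL s with hM
  have hnn : ∀ k, ∀ A ∈ 𝒜, 0 ≤ M k A :=
    fun k A hA => Mseq_nonneg h𝒜Lf hsub_sL hπ' hσ k hA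
  have haddM : ∀ k, ∀ A ∈ 𝒜, ∀ B ∈ 𝒜, Disjoint A B → M k (A ∪ B) = M k A + M k B :=
    fun k A hA B hB hd => Mseq_additive h𝒜 hσ k hA hB hd
  have hMfun : ∀ k, k ≤ n0 → M k = rho H σ π' sL k := by
    intro k hk
    rw [hM]
    show Mseq H σ π' sL s k = _
    unfold Mseq
    rw [if_pos hk]
  have hex : ∀ K ∈ s, K.Nonempty → ∃ k, 0 < M k K := by
    intro K hK hne
    have := Mseq_exists_pos (H := H) (σ := σ) (π' := π') (sL := sL) hK hK
      (by rwa [Set.inter_self])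
    rwa [Set.inter_self] at this
  have hdichW : ∀ W ∈ sL, ∀ u ∈ atoms0 sL, cell sL u ⊆ W ∨ cell sL u ∩ W = ∅ := by
    intro W hW u hu
    by_cases hWu : W ∈ u
    · exact Or.inl (cell_subset hW hWu)
    · right
      have := cell_subset_compl hW hWu
      ext x
      simp only [Set.mem_inter_iff, Set.mem_empty_iff_false, iff_false]
      rintro ⟨hx, hxW⟩
      exact this hx hxW
  -- positivity of the chain value at any cell whose pattern contains K
  have hwit : ∀ K, K ∈ sL → ∀ u ∈ atoms0 sL, K ∈ u →
      0 < M (lev π' sL u) K ∧ lev π' sL u ≤ n0 := by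
    intro K hKsL u hu hKu
    have hK𝒜L : K ∈ 𝒜L := hsub_sL hKsL
    have hlev : lev π' sL u ≤ n0 := lev_le_card h𝒜Lf hsub_sL hπ' hu
    have hCne : (Cch π' sL (lev π' sL u)).Nonempty :=
      (atoms0_nonempty_cell hu).mono (lev_subset h𝒜Lf hsub_sL hπ' hu)
    have hMval : M (lev π' sL u) K = π' K (Cch π' sL (lev π' sL u)) := by
      rw [hMfun _ hlev]
      exact rho_eq_pi' h𝒜 h𝒜Lf hL𝒜 hsub_sL hπ' hσ hK𝒜L (hdichW K hKsL) _ hCne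
    have hmono : π' (cell sL u) (Cch π' sL (lev π' sL u)) ≤
        π' K (Cch π' sL (lev π' sL u)) :=
      fap_mono h𝒜Lf (hπ'.2.1 _ (Cch_mem h𝒜Lf hsub_sL _) hCne)
        (cell_mem_field h𝒜Lf hsub_sL u) hK𝒜L (cell_subset hKsL hKu)
    have hpos := lev_pos_prob h𝒜Lf hsub_sL hπ' hu
    constructor
    · rw [hMval]; linarith
    · exact hlev
  -- the key facts about the minimal index for K ∈ sL
  have key : ∀ K, K ∈ sL → K.Nonempty → ∀ hexK : ∃ k, 0 < M k K,
      Nat.find hexK ≤ n0 ∧ (Cch π' sL (Nat.find hexK)).Nonempty ∧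
      K ⊆ Cch π' sL (Nat.find hexK) ∧
      M (Nat.find hexK) K = π' K (Cch π' sL (Nat.find hexK)) := by
    intro K hKsL hKne hexK
    have hK𝒜L : K ∈ 𝒜L := hsub_sL hKsL
    obtain ⟨ω, hω⟩ := hKne
    have hu0 : sL.filter (fun B => ω ∈ B) ∈ atoms0 sL := by
      exact Finset.mem_filter.2 ⟨Finset.mem_powerset.2 (Finset.filter_subset _ _),
        ⟨ω, mem_cell_pattern ω⟩⟩
    have hKu0 : K ∈ sL.filter (fun B => ω ∈ B) := Finset.mem_filter.2 ⟨hKsL, hω⟩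
    obtain ⟨hpos0, hlev0⟩ := hwit K hKsL _ hu0 hKu0
    have ha_n0 : Nat.find hexK ≤ n0 := le_trans (Nat.find_min' hexK hpos0) hlev0
    have hCa_ne : (Cch π' sL (Nat.find hexK)).Nonempty := by
      by_contra hempty
      have hfe : (atoms0 sL).filter (fun u => lev π' sL u = Nat.find hexK) = ∅ := by
        refine Finset.filter_eq_empty_iff.2 fun u hu heq => ?_
        exact hempty ((atoms0_nonempty_cell hu).mono
          (heq ▸ lev_subset h𝒜Lf hsub_sL hπ' hu))
      have h0 : M (Nat.find hexK) K = 0 := by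
        rw [hMfun _ ha_n0]
        unfold rho
        rw [hfe, Finset.sum_empty]
      have := Nat.find_spec hexK
      rw [h0] at this
      exact lt_irrefl _ this
    have hMaK : M (Nat.find hexK) K = π' K (Cch π' sL (Nat.find hexK)) := by
      rw [hMfun _ ha_n0]
      exact rho_eq_pi' h𝒜 h𝒜Lf hL𝒜 hsub_sL hπ' hσ hK𝒜L (hdichW K hKsL) _ hCa_ne
    refine ⟨ha_n0, hCa_ne, ?_, hMaK⟩
    conv_lhs => rw [sL_mem_eq_biUnion hKsL]
    refine Set.iUnion₂_subset fun u hu => ?_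
    obtain ⟨hu0', hKu⟩ := Finset.mem_filter.1 hu
    have h1 := hwit K hKsL u hu0' hKu
    have hle : Nat.find hexK ≤ lev π' sL u := Nat.find_min' hexK h1.1
    exact (lev_subset h𝒜Lf hsub_sL hπ' hu0').trans (Cch_anti hle)
  refine ⟨qfin 𝒜 M, qfin_mem_Icc h𝒜 hnn haddM, ?_, ?_, ?_, ?_, ?_, ?_⟩
  · -- C1
    intro E hE K hK hne
    exact qfin_C1 h𝒜 hnn haddM (hs hE) (hs hK) (hex K hK hne)
  · -- normalization
    intro K hK hne
    exact qfin_univ h𝒜 hnn haddM (hs hK) (hex K hK hne)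
  · -- additivity
    intro A hA B hB K hK hne hd
    exact qfin_add h𝒜 hnn haddM (hs hA) (hs hB) (hs hK) hd (hex K hK hne)
  · -- C3
    intro E hE F hF K hK hKne hEKne
    exact qfin_C3 h𝒜 hnn haddM (hs hE) (hs hF) (hs hK) (hex K hK hKne)
      (Mseq_exists_pos hE hK hEKne)
  · -- agreement with π' on 𝒜L-pairs
    intro B hBs hB𝒜L K hKs hK𝒜L hKne
    have hBsL : B ∈ sL := Finset.mem_filter.2 ⟨hBs, hB𝒜L⟩
    have hKsL : K ∈ sL := Finset.mem_filter.2 ⟨hKs, hK𝒜L⟩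
    have hexK : ∃ k, 0 < M k K := hex K hKs hKne
    obtain ⟨ha_n0, hCa_ne, hKsub, hMaK⟩ := key K hKsL hKne hexK
    have hBK𝒜L : B ∩ K ∈ 𝒜L := field_inter h𝒜Lf hB𝒜L hK𝒜L
    have hdichBK : ∀ u ∈ atoms0 sL, cell sL u ⊆ B ∩ K ∨ cell sL u ∩ (B ∩ K) = ∅ := by
      intro u hu
      rcases hdichW B hBsL u hu with hB1 | hB1
      · rcases hdichW K hKsL u hu with hK1 | hK1
        · exact Or.inl (Set.subset_inter hB1 hK1)
        · refine Or.inr (Set.eq_empty_of_subset_empty fun x hx => ?_)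
          rw [← hK1]; exact ⟨hx.1, hx.2.2⟩
      · refine Or.inr (Set.eq_empty_of_subset_empty fun x hx => ?_)
        rw [← hB1]; exact ⟨hx.1, hx.2.1⟩
    have hMaBK : M (Nat.find hexK) (B ∩ K) =
        π' (B ∩ K) (Cch π' sL (Nat.find hexK)) := by
      rw [hMfun _ ha_n0]
      exact rho_eq_pi' h𝒜 h𝒜Lf hL𝒜 hsub_sL hπ' hσ hBK𝒜L hdichBK _ hCa_ne
    have hpos : 0 < π' K (Cch π' sL (Nat.find hexK)) := by
      rw [← hMaK]; exact Nat.find_spec hexK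
    have hC3 : π' (K ∩ B) (Cch π' sL (Nat.find hexK)) =
        π' K (Cch π' sL (Nat.find hexK)) * π' B (K ∩ Cch π' sL (Nat.find hexK)) :=
      hπ'.2.2 K hK𝒜L B hB𝒜L _ (Cch_mem h𝒜Lf hsub_sL _) hCa_ne
        (by rw [Set.inter_eq_left.2 hKsub]; exact hKne)
    rw [Set.inter_eq_left.2 hKsub] at hC3
    rw [qfin_eq (hL𝒜 hB𝒜L) (hL𝒜 hK𝒜L) hexK, hMaBK, hMaK, Set.inter_comm B K, hC3,
      mul_div_cancel_left₀ _ hpos.ne']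
  · -- agreement with the strategy
    intro F hFs i hHis
    have hHi𝒜L : H i ∈ 𝒜L := h𝒜L.2.1 i
    have hHi𝒜 : H i ∈ 𝒜 := hL𝒜 hHi𝒜L
    have hHisL : H i ∈ sL := Finset.mem_filter.2 ⟨hHis, hHi𝒜L⟩
    have hHine : (H i).Nonempty := hH.1 i
    have hcell_ui : cell sL (sL.filter (fun B => H i ⊆ B)) = H i := by
      apply subset_antisymm
      · exact cell_subset hHisL (Finset.mem_filter.2 ⟨hHisL, subset_rfl⟩)
      · intro ω hω B hB
        have hB𝒜L : B ∈ 𝒜L := hsub_sL hB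
        rcases HL_dich hH h𝒜L i hB𝒜L with hsub | hdis
        · simp [Finset.mem_filter, hB, hsub, hsub hω]
        · have h1 : ω ∉ B := fun hωB =>
            Set.eq_empty_iff_forall_notMem.1 hdis ω ⟨hω, hωB⟩
          have h2 : ¬ H i ⊆ B := fun hsub' => by
            obtain ⟨x, hx⟩ := hHine
            exact Set.eq_empty_iff_forall_notMem.1 hdis x ⟨hx, hsub' hx⟩
          simp [Finset.mem_filter, h1, h2]
    have hui_atoms : sL.filter (fun B => H i ⊆ B) ∈ atoms0 sL :=
      Finset.mem_filter.2 ⟨Finset.mem_powerset.2 (Finset.filter_subset _ _),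
        (by rw [hcell_ui]; exact hHine)⟩
    have hHiu : H i ∈ sL.filter (fun B => H i ⊆ B) :=
      Finset.mem_filter.2 ⟨hHisL, subset_rfl⟩
    have hexK : ∃ k, 0 < M k (H i) := hex (H i) hHis hHine
    obtain ⟨ha_n0, hCa_ne, hKsub, hMaK⟩ := key (H i) hHisL hHine hexK
    have hlev_ge : Nat.find hexK ≤ lev π' sL (sL.filter (fun B => H i ⊆ B)) :=
      Nat.find_min' hexK (hwit (H i) hHisL _ hui_atoms hHiu).1
    have hpos : 0 < π' (H i) (Cch π' sL (Nat.find hexK)) := by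
      rw [← hMaK]; exact Nat.find_spec hexK
    have hlev_le : lev π' sL (sL.filter (fun B => H i ⊆ B)) ≤ Nat.find hexK := by
      by_contra hlt
      push_neg at hlt
      have := pi'_cell_zero_of_lt_lev h𝒜Lf hsub_sL hπ' hui_atoms hlt
      rw [hcell_ui] at this
      rw [this] at hpos
      exact lt_irrefl _ hpos
    have hlev_eq : lev π' sL (sL.filter (fun B => H i ⊆ B)) = Nat.find hexK :=
      le_antisymm hlev_le hlev_ge
    have hν : ∀ G, nu H σ sL (sL.filter (fun B => H i ⊆ B)) G = σ G i := by
      intro G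
      have hexj : ∃ j, cell sL (sL.filter (fun B => H i ⊆ B)) = H j := ⟨i, hcell_ui⟩
      unfold nu
      rw [dif_pos hexj]
      have hji : H (Exists.choose hexj) = H i := by
        rw [← Exists.choose_spec hexj, hcell_ui]
      rw [H_inj hH hji]
    have hrho_val : ∀ W ∈ 𝒜, W ⊆ H i → rho H σ π' sL (Nat.find hexK) W =
        π' (H i) (Cch π' sL (Nat.find hexK)) * σ W i := by
      intro W hW hWsub
      unfold rho
      rw [Finset.sum_eq_single (sL.filter (fun B => H i ⊆ B))]
      · rw [hcell_ui, hν W]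
      · intro u hu hne
        obtain ⟨hu0, _⟩ := Finset.mem_filter.1 hu
        have hdis : Disjoint (cell sL u) (cell sL (sL.filter (fun B => H i ⊆ B))) :=
          cell_disjoint (atoms0_subset hu0) (atoms0_subset hui_atoms) hne
        have hWdis : cell sL u ∩ W = ∅ := by
          refine Set.eq_empty_of_subset_empty fun x hx => ?_
          exact Set.disjoint_left.1 hdis hx.1 (by rw [hcell_ui]; exact hWsub hx.2)
        rw [nu_zero_of_disjoint h𝒜 hσ hW hWdis, mul_zero]
      · intro hnmem
        exact absurd (Finset.mem_filter.2 ⟨hui_atoms, hlev_eq⟩) hnmem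
    rw [qfin_eq (hs hFs) hHi𝒜 hexK, hMfun _ ha_n0,
      hrho_val (F ∩ H i) (field_inter h𝒜 (hs hFs) hHi𝒜) Set.inter_subset_right,
      hrho_val (H i) hHi𝒜 subset_rfl,
      strategy_one hσ hHi𝒜 subset_rfl, strategy_inter_self h𝒜 hσ hHi𝒜 (hs hFs),
      mul_one, mul_div_cancel_left₀ _ hpos.ne']

end S19

/-- the restrictions to `𝒜L × 𝒜L⁰` of the full conditional probabilities
on `𝒜` extending `{π, σ}` are exactly the (restrictions of) full conditional
probabilities on `𝒜L` extending `π`; in particular they do not depend on `σ`. -/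
theorem statement19 {Ω ι κ : Type*} [Nonempty Ω] (H : ι → Set Ω) (E : κ → Set Ω)
    (𝒜L 𝒜E 𝒜 : Set (Set Ω))
    (hH : IsPartition H) (hE : IsPartition E)
    (h𝒜L : IsFieldOver H 𝒜L) (h𝒜E : IsFieldOver E 𝒜E)
    (h𝒜 : IsJointField H E 𝒜L 𝒜E 𝒜)
    (π : Set Ω → ℝ) (hπ : IsFAP 𝒜L π)
    (σ : Set Ω → ι → ℝ) (hσ : IsStrategy 𝒜 H σ) :
    restrictPairs 𝒜L 𝒜L '' FCPSet 𝒜 𝒜L H π σ =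
      restrictPairs 𝒜L 𝒜L ''
        {π' : Set Ω → Set Ω → ℝ | IsFCP 𝒜L π' ∧ ∀ B ∈ 𝒜L, π' B Set.univ = π B} := by
  classical
  obtain ⟨h𝒜f, hL𝒜, hE𝒜, -⟩ := h𝒜
  apply Set.eq_of_subset_of_subset
  · -- restriction of an extension is an f.c.p. on 𝒜L extending π
    rintro y ⟨P, ⟨hPfcp, hPext⟩, rfl⟩
    refine ⟨P, ⟨⟨?_, ?_, ?_⟩, fun B hB => hPext.1 B hB⟩, rfl⟩
    · exact fun E' hE' K hK hne => hPfcp.1 E' (hL𝒜 hE') K (hL𝒜 hK) hne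
    · intro K hK hne
      obtain ⟨hb, hu, ha⟩ := hPfcp.2.1 K (hL𝒜 hK) hne
      exact ⟨fun A hA => hb A (hL𝒜 hA), hu,
        fun A hA B hB hd => ha A (hL𝒜 hA) B (hL𝒜 hB) hd⟩
    · exact fun E' hE' F hF K hK hne hne' =>
        hPfcp.2.2 E' (hL𝒜 hE') F (hL𝒜 hF) K (hL𝒜 hK) hne hne'
  · -- every f.c.p. on 𝒜L extending π is the restriction of an extension of {π, σ}
    rintro y ⟨π', ⟨hπ'fcp, hπ'ext⟩, rfl⟩
    -- the compact cube
    have hcont : ∀ A B : Set Ω, Continuous fun q : Set Ω → Set Ω → ℝ => q A B :=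
      fun A B => (continuous_apply B).comp (continuous_apply A)
    set Cube : Set (Set Ω → Set Ω → ℝ) :=
      Set.univ.pi fun _ : Set Ω => Set.univ.pi fun _ : Set Ω => Set.Icc (0 : ℝ) 1
      with hCube
    have hCube_mem : ∀ q : Set Ω → Set Ω → ℝ, q ∈ Cube ↔ ∀ F K, q F K ∈ Set.Icc (0 : ℝ) 1 := by
      intro q
      rw [hCube]
      simp only [Set.pi_univ_Icc, Set.mem_Icc, Pi.le_def]
      constructor
      · intro h F K; exact ⟨h.1 F K, h.2 F K⟩
      · intro h; exact ⟨fun F K => (h F K).1, fun F K => (h F K).2⟩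
    have hCube_cpt : IsCompact Cube :=
      isCompact_univ_pi fun _ => isCompact_univ_pi fun _ => isCompact_Icc
    have hCube_cl : IsClosed Cube :=
      isClosed_set_pi fun _ _ => isClosed_set_pi fun _ _ => isClosed_Icc
    -- the closed condition sets
    set Cnd : Finset (Set Ω) → (Set Ω → Set Ω → ℝ) → Prop := fun t q =>
      (∀ E' ∈ t, ∀ K ∈ t, K.Nonempty → q E' K = q (E' ∩ K) K) ∧
      (∀ K ∈ t, K.Nonempty → q Set.univ K = 1) ∧
      (∀ A ∈ t, ∀ B ∈ t, ∀ K ∈ t, K.Nonempty → Disjoint A B →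
        q (A ∪ B) K = q A K + q B K) ∧
      (∀ E' ∈ t, ∀ F ∈ t, ∀ K ∈ t, K.Nonempty → (E' ∩ K).Nonempty →
        q (E' ∩ F) K = q E' K * q F (E' ∩ K)) ∧
      (∀ B ∈ t, B ∈ 𝒜L → ∀ K ∈ t, K ∈ 𝒜L → K.Nonempty → q B K = π' B K) ∧
      (∀ F ∈ t, ∀ i : ι, H i ∈ t → q F (H i) = σ F i) with hCnd
    set Z : Finset (Set Ω) → Set (Set Ω → Set Ω → ℝ) := fun s =>
      Cube ∩ {q | Cnd (s.filter (· ∈ 𝒜)) q} with hZ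
    have hZ_closed : ∀ s, IsClosed (Z s) := by
      intro s
      refine hCube_cl.inter ?_
      set t := s.filter (· ∈ 𝒜)
      have e1 : {q : Set Ω → Set Ω → ℝ | Cnd t q} =
          {q : Set Ω → Set Ω → ℝ | ∀ E' ∈ t, ∀ K ∈ t, K.Nonempty → q E' K = q (E' ∩ K) K} ∩
          ({q : Set Ω → Set Ω → ℝ | ∀ K ∈ t, K.Nonempty → q Set.univ K = 1} ∩
          ({q : Set Ω → Set Ω → ℝ | ∀ A ∈ t, ∀ B ∈ t, ∀ K ∈ t, K.Nonempty → Disjoint A B →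
            q (A ∪ B) K = q A K + q B K} ∩
          ({q : Set Ω → Set Ω → ℝ | ∀ E' ∈ t, ∀ F ∈ t, ∀ K ∈ t, K.Nonempty → (E' ∩ K).Nonempty →
            q (E' ∩ F) K = q E' K * q F (E' ∩ K)} ∩
          ({q : Set Ω → Set Ω → ℝ | ∀ B ∈ t, B ∈ 𝒜L → ∀ K ∈ t, K ∈ 𝒜L → K.Nonempty →
            q B K = π' B K} ∩
          {q : Set Ω → Set Ω → ℝ | ∀ F ∈ t, ∀ i : ι, H i ∈ t → q F (H i) = σ F i})))) := by
        ext q; simp only [hCnd, Set.mem_setOf_eq, Set.mem_inter_iff]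
      rw [e1]
      refine IsClosed.inter ?_ (IsClosed.inter ?_ (IsClosed.inter ?_
        (IsClosed.inter ?_ (IsClosed.inter ?_ ?_))))
      · have : {q : Set Ω → Set Ω → ℝ | ∀ E' ∈ t, ∀ K ∈ t, K.Nonempty → q E' K = q (E' ∩ K) K} =
            ⋂ (E' : Set Ω) (_ : E' ∈ t) (K : Set Ω) (_ : K ∈ t) (_ : K.Nonempty),
              {q : Set Ω → Set Ω → ℝ | q E' K = q (E' ∩ K) K} := by
          ext q; simp
        rw [this]
        exact isClosed_iInter fun _ => isClosed_iInter fun _ => isClosed_iInter fun _ =>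
          isClosed_iInter fun _ => isClosed_iInter fun _ =>
          isClosed_eq (hcont _ _) (hcont _ _)
      · have : {q : Set Ω → Set Ω → ℝ | ∀ K ∈ t, K.Nonempty → q Set.univ K = 1} =
            ⋂ (K : Set Ω) (_ : K ∈ t) (_ : K.Nonempty), {q : Set Ω → Set Ω → ℝ | q Set.univ K = 1} := by
          ext q; simp
        rw [this]
        exact isClosed_iInter fun _ => isClosed_iInter fun _ => isClosed_iInter fun _ =>
          isClosed_eq (hcont _ _) continuous_const
      · have : {q : Set Ω → Set Ω → ℝ | ∀ A ∈ t, ∀ B ∈ t, ∀ K ∈ t, K.Nonempty → Disjoint A B →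
            q (A ∪ B) K = q A K + q B K} =
            ⋂ (A : Set Ω) (_ : A ∈ t) (B : Set Ω) (_ : B ∈ t) (K : Set Ω) (_ : K ∈ t)
              (_ : K.Nonempty) (_ : Disjoint A B),
              {q : Set Ω → Set Ω → ℝ | q (A ∪ B) K = q A K + q B K} := by
          ext q; simp
        rw [this]
        exact isClosed_iInter fun _ => isClosed_iInter fun _ => isClosed_iInter fun _ =>
          isClosed_iInter fun _ => isClosed_iInter fun _ => isClosed_iInter fun _ =>
          isClosed_iInter fun _ => isClosed_iInter fun _ =>
          isClosed_eq (hcont _ _) ((hcont _ _).add (hcont _ _))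
      · have : {q : Set Ω → Set Ω → ℝ | ∀ E' ∈ t, ∀ F ∈ t, ∀ K ∈ t, K.Nonempty → (E' ∩ K).Nonempty →
            q (E' ∩ F) K = q E' K * q F (E' ∩ K)} =
            ⋂ (E' : Set Ω) (_ : E' ∈ t) (F : Set Ω) (_ : F ∈ t) (K : Set Ω) (_ : K ∈ t)
              (_ : K.Nonempty) (_ : (E' ∩ K).Nonempty),
              {q : Set Ω → Set Ω → ℝ | q (E' ∩ F) K = q E' K * q F (E' ∩ K)} := by
          ext q; simp
        rw [this]
        exact isClosed_iInter fun _ => isClosed_iInter fun _ => isClosed_iInter fun _ =>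
          isClosed_iInter fun _ => isClosed_iInter fun _ => isClosed_iInter fun _ =>
          isClosed_iInter fun _ => isClosed_iInter fun _ =>
          isClosed_eq (hcont _ _) ((hcont _ _).mul (hcont _ _))
      · have : {q : Set Ω → Set Ω → ℝ | ∀ B ∈ t, B ∈ 𝒜L → ∀ K ∈ t, K ∈ 𝒜L → K.Nonempty →
            q B K = π' B K} =
            ⋂ (B : Set Ω) (_ : B ∈ t) (_ : B ∈ 𝒜L) (K : Set Ω) (_ : K ∈ t)
              (_ : K ∈ 𝒜L) (_ : K.Nonempty), {q : Set Ω → Set Ω → ℝ | q B K = π' B K} := by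
          ext q; simp
        rw [this]
        exact isClosed_iInter fun _ => isClosed_iInter fun _ => isClosed_iInter fun _ =>
          isClosed_iInter fun _ => isClosed_iInter fun _ => isClosed_iInter fun _ =>
          isClosed_iInter fun _ => isClosed_eq (hcont _ _) continuous_const
      · have : {q : Set Ω → Set Ω → ℝ | ∀ F ∈ t, ∀ i : ι, H i ∈ t → q F (H i) = σ F i} =
            ⋂ (F : Set Ω) (_ : F ∈ t) (i : ι) (_ : H i ∈ t),
              {q : Set Ω → Set Ω → ℝ | q F (H i) = σ F i} := by
          ext q; simp
        rw [this]
        exact isClosed_iInter fun _ => isClosed_iInter fun _ => isClosed_iInter fun _ =>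
          isClosed_iInter fun _ => isClosed_eq (hcont _ _) continuous_const
    have hZ_nonempty : ∀ s, (Z s).Nonempty := by
      intro s
      obtain ⟨q, hIcc, h1, h2, h3, h4, h5, h6⟩ :=
        S19.exists_finite_q hH h𝒜L h𝒜f hL𝒜 hσ hπ'fcp (s.filter (· ∈ 𝒜))
          (fun A hA => by
            simp only [Finset.coe_filter, Set.mem_setOf_eq] at hA
            exact hA.2)
      exact ⟨q, (hCube_mem q).2 hIcc, h1, h2, h3, h4, h5, h6⟩
    have hZ_mono : ∀ {s s' : Finset (Set Ω)}, s ⊆ s' → Z s' ⊆ Z s := by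
      intro s s' hss q hq
      have hsub : s.filter (· ∈ 𝒜) ⊆ s'.filter (· ∈ 𝒜) :=
        Finset.filter_subset_filter _ hss
      obtain ⟨hqC, h1, h2, h3, h4, h5, h6⟩ := hq
      exact ⟨hqC,
        fun E' hE' K hK hne => h1 E' (hsub hE') K (hsub hK) hne,
        fun K hK hne => h2 K (hsub hK) hne,
        fun A hA B hB K hK hne hd => h3 A (hsub hA) B (hsub hB) K (hsub hK) hne hd,
        fun E' hE' F hF K hK hne hne' =>
          h4 E' (hsub hE') F (hsub hF) K (hsub hK) hne hne',
        fun B hB hB' K hK hK' hne => h5 B (hsub hB) hB' K (hsub hK) hK' hne,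
        fun F hF i hi => h6 F (hsub hF) i (hsub hi)⟩
    have hZ_dir : Directed (fun x1 x2 : Set (Set Ω → Set Ω → ℝ) => x1 ⊇ x2) Z :=
      fun s₁ s₂ => ⟨s₁ ∪ s₂, hZ_mono Finset.subset_union_left,
        hZ_mono Finset.subset_union_right⟩
    have hZ_cpt : ∀ s, IsCompact (Z s) :=
      fun s => hCube_cpt.of_isClosed_subset (hZ_closed s) Set.inter_subset_left
    obtain ⟨q, hq⟩ := IsCompact.nonempty_iInter_of_directed_nonempty_isCompact_isClosed
      Z hZ_dir hZ_nonempty hZ_cpt hZ_closed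
    have hq' : ∀ s : Finset (Set Ω), q ∈ Z s := Set.mem_iInter.1 hq
    have hmemf : ∀ (s : Finset (Set Ω)) (A : Set Ω), A ∈ s → A ∈ 𝒜 →
        A ∈ s.filter (· ∈ 𝒜) := fun s A h1 h2 => Finset.mem_filter.2 ⟨h1, h2⟩
    have hIcc : ∀ F K : Set Ω, q F K ∈ Set.Icc (0 : ℝ) 1 :=
      (hCube_mem q).1 (hq' ∅).1
    -- q is a full conditional probability on 𝒜 extending {π, σ}
    refine ⟨q, ⟨⟨?_, ?_, ?_⟩, ?_, ?_⟩, ?_⟩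
    · -- C1
      intro E' hE' K hK hne
      exact (hq' {E', K}).2.1 E'
        (hmemf _ _ (Finset.mem_insert_self _ _) hE') K
        (hmemf _ _ (by simp) hK) hne
    · -- C2
      intro K hK hne
      refine ⟨fun A hA => ⟨(hIcc A K).1, (hIcc A K).2⟩, ?_, ?_⟩
      · exact (hq' {K}).2.2.1 K (hmemf _ _ (by simp) hK) hne
      · intro A hA B hB hd
        exact (hq' {A, B, K}).2.2.2.1 A (hmemf _ _ (by simp) hA) B
          (hmemf _ _ (by simp) hB) K (hmemf _ _ (by simp) hK) hne hd
    · -- C3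
      intro E' hE' F hF K hK hne hne'
      exact (hq' {E', F, K}).2.2.2.2.1 E' (hmemf _ _ (by simp) hE') F
        (hmemf _ _ (by simp) hF) K (hmemf _ _ (by simp) hK) hne hne'
    · -- extends the prior
      intro B hB
      have h1 := (hq' {B, Set.univ}).2.2.2.2.2.1 B
        (hmemf _ _ (by simp) (hL𝒜 hB)) hB Set.univ
        (hmemf _ _ (by simp) h𝒜f.1) h𝒜L.1.1 Set.univ_nonempty
      rw [h1, hπ'ext B hB]
    · -- extends the strategy
      intro F hF i
      exact (hq' {F, H i}).2.2.2.2.2.2 F (hmemf _ _ (by simp) hF) i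
        (hmemf _ _ (by simp) (hL𝒜 (h𝒜L.2.1 i)))
    · -- the restriction to 𝒜L × 𝒜L⁰ is π'
      funext p
      obtain ⟨⟨B, K⟩, hB, hK, hKne⟩ := p
      show q B K = π' B K
      exact (hq' {B, K}).2.2.2.2.2.1 B (hmemf _ _ (by simp) (hL𝒜 hB)) hB K
        (hmemf _ _ (by simp) (hL𝒜 hK)) hK hKne
end
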